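/- arXiv:2311.17566 — 5 statements merged into one kernel-verified Lean document; each statement's English description precedes it below -/
import Mathlib

section
/- (i) A continuous function h:ℝ→ℝ is concave if and only if h[x₀,x₁] ≥ h[x₀,x₂] whenever x₁<x₂ and x₀∉{x₁,x₂}. (ii) A continuously differentiable function h:ℝ→ℝ is d-concave (i.e., h' is concave) if and only if h[x₁,x₀,x₂] ≥ h[x₁,x₀,x₃] whenever x₁<x₂<x₃ and x₀∉{x₁,x₂,x₃}. -/
/-- `h` is concave: `h(αx₁+(1-α)x₂) ≥ αh(x₁)+(1-α)h(x₂)` for all `x₁ x₂` and `α ∈ [0,1]`. -/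
def ConcaveFn (h : ℝ → ℝ) : Prop :=
  ∀ x₁ x₂ α : ℝ, 0 ≤ α → α ≤ 1 →
    α * h x₁ + (1 - α) * h x₂ ≤ h (α * x₁ + (1 - α) * x₂)

/-- First-order divided difference `h[y₁,y₂]`. -/
noncomputable def dd1 (h : ℝ → ℝ) (y₁ y₂ : ℝ) : ℝ := (h y₂ - h y₁) / (y₂ - y₁)

/-- Second-order divided difference `h[y₁,y₂,y₃]`. -/
noncomputable def dd2 (h : ℝ → ℝ) (y₁ y₂ y₃ : ℝ) : ℝ :=
  (dd1 h y₂ y₃ - dd1 h y₁ y₂) / (y₃ - y₁)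

open Set Filter intervalIntegral

lemma dd1_eq_slope (h : ℝ → ℝ) (a b : ℝ) : dd1 h a b = slope h a b := by
  rw [dd1, slope_def_field]

lemma dd1_comm (h : ℝ → ℝ) (a b : ℝ) : dd1 h a b = dd1 h b a := by
  rw [dd1_eq_slope, dd1_eq_slope, slope_comm]

lemma concaveFn_iff_concaveOn (h : ℝ → ℝ) : ConcaveFn h ↔ ConcaveOn ℝ Set.univ h := by
  constructor
  · intro hc
    refine ⟨convex_univ, fun x _ y _ a b ha hb hab => ?_⟩
    have := hc x y a ha (by linarith)
    rw [show (1:ℝ) - a = b by linarith] at this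
    simpa [smul_eq_mul] using this
  · intro hc x₁ x₂ α h0 h1
    have := hc.2 (Set.mem_univ x₁) (Set.mem_univ x₂) h0
      (by linarith : (0:ℝ) ≤ 1 - α) (by ring)
    simpa [smul_eq_mul] using this

/-- Forward direction of (i), no continuity needed. -/
lemma lemA {h : ℝ → ℝ} (hc : ConcaveFn h) :
    ∀ x₀ x₁ x₂ : ℝ, x₁ < x₂ → x₀ ≠ x₁ → x₀ ≠ x₂ → dd1 h x₀ x₂ ≤ dd1 h x₀ x₁ := by
  intro x₀ x₁ x₂ h12 h01 h02
  have hco := (concaveFn_iff_concaveOn h).1 hc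
  have h1 : x₁ ∈ Set.univ \ {x₀} := ⟨trivial, by simp [h01.symm]⟩
  have h2 : x₂ ∈ Set.univ \ {x₀} := ⟨trivial, by simp [h02.symm]⟩
  have := hco.slope_anti (Set.mem_univ x₀) h1 h2 h12.le
  rw [dd1_eq_slope, dd1_eq_slope]
  exact this

/-- Converse of (i) in adjacent form, no continuity needed. -/
lemma lemB {h : ℝ → ℝ} (hs : ∀ p q r : ℝ, p < q → q < r → dd1 h q r ≤ dd1 h p q) :
    ConcaveFn h := by
  rw [concaveFn_iff_concaveOn, concaveOn_iff_slope_anti_adjacent]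
  refine ⟨convex_univ, fun x y z _ _ hxy hyz => ?_⟩
  have := hs x y z hxy hyz
  simpa [dd1] using this

noncomputable def dd2s (h : ℝ → ℝ) (a b c : ℝ) : ℝ :=
  h a / ((a-b)*(a-c)) + h b / ((b-a)*(b-c)) + h c / ((c-a)*(c-b))

noncomputable def dd3s (h : ℝ → ℝ) (a b c d : ℝ) : ℝ :=
  h a / ((a-b)*((a-c)*(a-d))) + h b / ((b-a)*((b-c)*(b-d)))
    + h c / ((c-a)*((c-b)*(c-d))) + h d / ((d-a)*((d-b)*(d-c)))

lemma dd2_eq_dd2s (h : ℝ → ℝ) {a b c : ℝ} (hab : a ≠ b) (hac : a ≠ c) (hbc : b ≠ c) :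
    dd2 h a b c = dd2s h a b c := by
  have h1 : a - b ≠ 0 := sub_ne_zero.2 hab
  have h2 : a - c ≠ 0 := sub_ne_zero.2 hac
  have h3 : b - c ≠ 0 := sub_ne_zero.2 hbc
  have h4 : b - a ≠ 0 := sub_ne_zero.2 hab.symm
  have h5 : c - a ≠ 0 := sub_ne_zero.2 hac.symm
  have h6 : c - b ≠ 0 := sub_ne_zero.2 hbc.symm
  unfold dd2 dd1 dd2s
  field_simp
  ring

lemma dd2_sub_dd2 (h : ℝ → ℝ) {w x y z : ℝ} (hwx : w ≠ x) (hwy : w ≠ y) (hwz : w ≠ z)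
    (hxy : x ≠ y) (hxz : x ≠ z) (hyz : y ≠ z) :
    dd2 h x y z - dd2 h w x y = (z - w) * dd3s h w x y z := by
  have h1 : w - x ≠ 0 := sub_ne_zero.2 hwx
  have h2 : w - y ≠ 0 := sub_ne_zero.2 hwy
  have h3 : w - z ≠ 0 := sub_ne_zero.2 hwz
  have h4 : x - y ≠ 0 := sub_ne_zero.2 hxy
  have h5 : x - z ≠ 0 := sub_ne_zero.2 hxz
  have h6 : y - z ≠ 0 := sub_ne_zero.2 hyz
  have h1' : x - w ≠ 0 := sub_ne_zero.2 hwx.symm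
  have h2' : y - w ≠ 0 := sub_ne_zero.2 hwy.symm
  have h3' : z - w ≠ 0 := sub_ne_zero.2 hwz.symm
  have h4' : y - x ≠ 0 := sub_ne_zero.2 hxy.symm
  have h5' : z - x ≠ 0 := sub_ne_zero.2 hxz.symm
  have h6' : z - y ≠ 0 := sub_ne_zero.2 hyz.symm
  unfold dd2 dd1 dd3s
  field_simp
  ring

lemma dd3s_perm1 (h : ℝ → ℝ) (a b c d : ℝ) : dd3s h c b a d = dd3s h a b c d := by
  unfold dd3s; ring

lemma dd3s_perm2 (h : ℝ → ℝ) (a b c d : ℝ) : dd3s h a c d b = dd3s h a b c d := by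
  unfold dd3s; ring

lemma dd3s_perm3 (h : ℝ → ℝ) (a b c d : ℝ) : dd3s h b a d c = dd3s h a b c d := by
  unfold dd3s; ring

lemma dd3s_perm4 (h : ℝ → ℝ) (a b c d : ℝ) : dd3s h c a b d = dd3s h a b c d := by
  unfold dd3s; ring

section P
variable {h : ℝ → ℝ}

lemma nonpos_of_mul (u v : ℝ) (hu : 0 < u) (huv : u * v ≤ 0) : v ≤ 0 := by
  by_contra hX
  push_neg at hX
  have := mul_pos hu hX
  linarith

/-- From the dd2-hypothesis, third divided differences are nonpositive on sorted quadruples. -/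
lemma hyp_to_P
    (hyp : ∀ x₀ x₁ x₂ x₃ : ℝ, x₁ < x₂ → x₂ < x₃ → x₀ ≠ x₁ → x₀ ≠ x₂ → x₀ ≠ x₃ →
        dd2 h x₁ x₀ x₃ ≤ dd2 h x₁ x₀ x₂) :
    ∀ a b c d : ℝ, a < b → b < c → c < d → dd3s h a b c d ≤ 0 := by
  intro a b c d hab hbc hcd
  have hac := hab.trans hbc
  have hbd := hbc.trans hcd
  have had := hab.trans hbd
  have key : dd2 h b a d ≤ dd2 h b a c := hyp a b c d hbc hcd hab.ne hac.ne had.ne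
  have e1 : dd2 h b a d - dd2 h c b a = (d - c) * dd3s h c b a d :=
    dd2_sub_dd2 h hbc.ne' hac.ne' hcd.ne hab.ne' hbd.ne had.ne
  have e2 : dd2 h c b a = dd2 h b a c := by
    rw [dd2_eq_dd2s h hbc.ne' hac.ne' hab.ne', dd2_eq_dd2s h hab.ne' hbc.ne hac.ne]
    unfold dd2s; ring
  rw [dd3s_perm1, e2] at e1
  exact nonpos_of_mul _ _ (sub_pos.2 hcd) (by linarith)

variable (hP : ∀ a b c d : ℝ, a < b → b < c → c < d → dd3s h a b c d ≤ 0)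
include hP

lemma lemR1 {a b c d : ℝ} (hab : a < b) (hbc : b < c) (hcd : c < d) :
    dd2 h b c d ≤ dd2 h a c d := by
  have hac := hab.trans hbc
  have hbd := hbc.trans hcd
  have had := hab.trans hbd
  have e1 : dd2 h c d b - dd2 h a c d = (b - a) * dd3s h a c d b :=
    dd2_sub_dd2 h hac.ne had.ne hab.ne hcd.ne hbc.ne' hbd.ne'
  have e2 : dd2 h c d b = dd2 h b c d := by
    rw [dd2_eq_dd2s h hcd.ne hbc.ne' hbd.ne', dd2_eq_dd2s h hbc.ne hbd.ne hcd.ne]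
    unfold dd2s; ring
  rw [dd3s_perm2, e2] at e1
  have := mul_nonpos_of_nonneg_of_nonpos (by linarith : (0:ℝ) ≤ b - a) (hP a b c d hab hbc hcd)
  linarith

lemma lemR2 {a b c d : ℝ} (hab : a < b) (hbc : b < c) (hcd : c < d) :
    dd2 h a c d ≤ dd2 h a b d := by
  have hac := hab.trans hbc
  have hbd := hbc.trans hcd
  have had := hab.trans hbd
  have e1 : dd2 h a d c - dd2 h b a d = (c - b) * dd3s h b a d c :=
    dd2_sub_dd2 h hab.ne' hbd.ne hbc.ne had.ne hac.ne hcd.ne'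
  have e2 : dd2 h a d c = dd2 h a c d := by
    rw [dd2_eq_dd2s h had.ne hac.ne hcd.ne', dd2_eq_dd2s h hac.ne had.ne hcd.ne]
    unfold dd2s; ring
  have e3 : dd2 h b a d = dd2 h a b d := by
    rw [dd2_eq_dd2s h hab.ne' hbd.ne had.ne, dd2_eq_dd2s h hab.ne had.ne hbd.ne]
    unfold dd2s; ring
  rw [dd3s_perm3, e2, e3] at e1
  have := mul_nonpos_of_nonneg_of_nonpos (by linarith : (0:ℝ) ≤ c - b) (hP a b c d hab hbc hcd)
  linarith

lemma lemR3 {a b c d : ℝ} (hab : a < b) (hbc : b < c) (hcd : c < d) :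
    dd2 h a b d ≤ dd2 h a b c := by
  have hac := hab.trans hbc
  have hbd := hbc.trans hcd
  have had := hab.trans hbd
  have e1 : dd2 h a b d - dd2 h c a b = (d - c) * dd3s h c a b d :=
    dd2_sub_dd2 h hac.ne' hbc.ne' hcd.ne hab.ne had.ne hbd.ne
  have e2 : dd2 h c a b = dd2 h a b c := by
    rw [dd2_eq_dd2s h hac.ne' hbc.ne' hab.ne, dd2_eq_dd2s h hab.ne hac.ne hbc.ne]
    unfold dd2s; ring
  rw [dd3s_perm4, e2] at e1
  have := mul_nonpos_of_nonneg_of_nonpos (by linarith : (0:ℝ) ≤ d - c) (hP a b c d hab hbc hcd)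
  linarith

lemma dd2_shift_le {p q r ε : ℝ} (hpq : p < q) (hqr : q < r) (hε : 0 < ε) :
    dd2 h (p+ε) (q+ε) (r+ε) ≤ dd2 h p q r := by
  have s1 : dd2 h (p+ε) (q+ε) (r+ε) ≤ dd2 h p (q+ε) (r+ε) :=
    lemR1 hP (by linarith) (by linarith) (by linarith)
  have s2 : dd2 h p (q+ε) (r+ε) ≤ dd2 h p q (r+ε) :=
    lemR2 hP hpq (by linarith) (by linarith)
  have s3 : dd2 h p q (r+ε) ≤ dd2 h p q r :=
    lemR3 hP hpq hqr (by linarith)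
  linarith

end P

lemma dd2_phi (h : ℝ → ℝ) (ε p q r : ℝ) :
    dd2 (fun y => (h (y+ε) - h y)/ε) p q r = (dd2 h (p+ε) (q+ε) (r+ε) - dd2 h p q r)/ε := by
  unfold dd2 dd1
  ring_nf

lemma tendsto_phi {h : ℝ → ℝ} {h' : ℝ → ℝ} (hh : ∀ x, HasDerivAt h (h' x) x) (y : ℝ) :
    Tendsto (fun n : ℕ => (h (y + 1/(n+1)) - h y)/(1/(n+1))) atTop (nhds (h' y)) := by
  have hs := hasDerivAt_iff_tendsto_slope.1 (hh y)
  have hpos : ∀ n : ℕ, (0:ℝ) < 1/(n+1) := fun n => by positivity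
  have ht : Tendsto (fun n : ℕ => y + 1/((n:ℝ)+1)) atTop (nhdsWithin y {y}ᶜ) := by
    refine tendsto_nhdsWithin_of_tendsto_nhds_of_eventually_within _ ?_ ?_
    · have : Tendsto (fun n : ℕ => 1/((n:ℝ)+1)) atTop (nhds 0) :=
        tendsto_one_div_add_atTop_nhds_zero_nat
      have h2 : Tendsto (fun n : ℕ => y + 1/((n:ℝ)+1)) atTop (nhds (y + 0)) :=
        tendsto_const_nhds.add this
      simpa using h2
    · filter_upwards with n
      simp only [Set.mem_compl_iff, Set.mem_singleton_iff]
      intro hcon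
      nlinarith [hpos n, hcon]
  have := hs.comp ht
  refine this.congr fun n => ?_
  simp only [Function.comp_apply, slope_def_field]
  congr 1
  ring

lemma integral_eq_dd1 {h h' : ℝ → ℝ} (hh : ∀ x, HasDerivAt h (h' x) x)
    (hcont : Continuous h') (a y : ℝ) (hy : y ≠ a) :
    (∫ t in (0:ℝ)..1, h' ((y - a)*t + a)) = dd1 h a y := by
  have hne : y - a ≠ 0 := sub_ne_zero.2 hy
  rw [intervalIntegral.integral_comp_mul_add h' hne a]
  rw [show (y-a)*0 + a = a by ring, show (y-a)*1 + a = y by ring]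
  rw [intervalIntegral.integral_eq_sub_of_hasDerivAt (fun x _ => hh x)
    (hcont.intervalIntegrable a y)]
  rw [dd1, smul_eq_mul, inv_mul_eq_div]

lemma concave_integral {h' : ℝ → ℝ} (hcont : Continuous h') (hc : ConcaveFn h') (a : ℝ) :
    ConcaveFn (fun y => ∫ t in (0:ℝ)..1, h' ((y - a)*t + a)) := by
  intro x₁ x₂ α h0 h1
  have int : ∀ z : ℝ, IntervalIntegrable (fun t => h' ((z - a)*t + a)) MeasureTheory.volume 0 1 :=
    fun z => (hcont.comp (by continuity)).intervalIntegrable 0 1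
  have i1 := int x₁
  have i2 := int x₂
  have i3 := int (α * x₁ + (1-α) * x₂)
  calc α * (∫ t in (0:ℝ)..1, h' ((x₁ - a)*t + a)) + (1-α) * ∫ t in (0:ℝ)..1, h' ((x₂ - a)*t + a)
      = ∫ t in (0:ℝ)..1, (α * h' ((x₁ - a)*t + a) + (1-α) * h' ((x₂ - a)*t + a)) := by
        rw [intervalIntegral.integral_add (i1.const_mul α) (i2.const_mul (1-α)),
          intervalIntegral.integral_const_mul, intervalIntegral.integral_const_mul]
    _ ≤ ∫ t in (0:ℝ)..1, h' ((α * x₁ + (1-α) * x₂ - a)*t + a) := by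
        apply intervalIntegral.integral_mono_on (by norm_num)
          ((i1.const_mul α).add (i2.const_mul (1-α))) i3
        intro t _
        have := hc ((x₁ - a)*t + a) ((x₂ - a)*t + a) α h0 h1
        rw [show α * ((x₁ - a)*t + a) + (1-α) * ((x₂ - a)*t + a)
          = (α * x₁ + (1-α) * x₂ - a)*t + a by ring] at this
        exact this

/-- (i) A continuous `h : ℝ → ℝ` is concave iff `h[x₀,x₁] ≥ h[x₀,x₂]` whenever `x₁ < x₂`
and `x₀ ∉ {x₁, x₂}`.  (ii) A continuously differentiable `h : ℝ → ℝ` is d-concave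
(i.e. `h'` is concave) iff `h[x₁,x₀,x₂] ≥ h[x₁,x₀,x₃]` whenever `x₁ < x₂ < x₃` and
`x₀ ∉ {x₁, x₂, x₃}`. -/
theorem stmt0 :
    (∀ h : ℝ → ℝ, Continuous h →
      (ConcaveFn h ↔ ∀ x₀ x₁ x₂ : ℝ, x₁ < x₂ → x₀ ≠ x₁ → x₀ ≠ x₂ →
        dd1 h x₀ x₂ ≤ dd1 h x₀ x₁)) ∧
    (∀ h h' : ℝ → ℝ, (∀ x, HasDerivAt h (h' x) x) → Continuous h' →
      (ConcaveFn h' ↔ ∀ x₀ x₁ x₂ x₃ : ℝ, x₁ < x₂ → x₂ < x₃ →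
        x₀ ≠ x₁ → x₀ ≠ x₂ → x₀ ≠ x₃ →
        dd2 h x₁ x₀ x₃ ≤ dd2 h x₁ x₀ x₂)) := by
  constructor
  · intro h _hcont
    constructor
    · intro hc
      exact lemA hc
    · intro hs
      apply lemB
      intro p q r hpq hqr
      have := hs q p r (hpq.trans hqr) hpq.ne' hqr.ne
      calc dd1 h q r ≤ dd1 h q p := this
        _ = dd1 h p q := dd1_comm h q p
  · intro h h' hh hcont
    constructor
    · -- forward: h' concave ⇒ dd2 inequality
      intro hc x₀ x₁ x₂ x₃ h12 h23 h01 h02 h03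
      set g := fun y => ∫ t in (0:ℝ)..1, h' ((y - x₁)*t + x₁) with hgdef
      have hgc : ConcaveFn g := concave_integral hcont hc x₁
      have e : ∀ z : ℝ, x₁ < z → x₀ ≠ z → dd2 h x₁ x₀ z = dd1 g x₀ z := by
        intro z h1z h0z
        have step1 : dd2 h x₁ x₀ z = dd2 h x₀ x₁ z := by
          rw [dd2_eq_dd2s h h01.symm h1z.ne h0z, dd2_eq_dd2s h h01 h0z h1z.ne]
          unfold dd2s; ring
        rw [step1]
        show (dd1 h x₁ z - dd1 h x₀ x₁) / (z - x₀) = (g z - g x₀) / (z - x₀)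
        rw [dd1_comm h x₀ x₁, ← integral_eq_dd1 hh hcont x₁ z h1z.ne',
          ← integral_eq_dd1 hh hcont x₁ x₀ h01]
      rw [e x₂ h12 h02, e x₃ (h12.trans h23) h03]
      exact lemA hgc x₀ x₂ x₃ h23 h02 h03
    · -- converse: dd2 inequality ⇒ h' concave
      intro hyp
      have hP := hyp_to_P hyp
      intro x₁ x₂ α h0 h1
      have hconc : ∀ n : ℕ, ConcaveFn (fun y => (h (y + 1/((n:ℝ)+1)) - h y)/(1/((n:ℝ)+1))) := by
        intro n
        have hε : (0:ℝ) < 1/((n:ℝ)+1) := by positivity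
        apply lemB
        intro p q r hpq hqr
        have hd : dd2 (fun y => (h (y + 1/((n:ℝ)+1)) - h y)/(1/((n:ℝ)+1))) p q r ≤ 0 := by
          rw [dd2_phi]
          apply div_nonpos_of_nonpos_of_nonneg _ hε.le
          have := dd2_shift_le hP hpq hqr hε
          linarith
        rw [dd2] at hd
        have hrp : (0:ℝ) < r - p := by linarith
        have hnum : dd1 (fun y => (h (y + 1/((n:ℝ)+1)) - h y)/(1/((n:ℝ)+1))) q r
            - dd1 (fun y => (h (y + 1/((n:ℝ)+1)) - h y)/(1/((n:ℝ)+1))) p q ≤ 0 := by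
          by_contra hX
          push_neg at hX
          have := div_pos hX hrp
          linarith
        linarith
      have t1 := tendsto_phi hh x₁
      have t2 := tendsto_phi hh x₂
      have t3 := tendsto_phi hh (α * x₁ + (1-α) * x₂)
      have tL : Tendsto (fun n : ℕ => α * ((h (x₁ + 1/((n:ℝ)+1)) - h x₁)/(1/((n:ℝ)+1)))
          + (1-α) * ((h (x₂ + 1/((n:ℝ)+1)) - h x₂)/(1/((n:ℝ)+1)))) atTop
          (nhds (α * h' x₁ + (1-α) * h' x₂)) :=
        (t1.const_mul α).add (t2.const_mul (1-α))
      exact le_of_tendsto_of_tendsto' tL t3 (fun n => hconc n x₁ x₂ α h0 h1)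
end

section
/- Let h:ℝ→ℝ be twice continuously differentiable and d-concave (i.e., h' is concave), and let x₁<x₂<x₃. Define b₁ := (h[x₁,x₂]−h'(x₁))/(x₂−x₁) − (h[x₁,x₃]−h'(x₁))/(x₃−x₁), b₂ := (h'(x₂)−h[x₁,x₂])/(x₂−x₁) − (h[x₂,x₃]−h[x₁,x₂])/(x₃−x₁), and b₃ := (h[x₂,x₃]−h[x₁,x₃])/(x₂−x₁) − (h'(x₃)−h[x₁,x₃])/(x₃−x₁). Then bⱼ≥0 for every j∈{1,2,3}, and for each j∈{1,2,3} one has bⱼ>0 if and only if h''(x₁)>h''(x₃). -/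
open Set Filter intervalIntegral MeasureTheory Topology

section Aux
variable {h h' h'' : ℝ → ℝ}

lemma concaveFn_concaveOn (hc : ConcaveFn h') : ConcaveOn ℝ Set.univ h' := by
  refine ⟨convex_univ, fun x _ y _ a b ha hb hab => ?_⟩
  have h1 : a ≤ 1 := by linarith
  have := hc x y a ha h1
  have hb' : b = 1 - a := by linarith
  simpa [hb', smul_eq_mul] using this

lemma ftc1 (hder : ∀ x, HasDerivAt h (h' x) x) (hc : Continuous h')
    {a b : ℝ} (hab : a < b) :
    ∫ t in (0:ℝ)..1, h' (a + t * (b - a)) = (h b - h a) / (b - a) := by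
  have hba : (b - a) ≠ 0 := sub_ne_zero.2 hab.ne'
  have hline : ∀ t : ℝ, HasDerivAt (fun s : ℝ => a + s * (b - a)) (b - a) t := by
    intro t
    simpa using ((hasDerivAt_id t).mul_const (b - a)).const_add a
  have key : ∫ t in (0:ℝ)..1, h' (a + t * (b - a)) * (b - a)
      = h (a + 1 * (b - a)) - h (a + 0 * (b - a)) := by
    refine intervalIntegral.integral_eq_sub_of_hasDerivAt
      (f := fun t => h (a + t * (b - a))) (fun t _ => ?_) ?_
    · exact HasDerivAt.comp t (hder _) (hline t)
    · exact ((hc.comp (by continuity)).mul continuous_const).intervalIntegrable _ _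
  rw [intervalIntegral.integral_mul_const] at key
  have e1 : a + 1 * (b - a) = b := by ring
  have e2 : a + 0 * (b - a) = a := by ring
  rw [e1, e2] at key
  rw [eq_div_iff hba]
  exact key

lemma ftc2 (hder : ∀ x, HasDerivAt h' (h'' x) x) (hc' : Continuous h')
    (hc'' : Continuous h'') {a b : ℝ} (hab : a < b) :
    ∫ t in (0:ℝ)..1, t * h'' (a + t * (b - a))
      = (h' b - ∫ t in (0:ℝ)..1, h' (a + t * (b - a))) / (b - a) := by
  have hba : (b - a) ≠ 0 := sub_ne_zero.2 hab.ne'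
  have hline : ∀ t : ℝ, HasDerivAt (fun s : ℝ => a + s * (b - a)) (b - a) t := by
    intro t
    simpa using ((hasDerivAt_id t).mul_const (b - a)).const_add a
  have hcomp : Continuous fun t : ℝ => h'' (a + t * (b - a)) := hc''.comp (by continuity)
  have hcomp' : Continuous fun t : ℝ => h' (a + t * (b - a)) := hc'.comp (by continuity)
  have cg : Continuous fun t : ℝ => t * h'' (a + t * (b - a)) * (b - a) := by
    exact ((continuous_id'.mul hcomp).mul continuous_const)
  have key : ∫ t in (0:ℝ)..1, (h' (a + t * (b - a)) + t * h'' (a + t * (b - a)) * (b - a))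
      = (fun t : ℝ => t * h' (a + t * (b - a))) 1 - (fun t : ℝ => t * h' (a + t * (b - a))) 0 := by
    refine intervalIntegral.integral_eq_sub_of_hasDerivAt
      (f := fun t : ℝ => t * h' (a + t * (b - a))) (fun t _ => ?_) ?_
    · have H := (hasDerivAt_id t).mul (HasDerivAt.comp t (hder _) (hline t))
      refine H.congr_deriv ?_
      simp only [Function.comp, id, one_mul]
      ring
    · exact (hcomp'.add cg).intervalIntegrable _ _
  have e1 : a + 1 * (b - a) = b := by ring
  simp only [one_mul, zero_mul, e1, sub_zero] at key
  rw [show a + (b - a) = b by ring] at key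
  rw [intervalIntegral.integral_add (hcomp'.intervalIntegrable _ _)
      (cg.intervalIntegrable _ _)] at key
  rw [intervalIntegral.integral_mul_const] at key
  rw [eq_div_iff hba]
  linarith

lemma slope_le_deriv_left (hconc : ConcaveOn ℝ Set.univ h')
    (hder2 : ∀ x, HasDerivAt h' (h'' x) x) {a b : ℝ} (hab : a < b) :
    (h' b - h' a) / (b - a) ≤ h'' a := by
  have := hconc.slope_le_of_hasDerivAt (mem_univ a) (mem_univ b) hab (hder2 a)
  rwa [slope_def_field] at this

lemma deriv_le_slope_right (hconc : ConcaveOn ℝ Set.univ h')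
    (hder2 : ∀ x, HasDerivAt h' (h'' x) x) {a b : ℝ} (hab : a < b) :
    h'' b ≤ (h' b - h' a) / (b - a) := by
  have := hconc.le_slope_of_hasDerivAt (mem_univ a) (mem_univ b) hab (hder2 b)
  rwa [slope_def_field] at this

lemma slope3 (hconc : ConcaveOn ℝ Set.univ h') {a b c : ℝ} (hab : a < b) (hbc : b < c) :
    (h' c - h' a) / (c - a) ≤ (h' b - h' a) / (b - a)
    ∧ (h' c - h' b) / (c - b) ≤ (h' c - h' a) / (c - a) := by
  have adj := hconc.slope_anti_adjacent (mem_univ a) (mem_univ c) hab hbc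
  have hba : (0:ℝ) < b - a := by linarith
  have hcb : (0:ℝ) < c - b := by linarith
  have hca : (0:ℝ) < c - a := by linarith
  have adj' : (h' c - h' b) * (b - a) ≤ (h' b - h' a) * (c - b) := by
    rwa [div_le_div_iff₀ hcb hba] at adj
  constructor
  · rw [div_le_div_iff₀ hca hba]; nlinarith [adj']
  · rw [div_le_div_iff₀ hcb hca]; nlinarith [adj']

lemma aff_deriv (hder2 : ∀ x, HasDerivAt h' (h'' x) x) {w v k : ℝ} (hwv : w < v)
    (haff : ∀ x ∈ Icc w v, h' x = h' w + k * (x - w)) : h'' w = k ∧ h'' v = k := by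
  constructor
  · have T : Tendsto (slope h' w) (𝓝[>] w) (𝓝 (h'' w)) :=
      (hasDerivAt_iff_tendsto_slope.1 (hder2 w)).mono_left
        (nhdsWithin_mono _ fun x hx => ne_of_gt hx)
    have E : slope h' w =ᶠ[𝓝[>] w] fun _ => k := by
      filter_upwards [Ioo_mem_nhdsGT_of_mem ⟨le_refl w, hwv⟩] with x hx
      have hxw : x - w ≠ 0 := sub_ne_zero.2 (ne_of_gt hx.1)
      rw [slope_def_field, haff x ⟨hx.1.le, hx.2.le⟩]
      field_simp
      ring
    exact tendsto_nhds_unique (T.congr' E) tendsto_const_nhds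
  · have T : Tendsto (slope h' v) (𝓝[<] v) (𝓝 (h'' v)) :=
      (hasDerivAt_iff_tendsto_slope.1 (hder2 v)).mono_left
        (nhdsWithin_mono _ fun x hx => ne_of_lt hx)
    have E : slope h' v =ᶠ[𝓝[<] v] fun _ => k := by
      filter_upwards [Ioo_mem_nhdsLT_of_mem ⟨hwv, le_refl v⟩] with x hx
      have hxv : x - v ≠ 0 := sub_ne_zero.2 (ne_of_lt hx.2)
      rw [slope_def_field, haff x ⟨hx.1.le, hx.2.le⟩,
        haff v ⟨hwv.le, le_refl v⟩]
      field_simp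
      ring
    exact tendsto_nhds_unique (T.congr' E) tendsto_const_nhds

lemma iter_eq (hder2c : Continuous h'') {x₁ d D : ℝ} (hd : 0 < d) (hdD : d < D)
    (hK : ∀ t ∈ Ioc (0:ℝ) 1, h'' (x₁ + t * D) = h'' (x₁ + t * d)) :
    h'' (x₁ + D) = h'' x₁ := by
  have hD : 0 < D := hd.trans hdD
  set r := d / D with hr
  have hr0 : 0 < r := div_pos hd hD
  have hr1 : r < 1 := (div_lt_one hD).2 hdD
  have claim : ∀ n : ℕ, h'' (x₁ + D) = h'' (x₁ + r ^ n * D) := by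
    intro n
    induction n with
    | zero => norm_num
    | succ n ih =>
      have ht : r ^ n ∈ Ioc (0:ℝ) 1 := ⟨pow_pos hr0 n, pow_le_one₀ hr0.le hr1.le⟩
      have hrd : r ^ (n + 1) * D = r ^ n * d := by
        rw [pow_succ, mul_assoc, hr, div_mul_cancel₀ d hD.ne']
      rw [ih, hK _ ht, hrd]
  have lim : Tendsto (fun n : ℕ => x₁ + r ^ n * D) atTop (𝓝 x₁) := by
    have := ((tendsto_pow_atTop_nhds_zero_of_lt_one hr0.le hr1).mul_const D).const_add x₁
    simpa using this
  have lim2 : Tendsto (fun n : ℕ => h'' (x₁ + r ^ n * D)) atTop (𝓝 (h'' x₁)) :=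
    (hder2c.tendsto x₁).comp lim
  have lim3 : Tendsto (fun _ : ℕ => h'' (x₁ + D)) atTop (𝓝 (h'' x₁)) :=
    lim2.congr fun n => (claim n).symm
  exact (tendsto_nhds_unique lim3 tendsto_const_nhds).symm

lemma master {c₁ c₃ expr : ℝ} {ψ : ℝ → ℝ} (hrep : expr = ∫ t in (0:ℝ)..1, ψ t)
    (hcont : Continuous ψ) (hnn : ∀ t ∈ Icc (0:ℝ) 1, 0 ≤ ψ t)
    (hK : (∀ t ∈ Icc (0:ℝ) 1, ψ t = 0) → c₃ = c₁)
    (hzero : c₃ = c₁ → ∀ t ∈ Icc (0:ℝ) 1, ψ t = 0)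
    (hanti : c₃ ≤ c₁) :
    0 ≤ expr ∧ (0 < expr ↔ c₃ < c₁) := by
  have hnn' : 0 ≤ expr := by
    rw [hrep]; exact intervalIntegral.integral_nonneg zero_le_one hnn
  refine ⟨hnn', ⟨fun hpos => ?_, fun hlt => ?_⟩⟩
  · rcases lt_or_eq_of_le hanti with hlt | heq
    · exact hlt
    · exfalso
      have hz := hzero heq
      have : expr = 0 := by
        rw [hrep, intervalIntegral.integral_congr (g := fun _ => (0:ℝ))
          (fun t ht => hz t (by rwa [uIcc_of_le zero_le_one] at ht))]
        simp
      linarith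
  · by_contra hnpos
    have hE : expr = 0 := le_antisymm (not_lt.1 hnpos) hnn'
    have hψz : ∀ t ∈ Icc (0:ℝ) 1, ψ t = 0 := by
      intro t ht
      by_contra hne
      have hpos : 0 < ψ t := lt_of_le_of_ne (hnn t ht) (Ne.symm hne)
      have hlt2 : (∫ _ in (0:ℝ)..1, (0:ℝ)) < ∫ s in (0:ℝ)..1, ψ s :=
        intervalIntegral.integral_lt_integral_of_continuousOn_of_le_of_exists_lt zero_lt_one
          continuousOn_const hcont.continuousOn (fun x hx => hnn x ⟨hx.1.le, hx.2⟩)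
          ⟨t, ht, hpos⟩
      simp only [intervalIntegral.integral_const, smul_zero] at hlt2
      rw [hrep] at hE; linarith
    exact absurd (hK hψz) (ne_of_lt hlt)

lemma case2pt (conc : ConcaveOn ℝ Set.univ h') (hder2 : ∀ x, HasDerivAt h' (h'' x) x)
    {w v : ℝ} (hwv : w < v) (hslope : (h' v - h' w) / (v - w) = h'' w) :
    h'' v = h'' w := by
  have haff : ∀ x ∈ Icc w v, h' x = h' w + h'' w * (x - w) := by
    intro x hx
    obtain rfl | hwx := eq_or_lt_of_le hx.1
    · simp
    · obtain rfl | hxv := eq_or_lt_of_le hx.2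
      · have := (div_eq_iff (sub_ne_zero.2 hwv.ne')).1 hslope
        linarith
      · have hup : (h' x - h' w) / (x - w) ≤ h'' w := slope_le_deriv_left conc hder2 hwx
        have hlow : h'' w ≤ (h' x - h' w) / (x - w) := by
          have := (slope3 conc hwx hxv).1
          rwa [hslope] at this
        have := (div_eq_iff (sub_ne_zero.2 hwx.ne')).1 (le_antisymm hup hlow)
        linarith
  exact (aff_deriv hder2 hwv haff).2

lemma case3pt (conc : ConcaveOn ℝ Set.univ h') (hder2 : ∀ x, HasDerivAt h' (h'' x) x)
    {w v : ℝ} (hwv : w < v) (hslope : (h' v - h' w) / (v - w) = h'' v) :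
    h'' v = h'' w := by
  have haff0 : ∀ x ∈ Icc w v, h' x = h' v + h'' v * (x - v) := by
    intro x hx
    obtain rfl | hxv := eq_or_lt_of_le hx.2
    · simp
    · obtain rfl | hwx := eq_or_lt_of_le hx.1
      · have := (div_eq_iff (sub_ne_zero.2 hwv.ne')).1 hslope
        linarith
      · have hup : (h' v - h' x) / (v - x) ≤ h'' v := by
          have := (slope3 conc hwx hxv).2
          rwa [hslope] at this
        have hlow : h'' v ≤ (h' v - h' x) / (v - x) := deriv_le_slope_right conc hder2 hxv
        have := (div_eq_iff (sub_ne_zero.2 hxv.ne')).1 (le_antisymm hup hlow)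
        linarith
  have haff : ∀ x ∈ Icc w v, h' x = h' w + h'' v * (x - w) := by
    intro x hx
    linear_combination (haff0 x hx) - (haff0 w ⟨le_refl _, hwv.le⟩)
  have H := aff_deriv hder2 hwv haff
  rw [H.1, H.2]

lemma case1pt (conc : ConcaveOn ℝ Set.univ h') (hder2 : ∀ x, HasDerivAt h' (h'' x) x)
    {a w v : ℝ} (haw : a < w) (hwv : w < v)
    (hcr : (h' w - h' a) * (v - a) = (h' v - h' a) * (w - a)) :
    h'' v = h'' w := by
  set k := (h' w - h' a) / (w - a) with hk
  have hwa : w - a ≠ 0 := sub_ne_zero.2 haw.ne'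
  have hva : v - a ≠ 0 := sub_ne_zero.2 (haw.trans hwv).ne'
  have ew : h' w = h' a + k * (w - a) := by rw [hk]; field_simp; ring
  have ev : h' v = h' a + k * (v - a) := by
    rw [hk]
    field_simp
    linear_combination -hcr
  have haffx : ∀ x ∈ Icc w v, h' x = h' a + k * (x - a) := by
    intro x hx
    obtain rfl | hwx := eq_or_lt_of_le hx.1
    · exact ew
    · obtain rfl | hxv := eq_or_lt_of_le hx.2
      · exact ev
      · have hax : a < x := haw.trans hwx
        have hup : (h' x - h' a) / (x - a) ≤ k := by
          have := (slope3 conc haw hwx).1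
          rwa [← hk] at this
        have hlow : k ≤ (h' x - h' a) / (x - a) := by
          have h2 := (slope3 conc hax hxv).1
          have ekv : (h' v - h' a) / (v - a) = k := by
            rw [ev]; field_simp; ring
          rwa [ekv] at h2
        have := (div_eq_iff (sub_ne_zero.2 hax.ne')).1 (le_antisymm hup hlow)
        linarith
  have haff : ∀ x ∈ Icc w v, h' x = h' w + k * (x - w) := by
    intro x hx
    linear_combination (haffx x hx) - ew
  have H := aff_deriv hder2 hwv haff
  rw [H.1, H.2]

end Aux


set_option maxHeartbeats 1000000 in
/-- For a `C²` d-concave `h` (i.e. `h'` concave) and `x₁ < x₂ < x₃`, the quantities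
`b₁ = (h[x₁,x₂]-h'(x₁))/(x₂-x₁) - (h[x₁,x₃]-h'(x₁))/(x₃-x₁)`,
`b₂ = (h'(x₂)-h[x₁,x₂])/(x₂-x₁) - (h[x₂,x₃]-h[x₁,x₂])/(x₃-x₁)` and
`b₃ = (h[x₂,x₃]-h[x₁,x₃])/(x₂-x₁) - (h'(x₃)-h[x₁,x₃])/(x₃-x₁)`
are nonnegative, and each is strictly positive iff `h''(x₁) > h''(x₃)`. -/
theorem stmt2 (h h' h'' : ℝ → ℝ)
    (hder1 : ∀ x, HasDerivAt h (h' x) x) (hder2 : ∀ x, HasDerivAt h' (h'' x) x)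
    (hder2c : Continuous h'') (hdconc : ConcaveFn h')
    (x₁ x₂ x₃ : ℝ) (h12 : x₁ < x₂) (h23 : x₂ < x₃) :
    (0 ≤ (dd1 h x₁ x₂ - h' x₁) / (x₂ - x₁) - (dd1 h x₁ x₃ - h' x₁) / (x₃ - x₁) ∧
     0 ≤ (h' x₂ - dd1 h x₁ x₂) / (x₂ - x₁) - (dd1 h x₂ x₃ - dd1 h x₁ x₂) / (x₃ - x₁) ∧
     0 ≤ (dd1 h x₂ x₃ - dd1 h x₁ x₃) / (x₂ - x₁) - (h' x₃ - dd1 h x₁ x₃) / (x₃ - x₁)) ∧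
    ((0 < (dd1 h x₁ x₂ - h' x₁) / (x₂ - x₁) - (dd1 h x₁ x₃ - h' x₁) / (x₃ - x₁) ↔
        h'' x₃ < h'' x₁) ∧
     (0 < (h' x₂ - dd1 h x₁ x₂) / (x₂ - x₁) - (dd1 h x₂ x₃ - dd1 h x₁ x₂) / (x₃ - x₁) ↔
        h'' x₃ < h'' x₁) ∧
     (0 < (dd1 h x₂ x₃ - dd1 h x₁ x₃) / (x₂ - x₁) - (h' x₃ - dd1 h x₁ x₃) / (x₃ - x₁) ↔
        h'' x₃ < h'' x₁)) := by
  have hc' : Continuous h' := continuous_iff_continuousAt.2 fun x => (hder2 x).continuousAt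
  have conc : ConcaveOn ℝ Set.univ h' := concaveFn_concaveOn hdconc
  have h13 : x₁ < x₃ := h12.trans h23
  have hd : (0:ℝ) < x₂ - x₁ := by linarith
  have hD : (0:ℝ) < x₃ - x₁ := by linarith
  have hδ : (0:ℝ) < x₃ - x₂ := by linarith
  have hd0 : (x₂ - x₁) ≠ 0 := hd.ne'
  have hD0 : (x₃ - x₁) ≠ 0 := hD.ne'
  have hδ0 : (x₃ - x₂) ≠ 0 := hδ.ne'
  have anti : ∀ a b : ℝ, a ≤ b → h'' b ≤ h'' a := by
    intro a b hab
    rcases eq_or_lt_of_le hab with rfl | hab'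
    · exact le_refl _
    · exact le_trans (deriv_le_slope_right conc hder2 hab') (slope_le_deriv_left conc hder2 hab')
  have hanti : h'' x₃ ≤ h'' x₁ := anti _ _ h13.le
  -- facts about t for t ∈ (0,1]
  have tfacts : ∀ t : ℝ, 0 < t → t ≤ 1 →
      (x₁ < x₁ + t * (x₂ - x₁) ∧ x₁ + t * (x₂ - x₁) < x₁ + t * (x₃ - x₁))
      ∧ (x₁ + t * (x₂ - x₁) ≤ x₃ ∧ x₁ + t * (x₃ - x₁) ≤ x₃) := by
    intro t ht0 ht1
    have m1 : 0 < t * (x₂ - x₁) := mul_pos ht0 hd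
    have m3 : t * (x₂ - x₁) < t * (x₃ - x₁) := by
      apply mul_lt_mul_of_pos_left _ ht0; linarith
    have m4 : t * (x₃ - x₁) ≤ x₃ - x₁ := mul_le_of_le_one_left hD.le ht1
    have m5 : t * (x₂ - x₁) ≤ x₂ - x₁ := mul_le_of_le_one_left hd.le ht1
    exact ⟨⟨by linarith, by linarith⟩, ⟨by linarith, by linarith⟩⟩
  have cw : Continuous fun t : ℝ => h' (x₁ + t * (x₂ - x₁)) := hc'.comp (by continuity)
  have cv : Continuous fun t : ℝ => h' (x₁ + t * (x₃ - x₁)) := hc'.comp (by continuity)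
  have cw'' : Continuous fun t : ℝ => h'' (x₁ + t * (x₂ - x₁)) := hder2c.comp (by continuity)
  have cv'' : Continuous fun t : ℝ => h'' (x₁ + t * (x₃ - x₁)) := hder2c.comp (by continuity)
  have I12 : ∫ t in (0:ℝ)..1, h' (x₁ + t * (x₂ - x₁)) = dd1 h x₁ x₂ := ftc1 hder1 hc' h12
  have I13 : ∫ t in (0:ℝ)..1, h' (x₁ + t * (x₃ - x₁)) = dd1 h x₁ x₃ := ftc1 hder1 hc' h13
  have I22 : ∫ t in (0:ℝ)..1, t * h'' (x₁ + t * (x₂ - x₁))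
      = (h' x₂ - dd1 h x₁ x₂) / (x₂ - x₁) := by
    rw [ftc2 hder2 hc' hder2c h12, I12]
  have I23 : ∫ t in (0:ℝ)..1, t * h'' (x₁ + t * (x₃ - x₁))
      = (h' x₃ - dd1 h x₁ x₃) / (x₃ - x₁) := by
    rw [ftc2 hder2 hc' hder2c h13, I13]
  have B : ∫ t in (0:ℝ)..1,
      (h' (x₁ + t * (x₃ - x₁)) - h' (x₁ + t * (x₂ - x₁))) / (x₃ - x₂)
      = (dd1 h x₁ x₃ - dd1 h x₁ x₂) / (x₃ - x₂) := by
    rw [intervalIntegral.integral_div,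
      intervalIntegral.integral_sub (cv.intervalIntegrable _ _) (cw.intervalIntegrable _ _),
      I13, I12]
  have alg1 : (dd1 h x₁ x₃ - dd1 h x₁ x₂) / (x₃ - x₂)
      = (dd1 h x₂ x₃ - dd1 h x₁ x₂) / (x₃ - x₁) := by
    simp only [dd1]; field_simp; ring
  have alg2 : (dd1 h x₁ x₃ - dd1 h x₁ x₂) / (x₃ - x₂)
      = (dd1 h x₂ x₃ - dd1 h x₁ x₃) / (x₂ - x₁) := by
    simp only [dd1]; field_simp; ring
  -- representations
  have hrep₁ : (dd1 h x₁ x₂ - h' x₁) / (x₂ - x₁) - (dd1 h x₁ x₃ - h' x₁) / (x₃ - x₁)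
      = ∫ t in (0:ℝ)..1, ((h' (x₁ + t * (x₂ - x₁)) - h' x₁) / (x₂ - x₁)
          - (h' (x₁ + t * (x₃ - x₁)) - h' x₁) / (x₃ - x₁)) := by
    rw [intervalIntegral.integral_sub (f := fun t => (h' (x₁ + t * (x₂ - x₁)) - h' x₁) / (x₂ - x₁))
        (g := fun t => (h' (x₁ + t * (x₃ - x₁)) - h' x₁) / (x₃ - x₁))
        (((cw.sub continuous_const).div_const _).intervalIntegrable _ _)
        (((cv.sub continuous_const).div_const _).intervalIntegrable _ _),
      intervalIntegral.integral_div, intervalIntegral.integral_div,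
      intervalIntegral.integral_sub (cw.intervalIntegrable _ _) intervalIntegrable_const,
      intervalIntegral.integral_sub (cv.intervalIntegrable _ _) intervalIntegrable_const,
      I12, I13, intervalIntegral.integral_const]
    norm_num
  have hrep₂ : (h' x₂ - dd1 h x₁ x₂) / (x₂ - x₁) - (dd1 h x₂ x₃ - dd1 h x₁ x₂) / (x₃ - x₁)
      = ∫ t in (0:ℝ)..1, (t * h'' (x₁ + t * (x₂ - x₁))
          - (h' (x₁ + t * (x₃ - x₁)) - h' (x₁ + t * (x₂ - x₁))) / (x₃ - x₂)) := by
    rw [intervalIntegral.integral_sub (f := fun t => t * h'' (x₁ + t * (x₂ - x₁)))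
        (g := fun t => (h' (x₁ + t * (x₃ - x₁)) - h' (x₁ + t * (x₂ - x₁))) / (x₃ - x₂))
        ((continuous_id'.mul cw'').intervalIntegrable _ _)
        (((cv.sub cw).div_const _).intervalIntegrable _ _),
      I22, B, alg1]
  have hrep₃ : (dd1 h x₂ x₃ - dd1 h x₁ x₃) / (x₂ - x₁) - (h' x₃ - dd1 h x₁ x₃) / (x₃ - x₁)
      = ∫ t in (0:ℝ)..1, ((h' (x₁ + t * (x₃ - x₁)) - h' (x₁ + t * (x₂ - x₁))) / (x₃ - x₂)
          - t * h'' (x₁ + t * (x₃ - x₁))) := by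
    rw [intervalIntegral.integral_sub
        (f := fun t => (h' (x₁ + t * (x₃ - x₁)) - h' (x₁ + t * (x₂ - x₁))) / (x₃ - x₂))
        (g := fun t => t * h'' (x₁ + t * (x₃ - x₁)))
        (((cv.sub cw).div_const _).intervalIntegrable _ _)
        ((continuous_id'.mul cv'').intervalIntegrable _ _),
      I23, B, alg2]
  -- nonnegativity
  have hnn₁ : ∀ t ∈ Icc (0:ℝ) 1, 0 ≤ (h' (x₁ + t * (x₂ - x₁)) - h' x₁) / (x₂ - x₁)
      - (h' (x₁ + t * (x₃ - x₁)) - h' x₁) / (x₃ - x₁) := by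
    intro t ht
    obtain rfl | ht0 := eq_or_lt_of_le ht.1
    · norm_num
    · obtain ⟨⟨h1w, hwv⟩, _⟩ := tfacts t ht0 ht.2
      have s := (slope3 conc h1w hwv).1
      rw [div_le_div_iff₀ (by linarith) (by linarith)] at s
      rw [show x₁ + t * (x₂ - x₁) - x₁ = t * (x₂ - x₁) by ring,
        show x₁ + t * (x₃ - x₁) - x₁ = t * (x₃ - x₁) by ring] at s
      rw [sub_nonneg, div_le_div_iff₀ hD hd]
      have key : t * ((h' (x₁ + t * (x₃ - x₁)) - h' x₁) * (x₂ - x₁))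
          ≤ t * ((h' (x₁ + t * (x₂ - x₁)) - h' x₁) * (x₃ - x₁)) := by linarith [s]
      exact le_of_mul_le_mul_left key ht0
  have hnn₂ : ∀ t ∈ Icc (0:ℝ) 1, 0 ≤ t * h'' (x₁ + t * (x₂ - x₁))
      - (h' (x₁ + t * (x₃ - x₁)) - h' (x₁ + t * (x₂ - x₁))) / (x₃ - x₂) := by
    intro t ht
    obtain rfl | ht0 := eq_or_lt_of_le ht.1
    · norm_num
    · obtain ⟨⟨h1w, hwv⟩, _⟩ := tfacts t ht0 ht.2
      have s := slope_le_deriv_left conc hder2 hwv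
      rw [sub_nonneg]
      have e : (h' (x₁ + t * (x₃ - x₁)) - h' (x₁ + t * (x₂ - x₁))) / (x₃ - x₂)
          = t * ((h' (x₁ + t * (x₃ - x₁)) - h' (x₁ + t * (x₂ - x₁)))
              / (x₁ + t * (x₃ - x₁) - (x₁ + t * (x₂ - x₁)))) := by
        rw [show x₁ + t * (x₃ - x₁) - (x₁ + t * (x₂ - x₁)) = t * (x₃ - x₂) by ring,
          ← mul_div_assoc, mul_div_mul_left _ _ ht0.ne']
      rw [e]
      exact mul_le_mul_of_nonneg_left s ht0.le
  have hnn₃ : ∀ t ∈ Icc (0:ℝ) 1, 0 ≤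
      (h' (x₁ + t * (x₃ - x₁)) - h' (x₁ + t * (x₂ - x₁))) / (x₃ - x₂)
      - t * h'' (x₁ + t * (x₃ - x₁)) := by
    intro t ht
    obtain rfl | ht0 := eq_or_lt_of_le ht.1
    · norm_num
    · obtain ⟨⟨h1w, hwv⟩, _⟩ := tfacts t ht0 ht.2
      have s := deriv_le_slope_right conc hder2 hwv
      rw [sub_nonneg]
      have e : (h' (x₁ + t * (x₃ - x₁)) - h' (x₁ + t * (x₂ - x₁))) / (x₃ - x₂)
          = t * ((h' (x₁ + t * (x₃ - x₁)) - h' (x₁ + t * (x₂ - x₁)))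
              / (x₁ + t * (x₃ - x₁) - (x₁ + t * (x₂ - x₁)))) := by
        rw [show x₁ + t * (x₃ - x₁) - (x₁ + t * (x₂ - x₁)) = t * (x₃ - x₂) by ring,
          ← mul_div_assoc, mul_div_mul_left _ _ ht0.ne']
      rw [e]
      exact mul_le_mul_of_nonneg_left s ht0.le
  -- constancy consequences
  have hconstV : h'' x₃ = h'' x₁ → ∀ x ∈ Icc x₁ x₃, h'' x = h'' x₁ := by
    intro heq x hx
    exact le_antisymm (anti _ _ hx.1) (heq ▸ anti _ _ hx.2)
  have hslopeC : h'' x₃ = h'' x₁ → ∀ a b : ℝ, x₁ ≤ a → a < b → b ≤ x₃ →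
      h' b - h' a = h'' x₁ * (b - a) := by
    intro heq a b ha hab hb
    have hint : ∫ x in a..b, h'' x = h' b - h' a :=
      intervalIntegral.integral_eq_sub_of_hasDerivAt (fun x _ => hder2 x)
        (hder2c.intervalIntegrable _ _)
    rw [← hint, intervalIntegral.integral_congr (g := fun _ => h'' x₁)
        (fun x hx => hconstV heq x (by
          rw [Set.uIcc_of_le hab.le] at hx
          exact ⟨le_trans ha hx.1, le_trans hx.2 hb⟩)),
      intervalIntegral.integral_const]
    simp [mul_comm]
  -- zero lemmas
  have hzero₁ : h'' x₃ = h'' x₁ → ∀ t ∈ Icc (0:ℝ) 1,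
      (h' (x₁ + t * (x₂ - x₁)) - h' x₁) / (x₂ - x₁)
        - (h' (x₁ + t * (x₃ - x₁)) - h' x₁) / (x₃ - x₁) = 0 := by
    intro heq t ht
    obtain rfl | ht0 := eq_or_lt_of_le ht.1
    · norm_num
    · obtain ⟨⟨h1w, hwv⟩, ⟨hw3, hv3⟩⟩ := tfacts t ht0 ht.2
      have e2 : h' (x₁ + t * (x₂ - x₁)) - h' x₁ = h'' x₁ * (t * (x₂ - x₁)) := by
        have := hslopeC heq x₁ (x₁ + t * (x₂ - x₁)) le_rfl h1w hw3
        rw [this]; ring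
      have e3 : h' (x₁ + t * (x₃ - x₁)) - h' x₁ = h'' x₁ * (t * (x₃ - x₁)) := by
        have := hslopeC heq x₁ (x₁ + t * (x₃ - x₁)) le_rfl (h1w.trans hwv) hv3
        rw [this]; ring
      rw [e2, e3]
      field_simp
      ring
  have hzero₂ : h'' x₃ = h'' x₁ → ∀ t ∈ Icc (0:ℝ) 1,
      t * h'' (x₁ + t * (x₂ - x₁))
        - (h' (x₁ + t * (x₃ - x₁)) - h' (x₁ + t * (x₂ - x₁))) / (x₃ - x₂) = 0 := by
    intro heq t ht
    obtain rfl | ht0 := eq_or_lt_of_le ht.1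
    · norm_num
    · obtain ⟨⟨h1w, hwv⟩, ⟨hw3, hv3⟩⟩ := tfacts t ht0 ht.2
      have e1 : h'' (x₁ + t * (x₂ - x₁)) = h'' x₁ := hconstV heq _ ⟨h1w.le, hw3⟩
      have e2 : h' (x₁ + t * (x₃ - x₁)) - h' (x₁ + t * (x₂ - x₁))
          = h'' x₁ * (t * (x₃ - x₂)) := by
        have := hslopeC heq (x₁ + t * (x₂ - x₁)) (x₁ + t * (x₃ - x₁)) h1w.le hwv hv3
        rw [this]; ring
      rw [e1, e2]
      field_simp
      ring
  have hzero₃ : h'' x₃ = h'' x₁ → ∀ t ∈ Icc (0:ℝ) 1,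
      (h' (x₁ + t * (x₃ - x₁)) - h' (x₁ + t * (x₂ - x₁))) / (x₃ - x₂)
        - t * h'' (x₁ + t * (x₃ - x₁)) = 0 := by
    intro heq t ht
    obtain rfl | ht0 := eq_or_lt_of_le ht.1
    · norm_num
    · obtain ⟨⟨h1w, hwv⟩, ⟨hw3, hv3⟩⟩ := tfacts t ht0 ht.2
      have e1 : h'' (x₁ + t * (x₃ - x₁)) = h'' x₁ :=
        hconstV heq _ ⟨(h1w.trans hwv).le, hv3⟩
      have e2 : h' (x₁ + t * (x₃ - x₁)) - h' (x₁ + t * (x₂ - x₁))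
          = h'' x₁ * (t * (x₃ - x₂)) := by
        have := hslopeC heq (x₁ + t * (x₂ - x₁)) (x₁ + t * (x₃ - x₁)) h1w.le hwv hv3
        rw [this]; ring
      rw [e1, e2]
      field_simp
      ring
  -- K lemmas
  have hK₁ : (∀ t ∈ Icc (0:ℝ) 1,
      (h' (x₁ + t * (x₂ - x₁)) - h' x₁) / (x₂ - x₁)
        - (h' (x₁ + t * (x₃ - x₁)) - h' x₁) / (x₃ - x₁) = 0) → h'' x₃ = h'' x₁ := by
    intro hz
    have hK' : ∀ t ∈ Ioc (0:ℝ) 1, h'' (x₁ + t * (x₃ - x₁)) = h'' (x₁ + t * (x₂ - x₁)) := by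
      rintro t ⟨ht0, ht1⟩
      have hz' := hz t ⟨ht0.le, ht1⟩
      obtain ⟨⟨h1w, hwv⟩, _⟩ := tfacts t ht0 ht1
      refine case1pt conc hder2 h1w hwv ?_
      have hcr := (div_eq_div_iff hd0 hD0).1 (sub_eq_zero.1 hz')
      rw [show x₁ + t * (x₃ - x₁) - x₁ = t * (x₃ - x₁) by ring,
        show x₁ + t * (x₂ - x₁) - x₁ = t * (x₂ - x₁) by ring]
      linear_combination t * hcr
    have := iter_eq hder2c hd (by linarith : x₂ - x₁ < x₃ - x₁) hK'
    rwa [show x₁ + (x₃ - x₁) = x₃ by ring] at this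
  have hK₂ : (∀ t ∈ Icc (0:ℝ) 1,
      t * h'' (x₁ + t * (x₂ - x₁))
        - (h' (x₁ + t * (x₃ - x₁)) - h' (x₁ + t * (x₂ - x₁))) / (x₃ - x₂) = 0)
      → h'' x₃ = h'' x₁ := by
    intro hz
    have hK' : ∀ t ∈ Ioc (0:ℝ) 1, h'' (x₁ + t * (x₃ - x₁)) = h'' (x₁ + t * (x₂ - x₁)) := by
      rintro t ⟨ht0, ht1⟩
      have hz' := hz t ⟨ht0.le, ht1⟩
      obtain ⟨⟨h1w, hwv⟩, _⟩ := tfacts t ht0 ht1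
      refine case2pt conc hder2 hwv ?_
      have e0 := (div_eq_iff hδ0).1
        (by linarith : (h' (x₁ + t * (x₃ - x₁)) - h' (x₁ + t * (x₂ - x₁))) / (x₃ - x₂)
          = t * h'' (x₁ + t * (x₂ - x₁)))
      rw [show x₁ + t * (x₃ - x₁) - (x₁ + t * (x₂ - x₁)) = t * (x₃ - x₂) by ring, e0,
        div_eq_iff (mul_ne_zero ht0.ne' hδ0)]
      ring
    have := iter_eq hder2c hd (by linarith : x₂ - x₁ < x₃ - x₁) hK'
    rwa [show x₁ + (x₃ - x₁) = x₃ by ring] at this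
  have hK₃ : (∀ t ∈ Icc (0:ℝ) 1,
      (h' (x₁ + t * (x₃ - x₁)) - h' (x₁ + t * (x₂ - x₁))) / (x₃ - x₂)
        - t * h'' (x₁ + t * (x₃ - x₁)) = 0) → h'' x₃ = h'' x₁ := by
    intro hz
    have hK' : ∀ t ∈ Ioc (0:ℝ) 1, h'' (x₁ + t * (x₃ - x₁)) = h'' (x₁ + t * (x₂ - x₁)) := by
      rintro t ⟨ht0, ht1⟩
      have hz' := hz t ⟨ht0.le, ht1⟩
      obtain ⟨⟨h1w, hwv⟩, _⟩ := tfacts t ht0 ht1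
      refine case3pt conc hder2 hwv ?_
      have e0 := (div_eq_iff hδ0).1
        (by linarith : (h' (x₁ + t * (x₃ - x₁)) - h' (x₁ + t * (x₂ - x₁))) / (x₃ - x₂)
          = t * h'' (x₁ + t * (x₃ - x₁)))
      rw [show x₁ + t * (x₃ - x₁) - (x₁ + t * (x₂ - x₁)) = t * (x₃ - x₂) by ring, e0,
        div_eq_iff (mul_ne_zero ht0.ne' hδ0)]
      ring
    have := iter_eq hder2c hd (by linarith : x₂ - x₁ < x₃ - x₁) hK'
    rwa [show x₁ + (x₃ - x₁) = x₃ by ring] at this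
  -- continuity of integrands
  have cψ₁ : Continuous fun t : ℝ => (h' (x₁ + t * (x₂ - x₁)) - h' x₁) / (x₂ - x₁)
      - (h' (x₁ + t * (x₃ - x₁)) - h' x₁) / (x₃ - x₁) :=
    ((cw.sub continuous_const).div_const _).sub ((cv.sub continuous_const).div_const _)
  have cψ₂ : Continuous fun t : ℝ => t * h'' (x₁ + t * (x₂ - x₁))
      - (h' (x₁ + t * (x₃ - x₁)) - h' (x₁ + t * (x₂ - x₁))) / (x₃ - x₂) :=
    (continuous_id'.mul cw'').sub ((cv.sub cw).div_const _)
  have cψ₃ : Continuous fun t : ℝ =>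
      (h' (x₁ + t * (x₃ - x₁)) - h' (x₁ + t * (x₂ - x₁))) / (x₃ - x₂)
      - t * h'' (x₁ + t * (x₃ - x₁)) :=
    ((cv.sub cw).div_const _).sub (continuous_id'.mul cv'')
  obtain ⟨n1, i1⟩ := master hrep₁ cψ₁ hnn₁ hK₁ hzero₁ hanti
  obtain ⟨n2, i2⟩ := master hrep₂ cψ₂ hnn₂ hK₂ hzero₂ hanti
  obtain ⟨n3, i3⟩ := master hrep₃ cψ₃ hnn₃ hK₃ hzero₃ hanti
  exact ⟨⟨n1, n2, n3⟩, ⟨i1, i2, i3⟩⟩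
end

section
/- Let h:ℝ×ℝ→ℝ be C¹-admissible and let Ω_h be its hull. If the equation x'=h(t,x) has a bounded solution, then for every ω∈Ω_h the equation x'=ω(t,x) has a bounded solution. More generally, if x'=h(t,x) has n uniformly separated solutions b₁<b₂<⋯<b_n, then for every ω∈Ω_h the equation x'=ω(t,x) has n uniformly separated solutions. -/
open Set Filter Topology MeasureTheory

/-- `h` is admissible: continuous, and bounded and uniformly continuous on `ℝ × J`
for every compact `J ⊆ ℝ`. -/
def Admissible (h : ℝ → ℝ → ℝ) : Prop :=
  Continuous (fun p : ℝ × ℝ => h p.1 p.2) ∧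
  ∀ J : Set ℝ, IsCompact J →
    (∃ C : ℝ, ∀ t : ℝ, ∀ x ∈ J, |h t x| ≤ C) ∧
    UniformContinuousOn (fun p : ℝ × ℝ => h p.1 p.2) (Set.univ ×ˢ J)

/-- `h` is `C¹`-admissible with partial derivative `hx` with respect to the state variable. -/
def C1Admissible (h hx : ℝ → ℝ → ℝ) : Prop :=
  Admissible h ∧ (∀ t x : ℝ, HasDerivAt (fun y => h t y) (hx t x) x) ∧ Admissible hx

/-- `ξ` solves `x' = h(t,x)` on the set `I`. -/
def IsSolOn (h : ℝ → ℝ → ℝ) (ξ : ℝ → ℝ) (I : Set ℝ) : Prop :=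
  ∀ t ∈ I, HasDerivAt ξ (h t (ξ t)) t

/-- `ξ` is a globally defined bounded solution of `x' = h(t,x)`. -/
def IsBoundedSol (h : ℝ → ℝ → ℝ) (ξ : ℝ → ℝ) : Prop :=
  (∀ t : ℝ, HasDerivAt ξ (h t (ξ t)) t) ∧ ∃ C : ℝ, ∀ t : ℝ, |ξ t| ≤ C

/-- Two globally defined functions are uniformly separated. -/
def UnifSep (b₁ b₂ : ℝ → ℝ) : Prop := ∃ d > 0, ∀ t : ℝ, d ≤ |b₁ t - b₂ t|

/-- `b` satisfies the attractive exponential dichotomy estimate with pair `(k,γ)`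
for the variational equation along `b` of `x' = h(t,x)`, where `hx` is `h_x`. -/
def IsHypAttrPair (hx : ℝ → ℝ → ℝ) (b : ℝ → ℝ) (k γ : ℝ) : Prop :=
  1 ≤ k ∧ 0 < γ ∧ ∀ s t : ℝ, s ≤ t →
    Real.exp (∫ r in s..t, hx r (b r)) ≤ k * Real.exp (-γ * (t - s))

/-- `b` satisfies the repulsive exponential dichotomy estimate with pair `(k,γ)`. -/
def IsHypRepPair (hx : ℝ → ℝ → ℝ) (b : ℝ → ℝ) (k γ : ℝ) : Prop :=
  1 ≤ k ∧ 0 < γ ∧ ∀ s t : ℝ, t ≤ s →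
    Real.exp (∫ r in s..t, hx r (b r)) ≤ k * Real.exp (γ * (t - s))

/-- `b` is a hyperbolic attractive solution of `x' = h(t,x)`. -/
def IsHypAttr (h hx : ℝ → ℝ → ℝ) (b : ℝ → ℝ) : Prop :=
  IsBoundedSol h b ∧ ∃ k γ : ℝ, IsHypAttrPair hx b k γ

/-- `b` is a hyperbolic repulsive solution of `x' = h(t,x)`. -/
def IsHypRep (h hx : ℝ → ℝ → ℝ) (b : ℝ → ℝ) : Prop :=
  IsBoundedSol h b ∧ ∃ k γ : ℝ, IsHypRepPair hx b k γ

/-- `b` is a hyperbolic solution of `x' = h(t,x)`. -/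
def IsHypSol (h hx : ℝ → ℝ → ℝ) (b : ℝ → ℝ) : Prop :=
  IsHypAttr h hx b ∨ IsHypRep h hx b

/-- `(a, r)` is an attractor-repeller pair of solutions of `x' = h(t,x)`. -/
def ARPair (h hx : ℝ → ℝ → ℝ) (a r : ℝ → ℝ) : Prop :=
  IsHypAttr h hx a ∧ IsHypRep h hx r ∧ UnifSep a r ∧ ∀ t : ℝ, r t < a t

/-- Case A: existence of an attractor-repeller pair of solutions. -/
def CaseA (h hx : ℝ → ℝ → ℝ) : Prop := ∃ a r : ℝ → ℝ, ARPair h hx a r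

/-- Case B: there are bounded solutions but no hyperbolic ones. -/
def CaseB (h hx : ℝ → ℝ → ℝ) : Prop :=
  (∃ b : ℝ → ℝ, IsBoundedSol h b) ∧ ∀ b : ℝ → ℝ, ¬ IsHypSol h hx b

/-- Case C: there are no bounded solutions. -/
def CaseC (h : ℝ → ℝ → ℝ) : Prop := ¬ ∃ b : ℝ → ℝ, IsBoundedSol h b

/-- `lim_{t → -∞} (g(t,x) - gm(t,x)) = 0` uniformly on each compact subset of `ℝ`. -/
def LimAtBot (g gm : ℝ → ℝ → ℝ) : Prop :=
  ∀ J : Set ℝ, IsCompact J → ∀ ε > 0, ∃ T : ℝ, ∀ t ≤ T, ∀ x ∈ J, |g t x - gm t x| < ε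

/-- `lim_{t → +∞} (g(t,x) - gp(t,x)) = 0` uniformly on each compact subset of `ℝ`. -/
def LimAtTop (g gp : ℝ → ℝ → ℝ) : Prop :=
  ∀ J : Set ℝ, IsCompact J → ∀ ε > 0, ∃ T : ℝ, ∀ t ≥ T, ∀ x ∈ J, |g t x - gp t x| < ε

/-- Coercivity: `limsup_{x → ±∞} h(t,x) < 0` uniformly on `ℝ`. -/
def Coercive (h : ℝ → ℝ → ℝ) : Prop :=
  ∃ δ > 0, ∃ ρ > 0, ∀ t x : ℝ, ρ ≤ |x| → h t x ≤ -δ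

/-- Uniform strict decrease of `t ↦ hx(t, ·)`:
`inf_{t∈ℝ} (hx(t,x₁) - hx(t,x₂)) > 0` whenever `x₁ < x₂`. -/
def StrictDecDiff (hx : ℝ → ℝ → ℝ) : Prop :=
  ∀ x₁ x₂ : ℝ, x₁ < x₂ → ∃ c > 0, ∀ t : ℝ, c ≤ hx t x₁ - hx t x₂

/-- Conditions gc1–gc5 on a transition map `g` with limit maps `gm`, `gp`
(`gx`, `gmx`, `gpx` are the respective derivatives with respect to the state variable). -/
def GC (g gx gm gmx gp gpx : ℝ → ℝ → ℝ) : Prop :=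
  C1Admissible g gx ∧ C1Admissible gm gmx ∧ C1Admissible gp gpx ∧
  LimAtBot g gm ∧ LimAtTop g gp ∧
  Coercive g ∧ Coercive gm ∧ Coercive gp ∧
  StrictDecDiff gmx ∧ StrictDecDiff gpx ∧
  CaseA gm gmx ∧ CaseA gp gpx

/-- `b` is a locally pullback attractive solution of `x' = g(t,x)`. -/
def LocPullbackAttr (g : ℝ → ℝ → ℝ) (b : ℝ → ℝ) : Prop :=
  ∃ s₀ : ℝ, ∃ δ > 0, ∃ ξp ξm : ℝ → ℝ → ℝ,
    (∀ s ≤ s₀, IsSolOn g (ξp s) (Set.Icc s s₀) ∧ ξp s s = b s + δ ∧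
               IsSolOn g (ξm s) (Set.Icc s s₀) ∧ ξm s s = b s - δ) ∧
    ∀ t ≤ s₀, Tendsto (fun s => |b t - ξp s t|) atBot (nhds 0) ∧
              Tendsto (fun s => |b t - ξm s t|) atBot (nhds 0)

/-- `b` is a locally pullback repulsive solution of `x' = g(t,x)`. -/
def LocPullbackRep (g : ℝ → ℝ → ℝ) (b : ℝ → ℝ) : Prop :=
  ∃ s₀ : ℝ, ∃ δ > 0, ∃ ξp ξm : ℝ → ℝ → ℝ,
    (∀ s ≥ s₀, IsSolOn g (ξp s) (Set.Icc s₀ s) ∧ ξp s s = b s + δ ∧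
               IsSolOn g (ξm s) (Set.Icc s₀ s) ∧ ξm s s = b s - δ) ∧
    ∀ t ≥ s₀, Tendsto (fun s => |b t - ξp s t|) atTop (nhds 0) ∧
              Tendsto (fun s => |b t - ξm s t|) atTop (nhds 0)

/-- The time shift `(H·s)(t,x) = H(t+s,x)` as a continuous map. -/
noncomputable def shiftCM (H : C(ℝ × ℝ, ℝ)) (s : ℝ) : C(ℝ × ℝ, ℝ) :=
  H.comp ⟨fun p => (p.1 + s, p.2), by fun_prop⟩

/-- The hull of `H`: the closure of the set of time shifts of `H` in `C(ℝ×ℝ,ℝ)`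
with the compact-open topology. -/
noncomputable def hullSet (H : C(ℝ × ℝ, ℝ)) : Set C(ℝ × ℝ, ℝ) :=
  closure (Set.range (shiftCM H))

lemma sol_lip {g : ℝ → ℝ} {g' : ℝ → ℝ} {M : ℝ}
    (hf : ∀ t, HasDerivAt g (g' t) t) (hM : ∀ t, |g' t| ≤ M) :
    ∀ a b : ℝ, |g a - g b| ≤ M * |a - b| := by
  intro a b
  have := Convex.norm_image_sub_le_of_norm_hasDerivWithin_le
    (f := g) (f' := g') (fun x _ => (hf x).hasDerivWithinAt)
    (fun x _ => by simpa [Real.norm_eq_abs] using hM x) convex_univ (mem_univ b) (mem_univ a)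
  simpa [Real.norm_eq_abs] using this

lemma mainHull (h : ℝ → ℝ → ℝ) (hadm : Admissible h)
    (H : C(ℝ × ℝ, ℝ)) (hH : ∀ t x : ℝ, H (t, x) = h t x)
    (n : ℕ) (b : Fin n → ℝ → ℝ)
    (hb : ∀ i, IsBoundedSol h (b i))
    (hsep : ∀ i j : Fin n, i ≠ j → UnifSep (b i) (b j))
    (ω : C(ℝ × ℝ, ℝ)) (hω : ω ∈ hullSet H) :
    ∃ c : Fin n → ℝ → ℝ,
      (∀ i, IsBoundedSol (fun t x => ω (t, x)) (c i)) ∧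
      (∀ i j : Fin n, i ≠ j → UnifSep (c i) (c j)) := by
  classical
  -- uniform bound
  choose C0 hC0 using fun i => (hb i).2
  set C : ℝ := ∑ i, |C0 i| with hCdef
  have hC : ∀ i (t : ℝ), |b i t| ≤ C := by
    intro i t
    refine (hC0 i t).trans ((le_abs_self _).trans ?_)
    exact Finset.single_le_sum (f := fun i => |C0 i|) (fun j _ => abs_nonneg _) (Finset.mem_univ i)
  have hbJ : ∀ i (t : ℝ), b i t ∈ Icc (-C) C := fun i t => abs_le.mp (hC i t)
  -- bound and uniform continuity of h on ℝ × J
  obtain ⟨M0, hM0⟩ := (hadm.2 (Icc (-C) C) isCompact_Icc).1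
  have hUC := (hadm.2 (Icc (-C) C) isCompact_Icc).2
  set M : ℝ := |M0| + 1 with hMdef
  have hMpos : 0 < M := by positivity
  have hhM : ∀ i (t : ℝ), |h t (b i t)| ≤ M :=
    fun i t => ((hM0 t _ (hbJ i t)).trans (le_abs_self _)).trans (by linarith)
  have hLip : ∀ i (a a' : ℝ), |b i a - b i a'| ≤ M * |a - a'| :=
    fun i => sol_lip (hb i).1 (hhM i)
  have hbcont : ∀ i, Continuous (b i) :=
    fun i => continuous_iff_continuousAt.mpr fun t => ((hb i).1 t).continuousAt
  -- ultrafilter converging to ω along shifts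
  obtain ⟨u, hu_range, hu_le⟩ := mem_closure_iff_ultrafilter.mp hω
  have hne : (Filter.comap (shiftCM H) ↑u).NeBot := u.neBot.comap_of_range_mem hu_range
  set G : Ultrafilter ℝ := Ultrafilter.of (Filter.comap (shiftCM H) ↑u) with hGdef
  have hmap : Filter.Tendsto (shiftCM H) ↑G (𝓝 ω) := by
    have h1 : Filter.map (shiftCM H) ↑G ≤ ↑u :=
      le_trans (Filter.map_mono (Ultrafilter.of_le _)) Filter.map_comap_le
    have h2 : Filter.map (shiftCM H) ↑G = ↑u := u.unique h1
    rw [Filter.Tendsto, h2]; exact hu_le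
  have hTU : ∀ K : Set (ℝ × ℝ), IsCompact K →
      TendstoUniformlyOn (fun s p => (shiftCM H s) p) (fun p => ω p) ↑G K :=
    ContinuousMap.tendsto_iff_forall_isCompact_tendstoUniformlyOn.mp hmap
  -- pointwise limits
  have hex : ∀ i (t : ℝ), ∃ y, y ∈ Icc (-C) C ∧
      Tendsto (fun s => b i (t + s)) (↑G : Filter ℝ) (𝓝 y) := by
    intro i t
    obtain ⟨y, hy, hle⟩ := isCompact_Icc.ultrafilter_le_nhds
      (G.map (fun s => b i (t + s)))
      (by rw [Ultrafilter.coe_map]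
          exact Filter.le_principal_iff.mpr
            (Filter.mem_map.mpr (Filter.Eventually.of_forall fun s => hbJ i (t + s))))
    exact ⟨y, hy, by rwa [Ultrafilter.coe_map] at hle⟩
  choose c hcJ hct using hex
  have hcC : ∀ i (t : ℝ), |c i t| ≤ C := fun i t => abs_le.mpr (hcJ i t)
  have hcLip : ∀ i (a a' : ℝ), |c i a - c i a'| ≤ M * |a - a'| := by
    intro i a a'
    refine le_of_tendsto (((hct i a).sub (hct i a')).abs)
      (Filter.Eventually.of_forall fun s => ?_)
    have := hLip i (a + s) (a' + s)
    simpa [add_sub_add_right_eq_sub] using this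
  have hccont : ∀ i, Continuous (c i) := by
    intro i
    refine LipschitzWith.continuous (K := M.toNNReal) (LipschitzWith.of_dist_le_mul fun x y => ?_)
    rw [Real.dist_eq, Real.dist_eq, Real.coe_toNNReal M hMpos.le]
    exact hcLip i x y
  -- uniform convergence on compact intervals
  have key : ∀ i (t : ℝ), ∀ ε > 0, ∀ᶠ s in (↑G : Filter ℝ),
      ∀ r ∈ uIcc (0:ℝ) t, |b i (r + s) - c i r| < ε := by
    intro i t ε hε
    have hδ : 0 < ε / 3 / M := by positivity
    obtain ⟨F, hF⟩ := isCompact_uIcc.elim_finite_subcover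
      (fun r : ℝ => Metric.ball r (ε / 3 / M)) (fun _ => Metric.isOpen_ball)
      (fun r _ => mem_iUnion.2 ⟨r, Metric.mem_ball_self hδ⟩)
    have hev : ∀ᶠ s in (↑G : Filter ℝ), ∀ k ∈ F, |b i (k + s) - c i k| < ε / 3 := by
      rw [Filter.eventually_all_finset]
      intro k _
      have h3 : (0:ℝ) < ε / 3 := by positivity
      filter_upwards [Metric.tendsto_nhds.mp (hct i k) (ε / 3) h3] with s hs
      rwa [Real.dist_eq] at hs
    filter_upwards [hev] with s hs r hr
    obtain ⟨k, hkF, hk⟩ := mem_iUnion₂.mp (hF hr)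
    rw [Metric.mem_ball, Real.dist_eq] at hk
    have h1 : |b i (r + s) - b i (k + s)| ≤ M * |r - k| := by
      simpa [add_sub_add_right_eq_sub] using hLip i (r + s) (k + s)
    have h2 : |c i k - c i r| ≤ M * |r - k| := by
      rw [abs_sub_comm r k]; exact hcLip i k r
    have h3 : M * |r - k| ≤ ε / 3 := by
      calc M * |r - k| ≤ M * (ε / 3 / M) := by nlinarith [abs_nonneg (r - k)]
        _ = ε / 3 := by field_simp
    have htri : |b i (r + s) - c i r|
        ≤ |b i (r + s) - b i (k + s)| + |b i (k + s) - c i k| + |c i k - c i r| :=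
      (abs_sub_le _ (c i k) _).trans
        (by linarith [abs_sub_le (b i (r + s)) (b i (k + s)) (c i k)])
    have hB := hs k hkF
    refine lt_of_le_of_lt htri ?_
    have hA : |b i (r + s) - b i (k + s)| ≤ ε / 3 := h1.trans h3
    have hD : |c i k - c i r| ≤ ε / 3 := h2.trans h3
    linarith [hA, hD, hB]
  -- integral identity for the shifted solutions
  have hintegrand_cont : ∀ i (s : ℝ), Continuous (fun r : ℝ => h (r + s) (b i (r + s))) := by
    intro i s
    exact hadm.1.comp ((continuous_id.add continuous_const).prodMk
      ((hbcont i).comp (continuous_id.add continuous_const)))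
  have hbint : ∀ i (s t : ℝ),
      b i (t + s) - b i (0 + s) = ∫ r in (0:ℝ)..t, h (r + s) (b i (r + s)) := by
    intro i s t
    have hder : ∀ u ∈ uIcc (0:ℝ) t,
        HasDerivAt (fun u : ℝ => b i (u + s)) (h (u + s) (b i (u + s))) u := by
      intro u _
      have := ((hb i).1 (u + s)).comp u ((hasDerivAt_id u).add_const s)
      simpa [Function.comp_def] using this
    rw [intervalIntegral.integral_eq_sub_of_hasDerivAt hder
      ((hintegrand_cont i s).intervalIntegrable 0 t)]
  -- convergence of the integrals
  have hωcont : ∀ i, Continuous (fun r : ℝ => ω (r, c i r)) :=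
    fun i => ω.continuous.comp (continuous_id.prodMk (hccont i))
  have hint : ∀ i (t : ℝ), Tendsto (fun s => ∫ r in (0:ℝ)..t, h (r + s) (b i (r + s)))
      (↑G : Filter ℝ) (𝓝 (∫ r in (0:ℝ)..t, ω (r, c i r))) := by
    intro i t
    rw [Metric.tendsto_nhds]
    intro ε hε
    set B : ℝ := ε / (|t| + 1) with hBdef
    have hBpos : 0 < B := by positivity
    obtain ⟨δ, hδpos, hδ⟩ := Metric.uniformContinuousOn_iff.mp hUC (B / 2) (by positivity)
    have hK : IsCompact (uIcc (0:ℝ) t ×ˢ Icc (-C) C) := isCompact_uIcc.prod isCompact_Icc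
    have hE2 := Metric.tendstoUniformlyOn_iff.mp (hTU _ hK) (B / 2) (by positivity)
    filter_upwards [key i t δ hδpos, hE2] with s hs1 hs2
    have hbd : ∀ r ∈ Set.uIoc (0:ℝ) t, ‖h (r + s) (b i (r + s)) - ω (r, c i r)‖ ≤ B := by
      intro r hr
      have hr' : r ∈ uIcc (0:ℝ) t := uIoc_subset_uIcc hr
      have hx1 : ((r + s : ℝ), b i (r + s)) ∈ (univ : Set ℝ) ×ˢ Icc (-C) C :=
        ⟨mem_univ _, hbJ i (r + s)⟩
      have hx2 : ((r + s : ℝ), c i r) ∈ (univ : Set ℝ) ×ˢ Icc (-C) C :=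
        ⟨mem_univ _, hcJ i r⟩
      have hdist : dist ((r + s : ℝ), b i (r + s)) ((r + s : ℝ), c i r) < δ := by
        rw [Prod.dist_eq]
        simp only [dist_self]
        rw [Real.dist_eq]
        exact max_lt hδpos (hs1 r hr')
      have h1 : |h (r + s) (b i (r + s)) - h (r + s) (c i r)| < B / 2 := by
        have := hδ _ hx1 _ hx2 hdist
        rwa [Real.dist_eq] at this
      have h2 : |h (r + s) (c i r) - ω (r, c i r)| < B / 2 := by
        have hp : ((r : ℝ), c i r) ∈ uIcc (0:ℝ) t ×ˢ Icc (-C) C := ⟨hr', hcJ i r⟩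
        have := hs2 _ hp
        rw [dist_comm, Real.dist_eq] at this
        have hval : (shiftCM H s) ((r : ℝ), c i r) = h (r + s) (c i r) := hH (r + s) (c i r)
        rwa [hval] at this
      rw [Real.norm_eq_abs]
      calc |h (r + s) (b i (r + s)) - ω (r, c i r)|
          ≤ |h (r + s) (b i (r + s)) - h (r + s) (c i r)| + |h (r + s) (c i r) - ω (r, c i r)| :=
            abs_sub_le _ _ _
        _ ≤ B := by linarith
    have hint1 : IntervalIntegrable (fun r : ℝ => h (r + s) (b i (r + s))) volume 0 t :=
      (hintegrand_cont i s).intervalIntegrable 0 t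
    have hint2 : IntervalIntegrable (fun r : ℝ => ω (r, c i r)) volume 0 t :=
      (hωcont i).intervalIntegrable 0 t
    rw [Real.dist_eq, ← intervalIntegral.integral_sub hint1 hint2]
    have := intervalIntegral.norm_integral_le_of_norm_le_const hbd
    rw [Real.norm_eq_abs] at this
    calc |∫ r in (0:ℝ)..t, (h (r + s) (b i (r + s)) - ω (r, c i r))| ≤ B * |t - 0| := this
      _ < ε := by
          rw [sub_zero]
          have : B * |t| < B * (|t| + 1) := by nlinarith
          have hne0 : |t| + 1 ≠ 0 := by positivity
          have hBe : B * (|t| + 1) = ε := by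
            rw [hBdef, div_mul_cancel₀ _ hne0]
          linarith
  -- the limit functions satisfy the integral equation
  have heq : ∀ i (t : ℝ), c i t = c i 0 + ∫ r in (0:ℝ)..t, ω (r, c i r) := by
    intro i t
    have h1' : Tendsto (fun s => ∫ r in (0:ℝ)..t, h (r + s) (b i (r + s))) (↑G : Filter ℝ)
        (𝓝 (c i t - c i 0)) := by
      have hfe : (fun s : ℝ => b i (t + s) - b i (0 + s))
          = fun s => ∫ r in (0:ℝ)..t, h (r + s) (b i (r + s)) := by
        funext s; exact hbint i s t
      rw [← hfe]
      exact (hct i t).sub (hct i 0)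
    have := tendsto_nhds_unique h1' (hint i t)
    linarith
  -- differentiability
  have hsol : ∀ i (t : ℝ), HasDerivAt (c i) (ω (t, c i t)) t := by
    intro i t
    have hD : HasDerivAt (fun u : ℝ => c i 0 + ∫ r in (0:ℝ)..u, ω (r, c i r))
        (ω (t, c i t)) t := by
      have := intervalIntegral.integral_hasDerivAt_right
        ((hωcont i).intervalIntegrable 0 t)
        ((hωcont i).aestronglyMeasurable.stronglyMeasurableAtFilter)
        (hωcont i).continuousAt
      exact this.const_add (c i 0)
    exact hD.congr_of_eventuallyEq (Filter.Eventually.of_forall fun u => heq i u)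
  refine ⟨c, fun i => ⟨hsol i, C, hcC i⟩, ?_⟩
  intro i j hij
  obtain ⟨d, hd, hdsep⟩ := hsep i j hij
  refine ⟨d, hd, fun t => ?_⟩
  exact ge_of_tendsto (((hct i t).sub (hct j t)).abs)
    (Filter.Eventually.of_forall fun s => hdsep (t + s))

/-- If `x' = h(t,x)` has a bounded solution (resp. `n` uniformly separated solutions
`b₁ < ⋯ < b_n`), then for every element `ω` of the hull of `h` the equation
`x' = ω(t,x)` has a bounded solution (resp. `n` uniformly separated solutions). -/
theorem stmt4 (h hx : ℝ → ℝ → ℝ) (hadm : C1Admissible h hx)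
    (H : C(ℝ × ℝ, ℝ)) (hH : ∀ t x : ℝ, H (t, x) = h t x) :
    ((∃ b : ℝ → ℝ, IsBoundedSol h b) →
      ∀ ω ∈ hullSet H, ∃ b : ℝ → ℝ, IsBoundedSol (fun t x => ω (t, x)) b) ∧
    (∀ n : ℕ, ∀ b : Fin n → ℝ → ℝ,
      (∀ i, IsBoundedSol h (b i)) →
      (∀ i j : Fin n, i < j → ∀ t : ℝ, b i t < b j t) →
      (∀ i j : Fin n, i ≠ j → UnifSep (b i) (b j)) →
      ∀ ω ∈ hullSet H, ∃ c : Fin n → ℝ → ℝ,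
        (∀ i, IsBoundedSol (fun t x => ω (t, x)) (c i)) ∧
        (∀ i j : Fin n, i ≠ j → UnifSep (c i) (c j))) := by
  constructor
  · rintro ⟨b0, hb0⟩ ω hω
    obtain ⟨c, hc, -⟩ := mainHull h hadm.1 H hH 1 (fun _ => b0) (fun _ => hb0)
      (fun i j hij => absurd (Subsingleton.elim i j) hij) ω hω
    exact ⟨c 0, hc 0⟩
  · intro n b hb _ hsep ω hω
    exact mainHull h hadm.1 H hH n b hb hsep ω hω
end

section
/- Let h be C¹-admissible, let b̃_h be a hyperbolic attractive solution of x'=h(t,x) with dichotomy constant pair (k₀,γ₀), and let ρ>sup_{t∈ℝ}|b̃_h(t)|. Then for every γ∈(0,γ₀) and every ε>0 there exist δ_ε>0 and ρ_ε>0 such that for every C¹-admissible g with ‖h−g‖_{1,ρ}<δ_ε: (i) x'=g(t,x) has a hyperbolic attractive solution b̃_g with dichotomy constant pair (k₀,γ) satisfying sup_{t∈ℝ}|b̃_h(t)−b̃_g(t)|<ε; (ii) whenever |b̃_g(t₀)−x₀|≤ρ_ε, the solution of x'=g(t,x) with value x₀ at time t₀ is defined for all t≥t₀ and satisfies |b̃_g(t)−x_g(t,t₀,x₀)|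 ≤ k₀·e^{−γ(t−t₀)}·|b̃_g(t₀)−x₀| for all t≥t₀. The analogous statement holds for hyperbolic repulsive solutions, with the estimates holding for t≤t₀. -/
open Set Filter Topology MeasureTheory

/-- The norm `‖h‖_{1,ρ} = sup_{ℝ×[-ρ,ρ]} |h| + sup_{ℝ×[-ρ,ρ]} |h_x|`. -/
noncomputable def norm1 (h hx : ℝ → ℝ → ℝ) (ρ : ℝ) : ℝ :=
  (⨆ p : ℝ × (Set.Icc (-ρ) ρ), |h p.1 (p.2 : ℝ)|) +
  (⨆ p : ℝ × (Set.Icc (-ρ) ρ), |hx p.1 (p.2 : ℝ)|)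

section Stmt5Aux
open Set Filter Topology MeasureTheory intervalIntegral
namespace Stmt5Aux


/-- Mean value theorem, convenient form. -/
lemma mvt_aux (f f' : ℝ → ℝ) (hf : ∀ x, HasDerivAt f (f' x) x) (u v : ℝ) :
    ∃ c ∈ Set.uIcc u v, f v - f u = f' c * (v - u) := by
  rcases lt_trichotomy u v with hlt | heq | hgt
  · obtain ⟨c, hc, hc2⟩ := exists_hasDerivAt_eq_slope f f' hlt
      (fun x _ => (hf x).continuousAt.continuousWithinAt) (fun x _ => hf x)
    refine ⟨c, ?_, ?_⟩
    · rw [Set.uIcc_of_le hlt.le]; exact ⟨hc.1.le, hc.2.le⟩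
    · rw [hc2]
      have hne : v - u ≠ 0 := sub_ne_zero.mpr hlt.ne'
      field_simp
  · exact ⟨u, Set.left_mem_uIcc, by simp [heq]⟩
  · obtain ⟨c, hc, hc2⟩ := exists_hasDerivAt_eq_slope f f' hgt
      (fun x _ => (hf x).continuousAt.continuousWithinAt) (fun x _ => hf x)
    refine ⟨c, ?_, ?_⟩
    · rw [Set.uIcc_of_ge hgt.le]; exact ⟨hc.1.le, hc.2.le⟩
    · rw [hc2]
      have hne : u - v ≠ 0 := sub_ne_zero.mpr hgt.ne'
      field_simp
      ring

lemma hasDerivAt_exp_mul_div {c : ℝ} (hc : c ≠ 0) (x : ℝ) :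
    HasDerivAt (fun s => Real.exp (c * s) / c) (Real.exp (c * x)) x := by
  have := ((Real.hasDerivAt_exp (c * x)).comp x ((hasDerivAt_id x).const_mul c)).div_const c
  simpa [mul_comm, mul_div_assoc, mul_div_cancel_left₀ _ hc] using this

lemma integral_exp_mul_interval {c : ℝ} (hc : c ≠ 0) (a b : ℝ) :
    ∫ s in a..b, Real.exp (c * s) = Real.exp (c * b) / c - Real.exp (c * a) / c := by
  exact intervalIntegral.integral_eq_sub_of_hasDerivAt
    (fun x _ => hasDerivAt_exp_mul_div hc x)
    ((Real.continuous_exp.comp (continuous_const.mul continuous_id)).intervalIntegrable _ _)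

lemma integrableOn_exp_mul_Iic {c : ℝ} (hc : 0 < c) (t : ℝ) :
    IntegrableOn (fun s => Real.exp (c * s)) (Iic t) := by
  refine integrableOn_Iic_of_intervalIntegral_norm_bounded (l := atBot) (a := id)
    (Real.exp (c * t) / c) t
    (fun i => ((Real.continuous_exp.comp
      (continuous_const.mul continuous_id)).integrableOn_Ioc)) tendsto_id ?_
  filter_upwards with a
  have : ∀ x, ‖Real.exp (c * x)‖ = Real.exp (c * x) := fun x => abs_of_pos (Real.exp_pos _)
  simp only [this, id]
  rw [integral_exp_mul_interval hc.ne']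
  have := (Real.exp_pos (c * a)).le
  have h2 : (0:ℝ) < c := hc
  have : 0 ≤ Real.exp (c * a) / c := by positivity
  linarith

lemma integral_exp_mul_Iic {c : ℝ} (hc : 0 < c) (t : ℝ) :
    ∫ s in Iic t, Real.exp (c * s) = Real.exp (c * t) / c := by
  have := integral_Iic_of_hasDerivAt_of_tendsto' (f := fun s => Real.exp (c * s) / c)
    (f' := fun s => Real.exp (c * s)) (a := t) (m := 0)
    (fun x _ => hasDerivAt_exp_mul_div hc.ne' x) (integrableOn_exp_mul_Iic hc t) ?_
  · rw [this, sub_zero]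
  · have : Tendsto (fun s : ℝ => c * s) atBot atBot :=
      (tendsto_const_mul_atBot_of_pos hc).mpr tendsto_id
    simpa using (Real.tendsto_exp_atBot.comp this).div_const c

/-- Splitting an `Iic` integral. -/
lemma integral_Iic_split (w : ℝ → ℝ) (hint : ∀ a : ℝ, IntegrableOn w (Iic a)) (c u : ℝ) :
    ∫ s in Iic u, w s = (∫ s in Iic c, w s) + ∫ s in c..u, w s := by
  have key : ∀ x y : ℝ, x ≤ y → ∫ s in Iic y, w s = (∫ s in Iic x, w s) + ∫ s in x..y, w s := by
    intro x y hxy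
    rw [intervalIntegral.integral_of_le hxy, ← MeasureTheory.setIntegral_union
      (Iic_disjoint_Ioc le_rfl) measurableSet_Ioc (hint x)
      ((hint y).mono Ioc_subset_Iic_self le_rfl), Iic_union_Ioc_eq_Iic hxy]
  rcases le_or_gt c u with hle | hlt
  · exact key c u hle
  · have := key u c hlt.le
    rw [intervalIntegral.integral_symm u c]
    linarith

/-- FTC for `fun t => ∫ s in Iic t, w s` with continuous integrand. -/
lemma hasDerivAt_integral_Iic (w : ℝ → ℝ) (hw : Continuous w)
    (hint : ∀ a : ℝ, IntegrableOn w (Iic a)) (t : ℝ) :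
    HasDerivAt (fun u => ∫ s in Iic u, w s) (w t) t := by
  have key := integral_Iic_split w hint t
  have h1 : HasDerivAt (fun u => (∫ s in Iic t, w s) + ∫ s in t..u, w s) (w t) t := by
    refine (intervalIntegral.integral_hasDerivAt_right (hw.intervalIntegrable _ _)
      (hw.stronglyMeasurable.stronglyMeasurableAtFilter) hw.continuousAt).const_add _
  exact h1.congr_of_eventuallyEq (Filter.Eventually.of_forall (fun u => integral_Iic_split w hint t u))


open Real

lemma integrableOn_exp_kernel_Iic {c : ℝ} (hc : 0 < c) (t v : ℝ) :
    IntegrableOn (fun s => Real.exp (c * (s - v))) (Iic t) := by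
  have : (fun s => Real.exp (c * (s - v))) = fun s => Real.exp (-(c*v)) * Real.exp (c * s) := by
    funext s; rw [← Real.exp_add]; ring_nf
  rw [this]
  exact (integrableOn_exp_mul_Iic hc t).const_mul _

lemma integral_exp_kernel_Iic {c : ℝ} (hc : 0 < c) (t : ℝ) :
    ∫ s in Iic t, Real.exp (c * (s - t)) = 1 / c := by
  have h1 : (fun s => Real.exp (c * (s - t))) = fun s => Real.exp (-(c*t)) * Real.exp (c * s) := by
    funext s; rw [← Real.exp_add]; ring_nf
  rw [h1, MeasureTheory.integral_const_mul, integral_exp_mul_Iic hc,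
    mul_div_assoc' , ← Real.exp_add]
  simp

lemma integral_exp_kernel_le {c : ℝ} (hc : 0 < c) {a v : ℝ} (hav : a ≤ v) :
    ∫ s in a..v, Real.exp (c * (s - v)) ≤ 1 / c := by
  have h1 : (fun s => Real.exp (c * (s - v))) = fun s => Real.exp (-(c*v)) * Real.exp (c * s) := by
    funext s; rw [← Real.exp_add]; ring_nf
  rw [h1, intervalIntegral.integral_const_mul, integral_exp_mul_interval hc.ne']
  have e1 : Real.exp (-(c*v)) * Real.exp (c*v) = 1 := by
    rw [← Real.exp_add]; simp
  have e2 : 0 < Real.exp (-(c * v)) * (Real.exp (c * a) / c) := by positivity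
  calc Real.exp (-(c*v)) * (Real.exp (c*v)/c - Real.exp (c*a)/c)
      = (Real.exp (-(c*v)) * Real.exp (c*v))/c - Real.exp (-(c*v)) * (Real.exp (c*a)/c) := by ring
    _ = 1/c - Real.exp (-(c*v)) * (Real.exp (c*a)/c) := by rw [e1]
    _ ≤ 1/c := by linarith

lemma integrable_exp_kernel_interval {c : ℝ} (a v : ℝ) :
    IntervalIntegrable (fun s => Real.exp (c * (s - v))) volume a v :=
  (Real.continuous_exp.comp (continuous_const.mul (continuous_id.sub continuous_const))).intervalIntegrable _ _



lemma fixedpoint_global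
    (p : ℝ → ℝ) (hp : Continuous p)
    (P : ℝ → ℝ) (hP : ∀ t, HasDerivAt P (p t) t)
    (k γ₀ : ℝ) (hk : 1 ≤ k) (hγ₀ : 0 < γ₀)
    (dich : ∀ s t : ℝ, s ≤ t → Real.exp (P t - P s) ≤ k * Real.exp (-γ₀ * (t - s)))
    (F : ℝ → ℝ → ℝ) (hFc : Continuous fun q : ℝ × ℝ => F q.1 q.2)
    (e B L : ℝ) (he : 0 < e) (hB0 : 0 ≤ B) (hL0 : 0 ≤ L)
    (hB : ∀ s y : ℝ, |y| ≤ e → |F s y| ≤ B)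
    (hL : ∀ s y₁ y₂ : ℝ, |y₁| ≤ e → |y₂| ≤ e → |F s y₁ - F s y₂| ≤ L * |y₁ - y₂|)
    (hball : k * B / γ₀ ≤ e) (hcontr : k * L / γ₀ ≤ 1/2) :
    ∃ u : ℝ → ℝ, (∀ t, |u t| ≤ e) ∧ ∀ t, HasDerivAt u (p t * u t + F t (u t)) t := by
  have hPc : Continuous P := by
    rw [continuous_iff_continuousAt]; exact fun t => (hP t).continuousAt
  have hk0 : 0 < k := lt_of_lt_of_le one_pos hk
  -- decay of exp(-P s) relative to exp(-P a)
  have hker : ∀ a s : ℝ, s ≤ a →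
      Real.exp (-P s) ≤ Real.exp (-P a) * (k * Real.exp (γ₀ * (s - a))) := by
    intro a s hsa
    have := dich s a hsa
    have h1 : Real.exp (P a - P s) = Real.exp (P a) * Real.exp (-P s) := by
      rw [← Real.exp_add]; ring_nf
    rw [h1] at this
    have h2 : Real.exp (-P a) * Real.exp (P a) = 1 := by rw [← Real.exp_add]; simp
    have h3 : -γ₀ * (a - s) = γ₀ * (s - a) := by ring
    calc Real.exp (-P s) = Real.exp (-P a) * (Real.exp (P a) * Real.exp (-P s)) := by
          rw [← mul_assoc, h2, one_mul]
      _ ≤ Real.exp (-P a) * (k * Real.exp (-γ₀ * (a - s))) := by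
          apply mul_le_mul_of_nonneg_left _ (Real.exp_pos _).le
          exact this
      _ = Real.exp (-P a) * (k * Real.exp (γ₀ * (s - a))) := by rw [h3]
  -- the raw operator
  set Φraw : (ℝ → ℝ) → ℝ → ℝ :=
    fun ξ t => Real.exp (P t) * ∫ s in Iic t, Real.exp (-P s) * F s (ξ s) with hΦraw
  -- continuity of integrand
  have wcont : ∀ ξ : ℝ → ℝ, Continuous ξ →
      Continuous (fun s => Real.exp (-P s) * F s (ξ s)) := by
    intro ξ hξ
    exact ((hPc.neg).rexp).mul (hFc.comp (continuous_id.prodMk hξ))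
  -- integrability of integrand
  have wint : ∀ ξ : ℝ → ℝ, Continuous ξ → (∀ s, |ξ s| ≤ e) →
      ∀ a : ℝ, IntegrableOn (fun s => Real.exp (-P s) * F s (ξ s)) (Iic a) := by
    intro ξ hξc hξe a
    refine Integrable.mono' (g := fun s => (Real.exp (-P a) * k * B) * Real.exp (γ₀ * (s - a)))
      (((integrableOn_exp_kernel_Iic hγ₀ a a).const_mul _)) ((wcont ξ hξc).aestronglyMeasurable) ?_
    refine (ae_restrict_iff' measurableSet_Iic).2 (Filter.Eventually.of_forall ?_)
    intro s hsa
    have h1 : ‖Real.exp (-P s) * F s (ξ s)‖ ≤ Real.exp (-P s) * B := by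
      rw [norm_mul, Real.norm_eq_abs, Real.norm_eq_abs, abs_of_pos (Real.exp_pos _)]
      exact mul_le_mul_of_nonneg_left (hB s _ (hξe s)) (Real.exp_pos _).le
    refine h1.trans ?_
    have := hker a s hsa
    calc Real.exp (-P s) * B ≤ (Real.exp (-P a) * (k * Real.exp (γ₀ * (s - a)))) * B :=
          mul_le_mul_of_nonneg_right this hB0
      _ = (Real.exp (-P a) * k * B) * Real.exp (γ₀ * (s - a)) := by ring
  -- bound on Φraw
  have Φbound : ∀ ξ : ℝ → ℝ, Continuous ξ → (∀ s, |ξ s| ≤ e) →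
      ∀ t, |Φraw ξ t| ≤ k * B / γ₀ := by
    intro ξ hξc hξe t
    have h1 : ‖∫ s in Iic t, Real.exp (-P s) * F s (ξ s)‖ ≤
        ∫ s in Iic t, (Real.exp (-P t) * k * B) * Real.exp (γ₀ * (s - t)) := by
      refine MeasureTheory.norm_integral_le_of_norm_le
        ((integrableOn_exp_kernel_Iic hγ₀ t t).const_mul _) ?_
      refine (ae_restrict_iff' measurableSet_Iic).2 (Filter.Eventually.of_forall ?_)
      intro s hst
      have h1 : ‖Real.exp (-P s) * F s (ξ s)‖ ≤ Real.exp (-P s) * B := by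
        rw [norm_mul, Real.norm_eq_abs, Real.norm_eq_abs, abs_of_pos (Real.exp_pos _)]
        exact mul_le_mul_of_nonneg_left (hB s _ (hξe s)) (Real.exp_pos _).le
      refine h1.trans ?_
      calc Real.exp (-P s) * B ≤ (Real.exp (-P t) * (k * Real.exp (γ₀ * (s - t)))) * B :=
            mul_le_mul_of_nonneg_right (hker t s hst) hB0
        _ = (Real.exp (-P t) * k * B) * Real.exp (γ₀ * (s - t)) := by ring
    have h2 : ∫ s in Iic t, (Real.exp (-P t) * k * B) * Real.exp (γ₀ * (s - t))
        = (Real.exp (-P t) * k * B) * (1/γ₀) := by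
      rw [MeasureTheory.integral_const_mul, integral_exp_kernel_Iic hγ₀]
    rw [hΦraw]
    simp only [abs_mul, abs_of_pos (Real.exp_pos (P t))]
    rw [← Real.norm_eq_abs (∫ s in Iic t, Real.exp (-P s) * F s (ξ s))]
    calc Real.exp (P t) * ‖∫ s in Iic t, Real.exp (-P s) * F s (ξ s)‖
        ≤ Real.exp (P t) * ((Real.exp (-P t) * k * B) * (1/γ₀)) := by
          apply mul_le_mul_of_nonneg_left _ (Real.exp_pos _).le
          rw [← h2]; exact h1
      _ = (Real.exp (P t) * Real.exp (-P t)) * (k * B / γ₀) := by ring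
      _ = k * B / γ₀ := by rw [← Real.exp_add]; simp
  -- continuity of Φraw ξ
  have Φderiv : ∀ ξ : ℝ → ℝ, Continuous ξ → (∀ s, |ξ s| ≤ e) →
      ∀ t, HasDerivAt (Φraw ξ) (p t * Φraw ξ t + F t (ξ t)) t := by
    intro ξ hξc hξe t
    have hW := hasDerivAt_integral_Iic _ (wcont ξ hξc) (wint ξ hξc hξe) t
    have hE : HasDerivAt (fun t => Real.exp (P t)) (Real.exp (P t) * p t) t := (hP t).exp
    have := hE.mul hW
    have heq : Real.exp (P t) * p t * (∫ s in Iic t, Real.exp (-P s) * F s (ξ s)) +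
        Real.exp (P t) * (Real.exp (-P t) * F t (ξ t)) = p t * Φraw ξ t + F t (ξ t) := by
      rw [hΦraw]
      have h2 : Real.exp (P t) * Real.exp (-P t) = 1 := by rw [← Real.exp_add]; simp
      calc Real.exp (P t) * p t * (∫ s in Iic t, Real.exp (-P s) * F s (ξ s)) +
          Real.exp (P t) * (Real.exp (-P t) * F t (ξ t))
          = p t * (Real.exp (P t) * ∫ s in Iic t, Real.exp (-P s) * F s (ξ s)) +
            (Real.exp (P t) * Real.exp (-P t)) * F t (ξ t) := by ring
        _ = _ := by rw [h2]; ring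
    rw [← heq]
    exact this
  have Φcont : ∀ ξ : ℝ → ℝ, Continuous ξ → (∀ s, |ξ s| ≤ e) → Continuous (Φraw ξ) := by
    intro ξ hξc hξe
    rw [continuous_iff_continuousAt]
    exact fun t => (Φderiv ξ hξc hξe t).continuousAt
  -- the complete space
  set S : Set (BoundedContinuousFunction ℝ ℝ) := {ξ | ‖ξ‖ ≤ e} with hS
  have hSclosed : IsClosed S := isClosed_le continuous_norm continuous_const
  have : CompleteSpace ↥S := hSclosed.completeSpace_coe
  have : Nonempty ↥S := ⟨⟨0, by simp [hS]; exact he.le⟩⟩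
  have memS : ∀ ξ : ↥S, ∀ s, |(ξ : BoundedContinuousFunction ℝ ℝ) s| ≤ e := by
    intro ξ s
    exact le_trans ((ξ : BoundedContinuousFunction ℝ ℝ).norm_coe_le_norm s) ξ.2
  -- the operator on S
  have hkBγe : k * B / γ₀ ≤ e := hball
  set Φ : ↥S → ↥S := fun ξ =>
    ⟨BoundedContinuousFunction.ofNormedAddCommGroup (Φraw ξ)
      (Φcont _ (ξ : BoundedContinuousFunction ℝ ℝ).continuous (memS ξ)) (k * B / γ₀)
      (fun t => by
        rw [Real.norm_eq_abs]
        exact Φbound _ (ξ : BoundedContinuousFunction ℝ ℝ).continuous (memS ξ) t),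
     by
      simp only [hS, Set.mem_setOf_eq]
      rw [BoundedContinuousFunction.norm_le he.le]
      intro t
      rw [BoundedContinuousFunction.coe_ofNormedAddCommGroup, Real.norm_eq_abs]
      exact le_trans (Φbound _ (ξ : BoundedContinuousFunction ℝ ℝ).continuous (memS ξ) t) hball⟩
    with hΦ
  -- contraction property
  have contr : ∀ ξ ζ : ↥S, dist (Φ ξ) (Φ ζ) ≤ (1/2) * dist ξ ζ := by
    intro ξ ζ
    have hd : (0:ℝ) ≤ (1/2) * dist ξ ζ := by positivity
    rw [Subtype.dist_eq, BoundedContinuousFunction.dist_le hd]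
    intro t
    have hcξ := (ξ : BoundedContinuousFunction ℝ ℝ).continuous
    have hcζ := (ζ : BoundedContinuousFunction ℝ ℝ).continuous
    have h0 : ∀ s : ℝ, |(ξ : BoundedContinuousFunction ℝ ℝ) s -
        (ζ : BoundedContinuousFunction ℝ ℝ) s| ≤ dist ξ ζ := by
      intro s
      have h := BoundedContinuousFunction.dist_coe_le_dist
        (f := (ξ : BoundedContinuousFunction ℝ ℝ)) (g := (ζ : BoundedContinuousFunction ℝ ℝ)) s
      rw [Real.dist_eq] at h
      rw [Subtype.dist_eq]
      exact h
    simp only [hΦ, BoundedContinuousFunction.coe_ofNormedAddCommGroup, Real.dist_eq]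
    rw [hΦraw]
    have hsub : Real.exp (P t) * (∫ s in Iic t, Real.exp (-P s) * F s ((ξ : BoundedContinuousFunction ℝ ℝ) s)) -
        Real.exp (P t) * (∫ s in Iic t, Real.exp (-P s) * F s ((ζ : BoundedContinuousFunction ℝ ℝ) s)) =
        Real.exp (P t) * ∫ s in Iic t, (Real.exp (-P s) * F s ((ξ : BoundedContinuousFunction ℝ ℝ) s)
          - Real.exp (-P s) * F s ((ζ : BoundedContinuousFunction ℝ ℝ) s)) := by
      rw [MeasureTheory.integral_sub (wint _ hcξ (memS ξ) t) (wint _ hcζ (memS ζ) t)]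
      ring
    rw [hsub]
    have h1 : ‖∫ s in Iic t, (Real.exp (-P s) * F s ((ξ : BoundedContinuousFunction ℝ ℝ) s)
          - Real.exp (-P s) * F s ((ζ : BoundedContinuousFunction ℝ ℝ) s))‖ ≤
        ∫ s in Iic t, (Real.exp (-P t) * k * (L * dist ξ ζ)) * Real.exp (γ₀ * (s - t)) := by
      refine MeasureTheory.norm_integral_le_of_norm_le
        ((integrableOn_exp_kernel_Iic hγ₀ t t).const_mul _) ?_
      refine (ae_restrict_iff' measurableSet_Iic).2 (Filter.Eventually.of_forall ?_)
      intro s hst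
      have h2 : ‖Real.exp (-P s) * F s ((ξ : BoundedContinuousFunction ℝ ℝ) s)
          - Real.exp (-P s) * F s ((ζ : BoundedContinuousFunction ℝ ℝ) s)‖ ≤
          Real.exp (-P s) * (L * dist ξ ζ) := by
        rw [← mul_sub, Real.norm_eq_abs, abs_mul, abs_of_pos (Real.exp_pos _)]
        refine mul_le_mul_of_nonneg_left ?_ (Real.exp_pos _).le
        refine le_trans (hL s _ _ (memS ξ s) (memS ζ s)) ?_
        exact mul_le_mul_of_nonneg_left (h0 s) hL0
      refine h2.trans ?_
      calc Real.exp (-P s) * (L * dist ξ ζ)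
          ≤ (Real.exp (-P t) * (k * Real.exp (γ₀ * (s - t)))) * (L * dist ξ ζ) := by
            refine mul_le_mul_of_nonneg_right (hker t s hst) ?_
            positivity
        _ = (Real.exp (-P t) * k * (L * dist ξ ζ)) * Real.exp (γ₀ * (s - t)) := by ring
    have h2 : ∫ s in Iic t, (Real.exp (-P t) * k * (L * dist ξ ζ)) * Real.exp (γ₀ * (s - t))
        = (Real.exp (-P t) * k * (L * dist ξ ζ)) * (1/γ₀) := by
      rw [MeasureTheory.integral_const_mul, integral_exp_kernel_Iic hγ₀]
    calc |Real.exp (P t) * ∫ s in Iic t, (Real.exp (-P s) * F s ((ξ : BoundedContinuousFunction ℝ ℝ) s)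
          - Real.exp (-P s) * F s ((ζ : BoundedContinuousFunction ℝ ℝ) s))|
        = Real.exp (P t) * ‖∫ s in Iic t, (Real.exp (-P s) * F s ((ξ : BoundedContinuousFunction ℝ ℝ) s)
          - Real.exp (-P s) * F s ((ζ : BoundedContinuousFunction ℝ ℝ) s))‖ := by
          rw [abs_mul, abs_of_pos (Real.exp_pos _), Real.norm_eq_abs]
      _ ≤ Real.exp (P t) * ((Real.exp (-P t) * k * (L * dist ξ ζ)) * (1/γ₀)) := by
          refine mul_le_mul_of_nonneg_left ?_ (Real.exp_pos _).le
          rw [← h2]; exact h1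
      _ = (Real.exp (P t) * Real.exp (-P t)) * ((k * L / γ₀) * dist ξ ζ) := by ring
      _ = (k * L / γ₀) * dist ξ ζ := by rw [← Real.exp_add]; simp
      _ ≤ (1/2) * dist ξ ζ := mul_le_mul_of_nonneg_right hcontr dist_nonneg
  have hΦcontr : ContractingWith (1/2 : NNReal) Φ := by
    constructor
    · rw [← NNReal.coe_lt_one]; norm_num
    · apply LipschitzWith.of_dist_le_mul
      intro ξ ζ
      calc dist (Φ ξ) (Φ ζ) ≤ (1/2 : ℝ) * dist ξ ζ := contr ξ ζ
        _ = ((1/2 : NNReal) : ℝ) * dist ξ ζ := by norm_num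
  set ξstar := ContractingWith.fixedPoint Φ hΦcontr with hξstar
  have hfix : Φ ξstar = ξstar := hΦcontr.fixedPoint_isFixedPt
  set u : ℝ → ℝ := fun t => (ξstar : BoundedContinuousFunction ℝ ℝ) t with hu
  have huc : Continuous u := (ξstar : BoundedContinuousFunction ℝ ℝ).continuous
  have hue : ∀ t, |u t| ≤ e := memS ξstar
  have hfp : ∀ t, Φraw u t = u t := by
    intro t
    have h1 : ((Φ ξstar : ↥S) : BoundedContinuousFunction ℝ ℝ) t =
        (ξstar : BoundedContinuousFunction ℝ ℝ) t := by rw [hfix]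
    simpa [hΦ, BoundedContinuousFunction.coe_ofNormedAddCommGroup] using h1
  have hΦu : Φraw u = u := funext hfp
  refine ⟨u, hue, fun t => ?_⟩
  have hd := Φderiv u huc hue t
  rw [hΦu] at hd
  exact hd



lemma exp_Q_self (Q : ℝ → ℝ) (t : ℝ) : Real.exp (Q t) * Real.exp (-Q t) = 1 := by
  rw [← Real.exp_add]; simp

lemma fixedpoint_halfline
    (q : ℝ → ℝ) (hq : Continuous q)
    (Q : ℝ → ℝ) (hQ : ∀ t, HasDerivAt Q (q t) t)
    (k γ' : ℝ) (hk : 1 ≤ k) (hγ' : 0 < γ') (t₀ : ℝ)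
    (dich : ∀ s t : ℝ, s ≤ t → Real.exp (Q t - Q s) ≤ k * Real.exp (-γ' * (t - s)))
    (G : ℝ → ℝ → ℝ) (hGc : Continuous fun z : ℝ × ℝ => G z.1 z.2)
    (hG0 : ∀ s, G s 0 = 0)
    (r ℓ : ℝ) (hr : 0 < r) (hℓ : 0 < ℓ)
    (hLip : ∀ s y₁ y₂ : ℝ, |y₁| ≤ r → |y₂| ≤ r → |G s y₁ - G s y₂| ≤ ℓ * |y₁ - y₂|)
    (hcontr : k * ℓ / γ' ≤ 1/2)
    (η₀ : ℝ) (hη₀ : k * |η₀| ≤ r / 2) :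
    ∃ η : ℝ → ℝ, η t₀ = η₀ ∧
      (∀ t, t₀ ≤ t → HasDerivAt η (q t * η t + G t (η t)) t) ∧
      (∀ t, t₀ ≤ t → |η t| ≤ k * |η₀| * Real.exp (-(γ' - k * ℓ) * (t - t₀))) := by
  have hQc : Continuous Q := by
    rw [continuous_iff_continuousAt]; exact fun t => (hQ t).continuousAt
  have hk0 : 0 < k := lt_of_lt_of_le one_pos hk
  have hGbd : ∀ s y : ℝ, |y| ≤ r → |G s y| ≤ ℓ * |y| := by
    intro s y hy
    have := hLip s y 0 hy (by simp [hr.le])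
    simpa [hG0 s] using this
  -- clamp
  set τ : ℝ → ℝ := fun s => max s t₀ with hτ
  have hτc : Continuous τ := continuous_id.max continuous_const
  have hτ_ge : ∀ s, t₀ ≤ τ s := fun s => le_max_right _ _
  have hτ_eq : ∀ s, t₀ ≤ s → τ s = s := fun s hs => max_eq_left hs
  -- the operator pieces; for continuous bounded η define A η on ℝ
  set A : (ℝ → ℝ) → ℝ → ℝ := fun η v => Real.exp (Q v) *
    (Real.exp (-Q t₀) * η₀ + ∫ s in t₀..v, Real.exp (-Q s) * G s (η (τ s))) with hA
  have wcont : ∀ η : ℝ → ℝ, Continuous η →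
      Continuous (fun s => Real.exp (-Q s) * G s (η (τ s))) := by
    intro η hη
    exact ((hQc.neg).rexp).mul (hGc.comp (continuous_id.prodMk (hη.comp hτc)))
  have Aderiv : ∀ η : ℝ → ℝ, Continuous η →
      ∀ v, HasDerivAt (A η) (q v * A η v + G v (η (τ v))) v := by
    intro η hη v
    have hW : HasDerivAt (fun v => Real.exp (-Q t₀) * η₀ +
        ∫ s in t₀..v, Real.exp (-Q s) * G s (η (τ s)))
        (Real.exp (-Q v) * G v (η (τ v))) v := by
      refine HasDerivAt.const_add _ ?_
      exact intervalIntegral.integral_hasDerivAt_right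
        ((wcont η hη).intervalIntegrable _ _)
        ((wcont η hη).stronglyMeasurable.stronglyMeasurableAtFilter)
        (wcont η hη).continuousAt
    have hE : HasDerivAt (fun v => Real.exp (Q v)) (Real.exp (Q v) * q v) v := (hQ v).exp
    have := hE.mul hW
    have heq : Real.exp (Q v) * q v * (Real.exp (-Q t₀) * η₀ +
          ∫ s in t₀..v, Real.exp (-Q s) * G s (η (τ s))) +
        Real.exp (Q v) * (Real.exp (-Q v) * G v (η (τ v))) =
        q v * A η v + G v (η (τ v)) := by
      rw [hA]
      have h2 := exp_Q_self Q v
      calc Real.exp (Q v) * q v * (Real.exp (-Q t₀) * η₀ +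
            ∫ s in t₀..v, Real.exp (-Q s) * G s (η (τ s))) +
          Real.exp (Q v) * (Real.exp (-Q v) * G v (η (τ v)))
          = q v * (Real.exp (Q v) * (Real.exp (-Q t₀) * η₀ +
            ∫ s in t₀..v, Real.exp (-Q s) * G s (η (τ s)))) +
            (Real.exp (Q v) * Real.exp (-Q v)) * G v (η (τ v)) := by ring
        _ = _ := by rw [h2]; ring
    rw [← heq]; exact this
  -- rewrite A with kernel inside for estimates
  have Akernel : ∀ η : ℝ → ℝ, Continuous η → ∀ v,
      A η v = Real.exp (Q v - Q t₀) * η₀ + ∫ s in t₀..v, Real.exp (Q v - Q s) * G s (η (τ s)) := by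
    intro η hη v
    rw [hA]
    simp only [mul_add]
    congr 1
    · rw [← mul_assoc, ← Real.exp_add]; ring_nf
    · rw [← intervalIntegral.integral_const_mul]
      refine intervalIntegral.integral_congr (fun s _ => ?_)
      rw [← mul_assoc, ← Real.exp_add]; ring_nf
  -- main estimate for A
  have Aest : ∀ η : ℝ → ℝ, Continuous η → (∀ s, |η s| ≤ r) → ∀ v, t₀ ≤ v →
      |A η v| ≤ k * Real.exp (-γ' * (v - t₀)) * |η₀| +
        ∫ s in t₀..v, (k * ℓ) * Real.exp (γ' * (s - v)) * |η (τ s)| := by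
    intro η hη hηr v hv
    rw [Akernel η hη v]
    have hint1 : IntervalIntegrable (fun s => Real.exp (Q v - Q s) * G s (η (τ s))) volume t₀ v := by
      have : Continuous (fun s => Real.exp (Q v - Q s) * G s (η (τ s))) :=
        ((continuous_const.sub hQc).rexp).mul (hGc.comp (continuous_id.prodMk (hη.comp hτc)))
      exact this.intervalIntegrable _ _
    have hint2 : IntervalIntegrable (fun s => (k * ℓ) * Real.exp (γ' * (s - v)) * |η (τ s)|) volume t₀ v := by
      have : Continuous (fun s => (k * ℓ) * Real.exp (γ' * (s - v)) * |η (τ s)|) :=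
        ((continuous_const.mul (continuous_const.mul (continuous_id.sub continuous_const)).rexp).mul
          ((hη.comp hτc).abs))
      exact this.intervalIntegrable _ _
    refine le_trans (abs_add_le _ _) (add_le_add ?_ ?_)
    · rw [abs_mul]
      rw [abs_of_pos (Real.exp_pos _)]
      refine mul_le_mul_of_nonneg_right ?_ (abs_nonneg _)
      exact dich t₀ v hv
    · refine le_trans (intervalIntegral.abs_integral_le_integral_abs hv) ?_
      refine intervalIntegral.integral_mono_on hv (hint1.abs) hint2 ?_
      intro s hs
      rw [abs_mul, abs_of_pos (Real.exp_pos _)]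
      have h1 : Real.exp (Q v - Q s) ≤ k * Real.exp (-γ' * (v - s)) := dich s v hs.2
      have h2 : |G s (η (τ s))| ≤ ℓ * |η (τ s)| := hGbd s _ (hηr _)
      have h3 : -γ' * (v - s) = γ' * (s - v) := by ring
      calc Real.exp (Q v - Q s) * |G s (η (τ s))|
          ≤ (k * Real.exp (-γ' * (v - s))) * (ℓ * |η (τ s)|) := by
            exact mul_le_mul h1 h2 (abs_nonneg _) (by positivity)
        _ = (k * ℓ) * Real.exp (γ' * (s - v)) * |η (τ s)| := by rw [h3]; ring
  -- crude bound
  have Abound : ∀ η : ℝ → ℝ, Continuous η → (∀ s, |η s| ≤ r) → ∀ v, t₀ ≤ v →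
      |A η v| ≤ r := by
    intro η hη hηr v hv
    refine le_trans (Aest η hη hηr v hv) ?_
    have h1 : k * Real.exp (-γ' * (v - t₀)) * |η₀| ≤ k * 1 * |η₀| := by
      refine mul_le_mul_of_nonneg_right (mul_le_mul_of_nonneg_left ?_ hk0.le) (abs_nonneg _)
      rw [← Real.exp_zero]
      apply Real.exp_le_exp.2
      nlinarith
    have h2 : ∫ s in t₀..v, (k * ℓ) * Real.exp (γ' * (s - v)) * |η (τ s)| ≤
        (k * ℓ * r) * (1 / γ') := by
      have hmono : ∫ s in t₀..v, (k * ℓ) * Real.exp (γ' * (s - v)) * |η (τ s)| ≤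
          ∫ s in t₀..v, (k * ℓ * r) * Real.exp (γ' * (s - v)) := by
        refine intervalIntegral.integral_mono_on hv ?_ ?_ ?_
        · exact (((continuous_const.mul (continuous_const.mul (continuous_id.sub continuous_const)).rexp).mul
            ((hη.comp hτc).abs))).intervalIntegrable _ _
        · exact ((continuous_const.mul (continuous_const.mul (continuous_id.sub continuous_const)).rexp)).intervalIntegrable _ _
        · intro s hs
          calc (k * ℓ) * Real.exp (γ' * (s - v)) * |η (τ s)| ≤
              (k * ℓ) * Real.exp (γ' * (s - v)) * r := by
                refine mul_le_mul_of_nonneg_left (hηr _) (by positivity)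
            _ = (k * ℓ * r) * Real.exp (γ' * (s - v)) := by ring
      refine hmono.trans ?_
      rw [intervalIntegral.integral_const_mul]
      refine mul_le_mul_of_nonneg_left (integral_exp_kernel_le hγ' hv) (by positivity)
    have h3 : k * ℓ * r * (1/γ') ≤ r/2 := by
      have : k * ℓ / γ' ≤ 1/2 := hcontr
      calc k * ℓ * r * (1/γ') = (k * ℓ / γ') * r := by ring
        _ ≤ (1/2) * r := mul_le_mul_of_nonneg_right this hr.le
        _ = r/2 := by ring
    have h4 : k * 1 * |η₀| ≤ r / 2 := by
      calc k * 1 * |η₀| = k * |η₀| := by ring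
        _ ≤ r/2 := hη₀
    linarith
  -- complete space and operator
  set S : Set (BoundedContinuousFunction ℝ ℝ) := {η | ‖η‖ ≤ r} with hSdef
  have hSclosed : IsClosed S := isClosed_le continuous_norm continuous_const
  have : CompleteSpace ↥S := hSclosed.completeSpace_coe
  have : Nonempty ↥S := ⟨⟨0, by simp [hSdef]; exact hr.le⟩⟩
  have memS : ∀ η : ↥S, ∀ s, |(η : BoundedContinuousFunction ℝ ℝ) s| ≤ r := fun η s =>
    le_trans ((η : BoundedContinuousFunction ℝ ℝ).norm_coe_le_norm s) η.2
  have Acont : ∀ η : ℝ → ℝ, Continuous η → Continuous (A η) := by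
    intro η hη
    rw [continuous_iff_continuousAt]
    exact fun v => (Aderiv η hη v).continuousAt
  set Φ : ↥S → ↥S := fun η =>
    ⟨BoundedContinuousFunction.ofNormedAddCommGroup
      (fun t => A (η : BoundedContinuousFunction ℝ ℝ) (τ t))
      ((Acont _ (η : BoundedContinuousFunction ℝ ℝ).continuous).comp hτc) r
      (fun t => by
        rw [Real.norm_eq_abs]
        exact Abound _ (η : BoundedContinuousFunction ℝ ℝ).continuous (memS η) (τ t) (hτ_ge t)),
     by
      simp only [hSdef, Set.mem_setOf_eq]
      rw [BoundedContinuousFunction.norm_le hr.le]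
      intro t
      rw [BoundedContinuousFunction.coe_ofNormedAddCommGroup, Real.norm_eq_abs]
      exact Abound _ (η : BoundedContinuousFunction ℝ ℝ).continuous (memS η) (τ t) (hτ_ge t)⟩
    with hΦ
  -- contraction
  have contr : ∀ η ζ : ↥S, dist (Φ η) (Φ ζ) ≤ (1/2) * dist η ζ := by
    intro η ζ
    have hd : (0:ℝ) ≤ (1/2) * dist η ζ := by positivity
    rw [Subtype.dist_eq, BoundedContinuousFunction.dist_le hd]
    intro t
    have hcη := (η : BoundedContinuousFunction ℝ ℝ).continuous
    have hcζ := (ζ : BoundedContinuousFunction ℝ ℝ).continuous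
    have h0 : ∀ s : ℝ, |(η : BoundedContinuousFunction ℝ ℝ) s -
        (ζ : BoundedContinuousFunction ℝ ℝ) s| ≤ dist η ζ := by
      intro s
      have h := BoundedContinuousFunction.dist_coe_le_dist
        (f := (η : BoundedContinuousFunction ℝ ℝ)) (g := (ζ : BoundedContinuousFunction ℝ ℝ)) s
      rw [Real.dist_eq] at h
      rw [Subtype.dist_eq]
      exact h
    simp only [hΦ, BoundedContinuousFunction.coe_ofNormedAddCommGroup, Real.dist_eq]
    set v := τ t with hv
    have hvt₀ : t₀ ≤ v := hτ_ge t
    have hintη : IntervalIntegrable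
        (fun s => Real.exp (Q v - Q s) * G s ((η : BoundedContinuousFunction ℝ ℝ) (τ s))) volume t₀ v :=
      (((continuous_const.sub hQc).rexp).mul
        (hGc.comp (continuous_id.prodMk (hcη.comp hτc)))).intervalIntegrable _ _
    have hintζ : IntervalIntegrable
        (fun s => Real.exp (Q v - Q s) * G s ((ζ : BoundedContinuousFunction ℝ ℝ) (τ s))) volume t₀ v :=
      (((continuous_const.sub hQc).rexp).mul
        (hGc.comp (continuous_id.prodMk (hcζ.comp hτc)))).intervalIntegrable _ _
    have hsub : A (η : BoundedContinuousFunction ℝ ℝ) v - A (ζ : BoundedContinuousFunction ℝ ℝ) v =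
        ∫ s in t₀..v, Real.exp (Q v - Q s) *
          (G s ((η : BoundedContinuousFunction ℝ ℝ) (τ s)) - G s ((ζ : BoundedContinuousFunction ℝ ℝ) (τ s))) := by
      rw [Akernel _ hcη v, Akernel _ hcζ v]
      have h4 := intervalIntegral.integral_sub hintη hintζ
      have h5 : (fun s => Real.exp (Q v - Q s) * G s ((η : BoundedContinuousFunction ℝ ℝ) (τ s)) -
          Real.exp (Q v - Q s) * G s ((ζ : BoundedContinuousFunction ℝ ℝ) (τ s))) =
          (fun s => Real.exp (Q v - Q s) *
          (G s ((η : BoundedContinuousFunction ℝ ℝ) (τ s)) -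
           G s ((ζ : BoundedContinuousFunction ℝ ℝ) (τ s)))) := by
        funext s; ring
      rw [h5] at h4
      linarith [h4]
    rw [hsub]
    have hint3 : IntervalIntegrable (fun s => (k * ℓ * dist η ζ) * Real.exp (γ' * (s - v))) volume t₀ v :=
      ((continuous_const.mul (continuous_const.mul (continuous_id.sub continuous_const)).rexp)).intervalIntegrable _ _
    refine le_trans (intervalIntegral.abs_integral_le_integral_abs hvt₀) ?_
    have step : ∫ s in t₀..v, |Real.exp (Q v - Q s) *
          (G s ((η : BoundedContinuousFunction ℝ ℝ) (τ s)) - G s ((ζ : BoundedContinuousFunction ℝ ℝ) (τ s)))| ≤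
        ∫ s in t₀..v, (k * ℓ * dist η ζ) * Real.exp (γ' * (s - v)) := by
      refine intervalIntegral.integral_mono_on hvt₀ ((hintη.sub hintζ).abs.congr ?_) hint3 ?_
      · intro s _
        simp only [mul_sub]
      · intro s hs
        rw [abs_mul, abs_of_pos (Real.exp_pos _)]
        have h1 : Real.exp (Q v - Q s) ≤ k * Real.exp (-γ' * (v - s)) := dich s v hs.2
        have h2 : |G s ((η : BoundedContinuousFunction ℝ ℝ) (τ s)) -
            G s ((ζ : BoundedContinuousFunction ℝ ℝ) (τ s))| ≤ ℓ * dist η ζ := by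
          refine le_trans (hLip s _ _ (memS η _) (memS ζ _)) ?_
          exact mul_le_mul_of_nonneg_left (h0 _) hℓ.le
        have h3 : -γ' * (v - s) = γ' * (s - v) := by ring
        calc Real.exp (Q v - Q s) * |G s ((η : BoundedContinuousFunction ℝ ℝ) (τ s)) -
              G s ((ζ : BoundedContinuousFunction ℝ ℝ) (τ s))|
            ≤ (k * Real.exp (-γ' * (v - s))) * (ℓ * dist η ζ) :=
              mul_le_mul h1 h2 (abs_nonneg _) (by positivity)
          _ = (k * ℓ * dist η ζ) * Real.exp (γ' * (s - v)) := by rw [h3]; ring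
    refine le_trans step ?_
    rw [intervalIntegral.integral_const_mul]
    calc (k * ℓ * dist η ζ) * ∫ s in t₀..v, Real.exp (γ' * (s - v))
        ≤ (k * ℓ * dist η ζ) * (1/γ') := by
          refine mul_le_mul_of_nonneg_left (integral_exp_kernel_le hγ' hvt₀) (by positivity)
      _ = (k * ℓ / γ') * dist η ζ := by ring
      _ ≤ (1/2) * dist η ζ := mul_le_mul_of_nonneg_right hcontr dist_nonneg
  have hΦcontr : ContractingWith (1/2 : NNReal) Φ := by
    constructor
    · rw [← NNReal.coe_lt_one]; norm_num
    · apply LipschitzWith.of_dist_le_mul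
      intro η ζ
      calc dist (Φ η) (Φ ζ) ≤ (1/2 : ℝ) * dist η ζ := contr η ζ
        _ = ((1/2 : NNReal) : ℝ) * dist η ζ := by norm_num
  set ηstar := ContractingWith.fixedPoint Φ hΦcontr with hηstar
  have hfix : Φ ηstar = ηstar := hΦcontr.fixedPoint_isFixedPt
  set u : ℝ → ℝ := fun t => (ηstar : BoundedContinuousFunction ℝ ℝ) t with hu
  have huc : Continuous u := (ηstar : BoundedContinuousFunction ℝ ℝ).continuous
  have hur : ∀ s, |u s| ≤ r := memS ηstar
  have hfp : ∀ t, A u (τ t) = u t := by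
    intro t
    have h1 : ((Φ ηstar : ↥S) : BoundedContinuousFunction ℝ ℝ) t =
        (ηstar : BoundedContinuousFunction ℝ ℝ) t := by rw [hfix]
    simpa [hΦ, BoundedContinuousFunction.coe_ofNormedAddCommGroup] using h1
  -- the solution on all of ℝ
  set η : ℝ → ℝ := A u with hηdef
  have hηu : ∀ t, t₀ ≤ t → η t = u t := by
    intro t ht
    have := hfp t
    rw [hτ_eq t ht] at this
    exact this
  have hηc : Continuous η := Acont u huc
  have hηt₀ : η t₀ = η₀ := by
    rw [hηdef, hA]
    simp only [intervalIntegral.integral_same, add_zero]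
    rw [← mul_assoc, exp_Q_self Q t₀, one_mul]
  have hηderiv : ∀ t, t₀ ≤ t → HasDerivAt η (q t * η t + G t (η t)) t := by
    intro t ht
    have hd := Aderiv u huc t
    rw [hτ_eq t ht] at hd
    rw [← hηu t ht] at hd
    exact hd
  -- the integral inequality
  have key : ∀ t, t₀ ≤ t → |η t| ≤ k * Real.exp (-γ' * (t - t₀)) * |η₀| +
      ∫ s in t₀..t, k * ℓ * Real.exp (γ' * (s - t)) * |η s| := by
    intro t ht
    have h1 := Aest u huc hur t ht
    have h2 : ∫ s in t₀..t, k * ℓ * Real.exp (γ' * (s - t)) * |u (τ s)| =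
        ∫ s in t₀..t, k * ℓ * Real.exp (γ' * (s - t)) * |η s| := by
      refine intervalIntegral.integral_congr (fun s hs => ?_)
      rw [Set.uIcc_of_le ht] at hs
      rw [hτ_eq s hs.1, ← hηu s hs.1]
    rw [h2] at h1
    exact h1
  -- Gronwall argument
  set w : ℝ → ℝ := fun s => Real.exp (γ' * (s - t₀)) * |η s| with hw
  have hwc : Continuous w :=
    ((continuous_const.mul (continuous_id.sub continuous_const)).rexp).mul hηc.abs
  have hwnn : ∀ s, 0 ≤ w s := fun s => mul_nonneg (Real.exp_pos _).le (abs_nonneg _)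
  have hwle : ∀ t, t₀ ≤ t → w t ≤ k * |η₀| + (k * ℓ) * ∫ s in t₀..t, w s := by
    intro t ht
    have h1 := key t ht
    have hE : (0:ℝ) < Real.exp (γ' * (t - t₀)) := Real.exp_pos _
    have h2 : Real.exp (γ' * (t - t₀)) * (k * Real.exp (-γ' * (t - t₀)) * |η₀|) = k * |η₀| := by
      have e1 : Real.exp (γ' * (t - t₀)) * Real.exp (-γ' * (t - t₀)) = 1 := by
        rw [← Real.exp_add, show γ' * (t - t₀) + -γ' * (t - t₀) = 0 by ring, Real.exp_zero]
      calc Real.exp (γ' * (t - t₀)) * (k * Real.exp (-γ' * (t - t₀)) * |η₀|)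
          = (Real.exp (γ' * (t - t₀)) * Real.exp (-γ' * (t - t₀))) * (k * |η₀|) := by ring
        _ = k * |η₀| := by rw [e1, one_mul]
    have h3 : Real.exp (γ' * (t - t₀)) * ∫ s in t₀..t, k * ℓ * Real.exp (γ' * (s - t)) * |η s| =
        (k * ℓ) * ∫ s in t₀..t, w s := by
      rw [← intervalIntegral.integral_const_mul, ← intervalIntegral.integral_const_mul]
      refine intervalIntegral.integral_congr (fun s _ => ?_)
      rw [hw]
      have e2 : γ' * (s - t₀) = γ' * (t - t₀) + γ' * (s - t) := by ring
      simp only []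
      rw [e2, Real.exp_add]
      ring
    calc w t = Real.exp (γ' * (t - t₀)) * |η t| := rfl
      _ ≤ Real.exp (γ' * (t - t₀)) * (k * Real.exp (-γ' * (t - t₀)) * |η₀| +
          ∫ s in t₀..t, k * ℓ * Real.exp (γ' * (s - t)) * |η s|) :=
          mul_le_mul_of_nonneg_left h1 hE.le
      _ = k * |η₀| + (k * ℓ) * ∫ s in t₀..t, w s := by rw [mul_add, h2, h3]
  have hVd : ∀ x : ℝ, HasDerivAt (fun y => ∫ s in t₀..y, w s) (w x) x := fun x =>
    intervalIntegral.integral_hasDerivAt_right (hwc.intervalIntegrable _ _)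
      (hwc.stronglyMeasurable.stronglyMeasurableAtFilter) hwc.continuousAt
  have hVnn : ∀ x, t₀ ≤ x → 0 ≤ ∫ s in t₀..x, w s := fun x hx =>
    intervalIntegral.integral_nonneg hx (fun s _ => hwnn s)
  have hK0 : (0:ℝ) < k * ℓ := by positivity
  have final : ∀ T, t₀ ≤ T → |η T| ≤ k * |η₀| * Real.exp (-(γ' - k * ℓ) * (T - t₀)) := by
    intro T hT
    have gr := norm_le_gronwallBound_of_norm_deriv_right_le (f := fun y => ∫ s in t₀..y, w s)
      (f' := w) (δ := 0) (K := k * ℓ) (ε := k * |η₀|) (a := t₀) (b := T)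
      (fun x _ => (hVd x).continuousAt.continuousWithinAt)
      (fun x _ => (hVd x).hasDerivWithinAt)
      (by simp)
      (fun x hx => by
        rw [Real.norm_eq_abs, abs_of_nonneg (hwnn x), Real.norm_eq_abs,
          abs_of_nonneg (hVnn x hx.1)]
        linarith [hwle x hx.1])
      T ⟨hT, le_rfl⟩
    rw [Real.norm_eq_abs, abs_of_nonneg (hVnn T hT),
      gronwallBound_of_K_ne_0 hK0.ne'] at gr
    have h5 : w T ≤ k * |η₀| * Real.exp ((k * ℓ) * (T - t₀)) := by
      have := hwle T hT
      have h6 : (k * ℓ) * (∫ s in t₀..T, w s) ≤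
          (k * ℓ) * (0 * Real.exp (k * ℓ * (T - t₀)) +
            k * |η₀| / (k * ℓ) * (Real.exp (k * ℓ * (T - t₀)) - 1)) :=
        mul_le_mul_of_nonneg_left gr hK0.le
      have h7 : (k * ℓ) * (0 * Real.exp (k * ℓ * (T - t₀)) +
          k * |η₀| / (k * ℓ) * (Real.exp (k * ℓ * (T - t₀)) - 1)) =
          k * |η₀| * (Real.exp (k * ℓ * (T - t₀)) - 1) := by
        field_simp
        ring
      rw [h7] at h6
      nlinarith [this, h6]
    have h6 : |η T| = Real.exp (-(γ' * (T - t₀))) * w T := by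
      rw [hw]
      simp only []
      rw [← mul_assoc, ← Real.exp_add,
        show -(γ' * (T - t₀)) + γ' * (T - t₀) = 0 by ring, Real.exp_zero, one_mul]
    rw [h6]
    have e3 : Real.exp (-(γ' * (T - t₀))) * Real.exp ((k * ℓ) * (T - t₀)) =
        Real.exp (-(γ' - k * ℓ) * (T - t₀)) := by
      rw [← Real.exp_add]; congr 1; ring
    calc Real.exp (-(γ' * (T - t₀))) * w T
        ≤ Real.exp (-(γ' * (T - t₀))) * (k * |η₀| * Real.exp ((k * ℓ) * (T - t₀))) :=
          mul_le_mul_of_nonneg_left h5 (Real.exp_pos _).le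
      _ = (k * |η₀|) * (Real.exp (-(γ' * (T - t₀))) * Real.exp ((k * ℓ) * (T - t₀))) := by ring
      _ = k * |η₀| * Real.exp (-(γ' - k * ℓ) * (T - t₀)) := by rw [e3]
  exact ⟨η, hηt₀, hηderiv, final⟩


lemma abs_sub_of_mem_uIcc {u v c w m : ℝ} (h : c ∈ Set.uIcc u v)
    (h1 : |u - w| ≤ m) (h2 : |v - w| ≤ m) : |c - w| ≤ m := by
  rcases Set.mem_uIcc.mp h with ⟨ha, hb⟩ | ⟨ha, hb⟩ <;>
    rw [abs_le] at h1 h2 ⊢ <;> constructor <;> linarith [h1.1, h1.2, h2.1, h2.2]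

lemma norm1_bounds (dh dhx : ℝ → ℝ → ℝ) (ρ C C' : ℝ)
    (hC : ∀ t x : ℝ, x ∈ Set.Icc (-ρ) ρ → |dh t x| ≤ C)
    (hC' : ∀ t x : ℝ, x ∈ Set.Icc (-ρ) ρ → |dhx t x| ≤ C') :
    ∀ t x : ℝ, x ∈ Set.Icc (-ρ) ρ →
      |dh t x| ≤ norm1 dh dhx ρ ∧ |dhx t x| ≤ norm1 dh dhx ρ := by
  have hbdd1 : BddAbove (Set.range fun p : ℝ × (Set.Icc (-ρ) ρ) => |dh p.1 (p.2 : ℝ)|) := by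
    refine ⟨C, ?_⟩
    rintro y ⟨p, rfl⟩
    exact hC p.1 p.2 p.2.2
  have hbdd2 : BddAbove (Set.range fun p : ℝ × (Set.Icc (-ρ) ρ) => |dhx p.1 (p.2 : ℝ)|) := by
    refine ⟨C', ?_⟩
    rintro y ⟨p, rfl⟩
    exact hC' p.1 p.2 p.2.2
  have h1nn : 0 ≤ ⨆ p : ℝ × (Set.Icc (-ρ) ρ), |dh p.1 (p.2 : ℝ)| :=
    Real.iSup_nonneg (fun p => abs_nonneg _)
  have h2nn : 0 ≤ ⨆ p : ℝ × (Set.Icc (-ρ) ρ), |dhx p.1 (p.2 : ℝ)| :=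
    Real.iSup_nonneg (fun p => abs_nonneg _)
  intro t x hx
  constructor
  · have := le_ciSup hbdd1 (⟨t, ⟨x, hx⟩⟩ : ℝ × (Set.Icc (-ρ) ρ))
    simp only at this
    rw [norm1]
    linarith
  · have := le_ciSup hbdd2 (⟨t, ⟨x, hx⟩⟩ : ℝ × (Set.Icc (-ρ) ρ))
    simp only at this
    rw [norm1]
    linarith


/-- Time reversal of a vector field. -/
def Rev (f : ℝ → ℝ → ℝ) : ℝ → ℝ → ℝ := fun t x => -f (-t) x

lemma rev_cont {f : ℝ → ℝ → ℝ} (hf : Continuous fun p : ℝ × ℝ => f p.1 p.2) :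
    Continuous fun p : ℝ × ℝ => Rev f p.1 p.2 :=
  (hf.comp ((continuous_fst.neg).prodMk continuous_snd)).neg

lemma admissible_rev {f : ℝ → ℝ → ℝ} (hf : Admissible f) : Admissible (Rev f) := by
  refine ⟨rev_cont hf.1, fun J hJ => ?_⟩
  obtain ⟨⟨C, hC⟩, hu⟩ := hf.2 J hJ
  refine ⟨⟨C, fun t x hxJ => ?_⟩, ?_⟩
  · rw [Rev, abs_neg]
    exact hC (-t) x hxJ
  · rw [Metric.uniformContinuousOn_iff] at hu ⊢
    intro ε hε
    obtain ⟨δ, hδ0, hδ⟩ := hu ε hε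
    refine ⟨δ, hδ0, ?_⟩
    rintro ⟨t, x⟩ hx ⟨s, y⟩ hy hd
    have hx' : ((-t, x) : ℝ × ℝ) ∈ Set.univ ×ˢ J := ⟨trivial, hx.2⟩
    have hy' : ((-s, y) : ℝ × ℝ) ∈ Set.univ ×ˢ J := ⟨trivial, hy.2⟩
    have hd' : dist ((-t, x) : ℝ × ℝ) ((-s, y) : ℝ × ℝ) < δ := by
      rw [Prod.dist_eq] at hd ⊢
      rw [Real.dist_eq, Real.dist_eq] at hd ⊢
      have : |(-t) - (-s)| = |t - s| := by rw [show (-t) - (-s) = -(t - s) by ring, abs_neg]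
      rw [this]
      exact hd
    have := hδ _ hx' _ hy' hd'
    simp only [Rev, Real.dist_eq] at this ⊢
    have heq : |-f (-t) x - -f (-s) y| = |f (-t) x - f (-s) y| := by
      rw [show -f (-t) x - -f (-s) y = -(f (-t) x - f (-s) y) by ring, abs_neg]
    rw [heq]
    exact this

lemma c1admissible_rev {f fx : ℝ → ℝ → ℝ} (hf : C1Admissible f fx) :
    C1Admissible (Rev f) (Rev fx) :=
  ⟨admissible_rev hf.1, fun t x => ((hf.2.1 (-t) x)).neg, admissible_rev hf.2.2⟩

lemma hasDerivAt_rev {b : ℝ → ℝ} {h : ℝ → ℝ → ℝ}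
    (hb : ∀ t, HasDerivAt b (h t (b t)) t) :
    ∀ t, HasDerivAt (fun s => b (-s)) (Rev h t (b (-t))) t := by
  intro t
  have h1 : HasDerivAt (fun s : ℝ => -s) (-1) t := (hasDerivAt_id t).neg
  have h2 := (hb (-t)).comp t h1
  have : h (-t) (b (-t)) * (-1) = Rev h t (b (-t)) := by rw [Rev]; ring
  rw [this] at h2
  exact h2

lemma rep_to_attr {hx : ℝ → ℝ → ℝ} {b : ℝ → ℝ} {k γ : ℝ}
    (h : IsHypRepPair hx b k γ) :
    IsHypAttrPair (Rev hx) (fun t => b (-t)) k γ := by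
  obtain ⟨hk, hγ, hd⟩ := h
  refine ⟨hk, hγ, fun s t hst => ?_⟩
  have hint : (∫ r in s..t, Rev hx r (b (-r))) = ∫ u in (-s)..(-t), hx u (b u) := by
    have h1 : (∫ r in s..t, Rev hx r (b (-r))) = -∫ r in s..t, hx (-r) (b (-r)) := by
      rw [← intervalIntegral.integral_neg]
      rfl
    rw [h1, intervalIntegral.integral_comp_neg (fun u => hx u (b u)),
      intervalIntegral.integral_symm, neg_neg]
  rw [hint]
  have := hd (-s) (-t) (by linarith)
  refine this.trans ?_
  refine mul_le_mul_of_nonneg_left (le_of_eq ?_) (by linarith : (0:ℝ) ≤ k)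
  congr 1
  ring

lemma attr_to_rep {gx : ℝ → ℝ → ℝ} {bg : ℝ → ℝ} {k γ : ℝ}
    (h : IsHypAttrPair (Rev gx) bg k γ) :
    IsHypRepPair gx (fun t => bg (-t)) k γ := by
  obtain ⟨hk, hγ, hd⟩ := h
  refine ⟨hk, hγ, fun s t hts => ?_⟩
  have hint : (∫ r in s..t, gx r (bg (-r))) = ∫ u in (-s)..(-t), Rev gx u (bg u) := by
    have h1 : (∫ u in (-s)..(-t), Rev gx u (bg u)) = -∫ u in (-s)..(-t), gx (-u) (bg u) := by
      rw [← intervalIntegral.integral_neg]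
      rfl
    have h2 : (∫ r in s..t, gx r (bg (-r))) =
        ∫ r in s..t, (fun u => gx (-u) (bg u)) (-r) := by
      refine intervalIntegral.integral_congr (fun r _ => ?_)
      simp
    rw [h2, intervalIntegral.integral_comp_neg (fun u => gx (-u) (bg u)), h1]
    exact intervalIntegral.integral_symm _ _
  rw [hint]
  have := hd (-s) (-t) (by linarith)
  refine this.trans ?_
  refine mul_le_mul_of_nonneg_left (le_of_eq ?_) (by linarith : (0:ℝ) ≤ k)
  congr 1
  ring

lemma isup_neg (f : ℝ × ℝ → ℝ) (ρ : ℝ) :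
    (⨆ p : ℝ × (Set.Icc (-ρ) ρ), f (-p.1, (p.2 : ℝ))) =
    ⨆ p : ℝ × (Set.Icc (-ρ) ρ), f (p.1, (p.2 : ℝ)) := by
  set e : ℝ × (Set.Icc (-ρ) ρ) ≃ ℝ × (Set.Icc (-ρ) ρ) :=
    (Equiv.neg ℝ).prodCongr (Equiv.refl _) with he
  have hsurj : Function.Surjective fun p : ℝ × (Set.Icc (-ρ) ρ) => e p := e.surjective
  have hr : Set.range (fun p : ℝ × (Set.Icc (-ρ) ρ) => f (-p.1, (p.2 : ℝ))) =
      Set.range (fun p : ℝ × (Set.Icc (-ρ) ρ) => f (p.1, (p.2 : ℝ))) := by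
    have : (fun p : ℝ × (Set.Icc (-ρ) ρ) => f (-p.1, (p.2 : ℝ))) =
        (fun p : ℝ × (Set.Icc (-ρ) ρ) => f (p.1, (p.2 : ℝ))) ∘ (fun p => e p) := rfl
    rw [this, Set.range_comp, hsurj.range_eq, Set.image_univ]
  rw [iSup, iSup, hr]

lemma norm1_rev (h g hx gx : ℝ → ℝ → ℝ) (ρ : ℝ) :
    norm1 (fun t x => Rev h t x - Rev g t x) (fun t x => Rev hx t x - Rev gx t x) ρ =
    norm1 (fun t x => h t x - g t x) (fun t x => hx t x - gx t x) ρ := by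
  rw [norm1, norm1]
  congr 1
  · have h1 : ∀ p : ℝ × (Set.Icc (-ρ) ρ), |Rev h p.1 (p.2 : ℝ) - Rev g p.1 (p.2 : ℝ)| =
        (fun z : ℝ × ℝ => |h z.1 z.2 - g z.1 z.2|) (-p.1, (p.2 : ℝ)) := by
      intro p
      simp only [Rev]
      rw [show -h (-p.1) (p.2 : ℝ) - -g (-p.1) (p.2 : ℝ) =
        -(h (-p.1) (p.2 : ℝ) - g (-p.1) (p.2 : ℝ)) by ring, abs_neg]
    simp only [h1]
    exact isup_neg (fun z => |h z.1 z.2 - g z.1 z.2|) ρ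
  · have h1 : ∀ p : ℝ × (Set.Icc (-ρ) ρ), |Rev hx p.1 (p.2 : ℝ) - Rev gx p.1 (p.2 : ℝ)| =
        (fun z : ℝ × ℝ => |hx z.1 z.2 - gx z.1 z.2|) (-p.1, (p.2 : ℝ)) := by
      intro p
      simp only [Rev]
      rw [show -hx (-p.1) (p.2 : ℝ) - -gx (-p.1) (p.2 : ℝ) =
        -(hx (-p.1) (p.2 : ℝ) - gx (-p.1) (p.2 : ℝ)) by ring, abs_neg]
    simp only [h1]
    exact isup_neg (fun z => |hx z.1 z.2 - gx z.1 z.2|) ρ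


set_option maxHeartbeats 1000000 in
theorem core (h hx : ℝ → ℝ → ℝ) (hadm : C1Admissible h hx)
    (b : ℝ → ℝ) (hsol : ∀ t : ℝ, HasDerivAt b (h t (b t)) t)
    (k₀ γ₀ ρ M : ℝ) (hM : ∀ t, |b t| ≤ M) (hMρ : M < ρ)
    (hyp : IsHypAttrPair hx b k₀ γ₀)
    (γ : ℝ) (hγ0 : 0 < γ) (hγγ₀ : γ < γ₀) (ε : ℝ) (hε : 0 < ε) :
    ∃ δ > 0, ∃ ρε > 0, ∀ g gx : ℝ → ℝ → ℝ, C1Admissible g gx →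
      norm1 (fun t x => h t x - g t x) (fun t x => hx t x - gx t x) ρ < δ →
      ∃ bg : ℝ → ℝ, IsBoundedSol g bg ∧ IsHypAttrPair gx bg k₀ γ ∧
        (∃ ε' < ε, ∀ t : ℝ, |b t - bg t| ≤ ε') ∧
        ∀ t₀ x₀ : ℝ, |bg t₀ - x₀| ≤ ρε →
          ∃ ξ : ℝ → ℝ, ξ t₀ = x₀ ∧ IsSolOn g ξ (Set.Ici t₀) ∧
            ∀ t ≥ t₀, |bg t - ξ t| ≤ k₀ * Real.exp (-γ * (t - t₀)) * |bg t₀ - x₀| := by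
  obtain ⟨hk₀, hγ₀0, hdich⟩ := hyp
  have hk₀0 : (0:ℝ) < k₀ := lt_of_lt_of_le one_pos hk₀
  have hbc : Continuous b := by
    rw [continuous_iff_continuousAt]; exact fun t => (hsol t).continuousAt
  have hM0 : 0 ≤ M := le_trans (abs_nonneg _) (hM 0)
  have hρ0 : 0 < ρ := lt_of_le_of_lt hM0 hMρ
  set γ' : ℝ := (γ + γ₀)/2 with hγ'def
  have hγ'0 : 0 < γ' := by positivity
  have hγ'lt : γ' < γ₀ := by rw [hγ'def]; linarith
  have hγ'gt : γ < γ' := by rw [hγ'def]; linarith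
  have hγ'half : γ₀/2 ≤ γ' := by rw [hγ'def]; linarith
  set θ : ℝ := min (γ₀ - γ) γ₀ / (12 * k₀) with hθdef
  have hmin0 : 0 < min (γ₀ - γ) γ₀ := lt_min (by linarith) hγ₀0
  have hθ0 : 0 < θ := by rw [hθdef]; positivity
  have hk₀θ : k₀ * θ = min (γ₀ - γ) γ₀ / 12 := by
    rw [hθdef]; field_simp
  have hk₀θ1 : k₀ * θ ≤ (γ₀ - γ)/12 := by
    rw [hk₀θ]; exact div_le_div_of_nonneg_right (min_le_left _ _) (by norm_num)
  have hk₀θ2 : k₀ * θ ≤ γ₀/12 := by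
    rw [hk₀θ]; exact div_le_div_of_nonneg_right (min_le_right _ _) (by norm_num)
  have hθk : θ ≤ k₀ * θ := le_mul_of_one_le_left hθ0.le hk₀
  -- modulus of continuity of hx
  have hucx := (hadm.2.2.2 (Set.Icc (-ρ) ρ) isCompact_Icc).2
  rw [Metric.uniformContinuousOn_iff] at hucx
  obtain ⟨d, hd0, hdp⟩ := hucx θ hθ0
  have hmod : ∀ t u v : ℝ, u ∈ Set.Icc (-ρ) ρ → v ∈ Set.Icc (-ρ) ρ → |u - v| < d →
      |hx t u - hx t v| ≤ θ := by
    intro t u v hu hv huv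
    have h1 : ((t, u) : ℝ × ℝ) ∈ Set.univ ×ˢ Set.Icc (-ρ) ρ := by
      constructor
      · trivial
      · exact hu
    have h2 : ((t, v) : ℝ × ℝ) ∈ Set.univ ×ˢ Set.Icc (-ρ) ρ := by
      constructor
      · trivial
      · exact hv
    have hdist : dist ((t, u) : ℝ × ℝ) ((t, v) : ℝ × ℝ) < d := by
      rw [Prod.dist_eq, Real.dist_eq, Real.dist_eq]
      simp only [sub_self, abs_zero]
      rw [max_eq_right (abs_nonneg _)]
      exact huv
    have := hdp _ h1 _ h2 hdist
    rw [Real.dist_eq] at this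
    exact this.le
  set e : ℝ := min (ε/2) (min ((ρ - M)/2) (d/2)) with hedef
  have he0 : 0 < e := by
    rw [hedef]
    refine lt_min (by positivity) (lt_min (by linarith) (by positivity))
  have heε : e ≤ ε/2 := min_le_left _ _
  have heρM : e ≤ (ρ - M)/2 := le_trans (min_le_right _ _) (min_le_left _ _)
  have hed : e ≤ d/2 := le_trans (min_le_right _ _) (min_le_right _ _)
  have hMe : M + e ≤ ρ := by linarith
  set δ : ℝ := min θ (γ₀ * e / (2 * k₀)) with hδdef
  have hδ0 : 0 < δ := by
    rw [hδdef]; exact lt_min hθ0 (by positivity)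
  have hδθ : δ ≤ θ := min_le_left _ _
  have hδe : k₀ * δ ≤ γ₀ * e / 2 := by
    have h1 : δ ≤ γ₀ * e / (2 * k₀) := min_le_right _ _
    calc k₀ * δ ≤ k₀ * (γ₀ * e / (2 * k₀)) := mul_le_mul_of_nonneg_left h1 hk₀0.le
      _ = γ₀ * e / 2 := by field_simp
  set ρε : ℝ := min d (ρ - M - e) / (4 * k₀) with hρεdef
  have hmind0 : 0 < min d (ρ - M - e) := lt_min hd0 (by linarith)
  have hρε0 : 0 < ρε := by rw [hρεdef]; positivity
  refine ⟨δ, hδ0, ρε, hρε0, ?_⟩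
  intro g gx hg hng
  -- sup-norm extraction
  obtain ⟨Ch, hCh⟩ := (hadm.1.2 (Set.Icc (-ρ) ρ) isCompact_Icc).1
  obtain ⟨Cg, hCg⟩ := (hg.1.2 (Set.Icc (-ρ) ρ) isCompact_Icc).1
  obtain ⟨Chx, hChx⟩ := (hadm.2.2.2 (Set.Icc (-ρ) ρ) isCompact_Icc).1
  obtain ⟨Cgx, hCgx⟩ := (hg.2.2.2 (Set.Icc (-ρ) ρ) isCompact_Icc).1
  have hnb := norm1_bounds (fun t x => h t x - g t x) (fun t x => hx t x - gx t x) ρ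
    (Ch + Cg) (Chx + Cgx)
    (fun t x hxm => le_trans (abs_sub _ _) (add_le_add (hCh t x hxm) (hCg t x hxm)))
    (fun t x hxm => le_trans (abs_sub _ _) (add_le_add (hChx t x hxm) (hCgx t x hxm)))
  have hgap1 : ∀ t x : ℝ, x ∈ Set.Icc (-ρ) ρ → |h t x - g t x| ≤ δ :=
    fun t x hxm => le_of_lt (lt_of_le_of_lt (hnb t x hxm).1 hng)
  have hgap2 : ∀ t x : ℝ, x ∈ Set.Icc (-ρ) ρ → |hx t x - gx t x| ≤ δ :=
    fun t x hxm => le_of_lt (lt_of_le_of_lt (hnb t x hxm).2 hng)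
  -- membership helper
  have hmem : ∀ x : ℝ, |x| ≤ ρ → x ∈ Set.Icc (-ρ) ρ := by
    intro x hxm
    rw [Set.mem_Icc]
    exact abs_le.mp hxm
  have hbmem : ∀ t, b t ∈ Set.Icc (-ρ) ρ := fun t => hmem _ (le_trans (hM t) hMρ.le)
  -- the linear part along b
  set p : ℝ → ℝ := fun r => hx r (b r) with hpdef
  have hpc : Continuous p := hadm.2.2.1.comp (continuous_id.prodMk hbc)
  set P : ℝ → ℝ := fun t => ∫ r in (0:ℝ)..t, p r with hPdef
  have hPd : ∀ t, HasDerivAt P (p t) t := fun t =>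
    intervalIntegral.integral_hasDerivAt_right (hpc.intervalIntegrable _ _)
      (hpc.stronglyMeasurable.stronglyMeasurableAtFilter) hpc.continuousAt
  have hPsub : ∀ s t : ℝ, P t - P s = ∫ r in s..t, p r := fun s t =>
    intervalIntegral.integral_interval_sub_left (hpc.intervalIntegrable _ _)
      (hpc.intervalIntegrable _ _)
  have dichP : ∀ s t : ℝ, s ≤ t → Real.exp (P t - P s) ≤ k₀ * Real.exp (-γ₀ * (t - s)) := by
    intro s t hst
    rw [hPsub]
    exact hdich s t hst
  -- the nonlinearity
  set F : ℝ → ℝ → ℝ := fun s y => g s (b s + y) - h s (b s) - p s * y with hFdef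
  have hFc : Continuous fun z : ℝ × ℝ => F z.1 z.2 := by
    have c1 : Continuous fun z : ℝ × ℝ => g z.1 (b z.1 + z.2) :=
      hg.1.1.comp (continuous_fst.prodMk ((hbc.comp continuous_fst).add continuous_snd))
    have c2 : Continuous fun z : ℝ × ℝ => h z.1 (b z.1) :=
      hadm.1.1.comp (continuous_fst.prodMk (hbc.comp continuous_fst))
    have c3 : Continuous fun z : ℝ × ℝ => p z.1 * z.2 :=
      (hpc.comp continuous_fst).mul continuous_snd
    exact (c1.sub c2).sub c3
  have hmemb : ∀ (s y : ℝ), |y| ≤ e → (b s + y) ∈ Set.Icc (-ρ) ρ := by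
    intro s y hy
    refine hmem _ ?_
    calc |b s + y| ≤ |b s| + |y| := abs_add_le _ _
      _ ≤ M + e := add_le_add (hM s) hy
      _ ≤ ρ := hMe
  have hFbound : ∀ (s y : ℝ), |y| ≤ e → |F s y| ≤ δ + θ * e := by
    intro s y hy
    obtain ⟨c, hc, hceq⟩ := mvt_aux (fun x => h s x) (fun x => hx s x) (hadm.2.1 s) (b s) (b s + y)
    have hveq : b s + y - b s = y := by ring
    rw [hveq] at hceq
    have hcd : |c - b s| ≤ |y| := by
      refine abs_sub_of_mem_uIcc hc (by simp) ?_
      rw [hveq]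
    have hcmem : c ∈ Set.Icc (-ρ) ρ := by
      refine hmem _ ?_
      calc |c| = |b s + (c - b s)| := by ring_nf
        _ ≤ |b s| + |c - b s| := abs_add_le _ _
        _ ≤ M + e := add_le_add (hM s) (hcd.trans hy)
        _ ≤ ρ := hMe
    have h5 : h s (b s + y) - h s (b s) = hx s c * y := hceq
    have hFeq : F s y = (g s (b s + y) - h s (b s + y)) + (hx s c - hx s (b s)) * y := by
      simp only [hFdef, hpdef]
      rw [sub_mul, ← h5]
      ring
    rw [hFeq]
    refine le_trans (abs_add_le _ _) (add_le_add ?_ ?_)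
    · rw [abs_sub_comm]
      exact hgap1 s _ (hmemb s y hy)
    · rw [abs_mul]
      refine mul_le_mul ?_ hy (abs_nonneg _) hθ0.le
      refine hmod s c (b s) hcmem (hbmem s) ?_
      calc |c - b s| ≤ |y| := hcd
        _ ≤ e := hy
        _ < d := by linarith
  have hFlip : ∀ (s y₁ y₂ : ℝ), |y₁| ≤ e → |y₂| ≤ e →
      |F s y₁ - F s y₂| ≤ (δ + θ) * |y₁ - y₂| := by
    intro s y₁ y₂ hy₁ hy₂
    obtain ⟨c, hc, hceq⟩ := mvt_aux (fun x => g s x) (fun x => gx s x) (hg.2.1 s)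
      (b s + y₂) (b s + y₁)
    have hveq : b s + y₁ - (b s + y₂) = y₁ - y₂ := by ring
    rw [hveq] at hceq
    have hcd : |c - b s| ≤ e := by
      refine abs_sub_of_mem_uIcc hc ?_ ?_
      · have : b s + y₂ - b s = y₂ := by ring
        rw [this]; exact hy₂
      · have : b s + y₁ - b s = y₁ := by ring
        rw [this]; exact hy₁
    have hcmem : c ∈ Set.Icc (-ρ) ρ := by
      refine hmem _ ?_
      calc |c| = |b s + (c - b s)| := by ring_nf
        _ ≤ |b s| + |c - b s| := abs_add_le _ _
        _ ≤ M + e := add_le_add (hM s) hcd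
        _ ≤ ρ := hMe
    have h5 : g s (b s + y₁) - g s (b s + y₂) = gx s c * (y₁ - y₂) := hceq
    have hFeq : F s y₁ - F s y₂ = (gx s c - p s) * (y₁ - y₂) := by
      simp only [hFdef, hpdef]
      rw [sub_mul, ← h5]
      ring
    rw [hFeq, abs_mul]
    refine mul_le_mul_of_nonneg_right ?_ (abs_nonneg _)
    have h1 : |gx s c - hx s c| ≤ δ := by
      rw [abs_sub_comm]; exact hgap2 s c hcmem
    have h2 : |hx s c - hx s (b s)| ≤ θ :=
      hmod s c (b s) hcmem (hbmem s) (by linarith)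
    calc |gx s c - p s| = |(gx s c - hx s c) + (hx s c - hx s (b s))| := by
          rw [hpdef]; ring_nf
      _ ≤ |gx s c - hx s c| + |hx s c - hx s (b s)| := abs_add_le _ _
      _ ≤ δ + θ := add_le_add h1 h2
  -- arithmetic for the fixed point
  have hball : k₀ * (δ + θ * e) / γ₀ ≤ e := by
    rw [div_le_iff₀ hγ₀0]
    have h1 : k₀ * δ ≤ γ₀ * e / 2 := hδe
    have h2 : k₀ * θ * e ≤ (γ₀ / 12) * e := mul_le_mul_of_nonneg_right hk₀θ2 he0.le
    nlinarith
  have hcontr1 : k₀ * (δ + θ) / γ₀ ≤ 1/2 := by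
    rw [div_le_iff₀ hγ₀0]
    have h1 : k₀ * δ ≤ k₀ * θ := mul_le_mul_of_nonneg_left hδθ hk₀0.le
    nlinarith
  -- the fixed point: perturbed bounded solution
  obtain ⟨u, hue, hud⟩ := fixedpoint_global p hpc P hPd k₀ γ₀ hk₀ hγ₀0 dichP F hFc
    e (δ + θ * e) (δ + θ) he0 (by positivity) (by positivity) hFbound hFlip hball hcontr1
  have huc : Continuous u := by
    rw [continuous_iff_continuousAt]; exact fun t => (hud t).continuousAt
  set bg : ℝ → ℝ := fun t => b t + u t with hbgdef
  have hbgc : Continuous bg := hbc.add huc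
  have hbgd : ∀ t, HasDerivAt bg (g t (bg t)) t := by
    intro t
    have hD := (hsol t).add (hud t)
    have heq : h t (b t) + (p t * u t + F t (u t)) = g t (bg t) := by
      simp only [hFdef, hbgdef]
      ring
    rw [heq] at hD
    exact hD
  have hbgsub : ∀ t, |bg t - b t| ≤ e := by
    intro t
    simp only [hbgdef]
    have : b t + u t - b t = u t := by ring
    rw [this]
    exact hue t
  have hbgmem : ∀ t, bg t ∈ Set.Icc (-ρ) ρ := by
    intro t
    refine hmem _ ?_
    calc |bg t| = |b t + u t| := rfl
      _ ≤ |b t| + |u t| := abs_add_le _ _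
      _ ≤ M + e := add_le_add (hM t) (hue t)
      _ ≤ ρ := hMe
  have hbgbd : IsBoundedSol g bg := ⟨hbgd, ⟨M + e, fun t =>
    le_trans (abs_add_le _ _) (add_le_add (hM t) (hue t))⟩⟩
  -- dichotomy along bg
  set q : ℝ → ℝ := fun r => gx r (bg r) with hqdef
  have hqc : Continuous q := hg.2.2.1.comp (continuous_id.prodMk hbgc)
  have hqp : ∀ r, q r ≤ p r + (δ + θ) := by
    intro r
    have h1 : |gx r (bg r) - hx r (bg r)| ≤ δ := by
      rw [abs_sub_comm]; exact hgap2 r _ (hbgmem r)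
    have h2 : |hx r (bg r) - hx r (b r)| ≤ θ := by
      refine hmod r _ _ (hbgmem r) (hbmem r) ?_
      calc |bg r - b r| ≤ e := hbgsub r
        _ < d := by linarith
    have e1 := abs_le.mp h1
    have e2 := abs_le.mp h2
    show gx r (bg r) ≤ hx r (b r) + (δ + θ)
    linarith [e1.2, e2.2]
  have dichq : ∀ s t : ℝ, s ≤ t →
      Real.exp (∫ r in s..t, q r) ≤ k₀ * Real.exp (-γ' * (t - s)) := by
    intro s t hst
    have h1 : ∫ r in s..t, q r ≤ ∫ r in s..t, (p r + (δ + θ)) := by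
      refine intervalIntegral.integral_mono_on hst (hqc.intervalIntegrable _ _)
        ((hpc.add continuous_const).intervalIntegrable _ _) (fun x _ => hqp x)
    have h2 : ∫ r in s..t, (p r + (δ + θ)) = (P t - P s) + (δ + θ) * (t - s) := by
      rw [intervalIntegral.integral_add (hpc.intervalIntegrable _ _)
        (intervalIntegrable_const), hPsub]
      congr 1
      rw [intervalIntegral.integral_const, smul_eq_mul]
      ring
    have h3 : Real.exp (∫ r in s..t, q r) ≤
        Real.exp ((P t - P s) + (δ + θ) * (t - s)) := by
      apply Real.exp_le_exp.2
      rw [← h2]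
      exact h1
    refine h3.trans ?_
    rw [Real.exp_add]
    have h4 : Real.exp (P t - P s) * Real.exp ((δ + θ) * (t - s)) ≤
        (k₀ * Real.exp (-γ₀ * (t - s))) * Real.exp ((δ + θ) * (t - s)) :=
      mul_le_mul_of_nonneg_right (dichP s t hst) (Real.exp_pos _).le
    refine h4.trans ?_
    rw [mul_assoc, ← Real.exp_add]
    refine mul_le_mul_of_nonneg_left (Real.exp_le_exp.2 ?_) hk₀0.le
    have hδθsum : δ + θ ≤ γ₀ - γ' := by
      have h5 : δ ≤ θ := hδθ
      have h6 : θ ≤ (γ₀ - γ)/12 := hθk.trans hk₀θ1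
      rw [hγ'def]
      linarith
    nlinarith [sub_nonneg.mpr hst, hδθsum]
  have hpair : IsHypAttrPair gx bg k₀ γ := by
    refine ⟨hk₀, hγ0, fun s t hst => ?_⟩
    refine (dichq s t hst).trans ?_
    refine mul_le_mul_of_nonneg_left (Real.exp_le_exp.2 ?_) hk₀0.le
    nlinarith [sub_nonneg.mpr hst, hγ'gt]
  refine ⟨bg, hbgbd, hpair, ⟨e, by linarith, fun t => ?_⟩, ?_⟩
  · have : b t - bg t = -(u t) := by simp only [hbgdef]; ring
    rw [this, abs_neg]
    exact hue t
  -- part (ii)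
  intro t₀ x₀ hx₀
  set Q : ℝ → ℝ := fun t => ∫ r in (0:ℝ)..t, q r with hQdef
  have hQd : ∀ t, HasDerivAt Q (q t) t := fun t =>
    intervalIntegral.integral_hasDerivAt_right (hqc.intervalIntegrable _ _)
      (hqc.stronglyMeasurable.stronglyMeasurableAtFilter) hqc.continuousAt
  have hQsub : ∀ s t : ℝ, Q t - Q s = ∫ r in s..t, q r := fun s t =>
    intervalIntegral.integral_interval_sub_left (hqc.intervalIntegrable _ _)
      (hqc.intervalIntegrable _ _)
  have dichQ : ∀ s t : ℝ, s ≤ t → Real.exp (Q t - Q s) ≤ k₀ * Real.exp (-γ' * (t - s)) := by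
    intro s t hst
    rw [hQsub]
    exact dichq s t hst
  set G : ℝ → ℝ → ℝ := fun s y => g s (bg s + y) - g s (bg s) - q s * y with hGdef
  have hGc : Continuous fun z : ℝ × ℝ => G z.1 z.2 := by
    have c1 : Continuous fun z : ℝ × ℝ => g z.1 (bg z.1 + z.2) :=
      hg.1.1.comp (continuous_fst.prodMk ((hbgc.comp continuous_fst).add continuous_snd))
    have c2 : Continuous fun z : ℝ × ℝ => g z.1 (bg z.1) :=
      hg.1.1.comp (continuous_fst.prodMk (hbgc.comp continuous_fst))
    have c3 : Continuous fun z : ℝ × ℝ => q z.1 * z.2 :=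
      (hqc.comp continuous_fst).mul continuous_snd
    exact (c1.sub c2).sub c3
  have hG0 : ∀ s, G s 0 = 0 := by
    intro s
    simp only [hGdef]
    ring_nf
  set r₁ : ℝ := 2 * k₀ * ρε with hr₁def
  set ℓ : ℝ := 2 * δ + θ with hℓdef
  have hr₁0 : 0 < r₁ := by rw [hr₁def]; positivity
  have hℓ0 : 0 < ℓ := by rw [hℓdef]; positivity
  have hr₁eq : r₁ = min d (ρ - M - e) / 2 := by
    rw [hr₁def, hρεdef]
    field_simp
    ring
  have hr₁d : r₁ ≤ d / 2 := by
    rw [hr₁eq]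
    exact div_le_div_of_nonneg_right (min_le_left _ _) (by norm_num)
  have hr₁ρ : M + e + r₁ ≤ ρ := by
    have : r₁ ≤ (ρ - M - e) / 2 := by
      rw [hr₁eq]
      exact div_le_div_of_nonneg_right (min_le_right _ _) (by norm_num)
    have h6 : 0 < ρ - M - e := lt_min_iff.mp hmind0 |>.2
    linarith
  have hGlip : ∀ (s y₁ y₂ : ℝ), |y₁| ≤ r₁ → |y₂| ≤ r₁ →
      |G s y₁ - G s y₂| ≤ ℓ * |y₁ - y₂| := by
    intro s y₁ y₂ hy₁ hy₂
    obtain ⟨c, hc, hceq⟩ := mvt_aux (fun x => g s x) (fun x => gx s x) (hg.2.1 s)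
      (bg s + y₂) (bg s + y₁)
    have hveq : bg s + y₁ - (bg s + y₂) = y₁ - y₂ := by ring
    rw [hveq] at hceq
    have h5 : g s (bg s + y₁) - g s (bg s + y₂) = gx s c * (y₁ - y₂) := hceq
    have hcd : |c - bg s| ≤ r₁ := by
      refine abs_sub_of_mem_uIcc hc ?_ ?_
      · have : bg s + y₂ - bg s = y₂ := by ring
        rw [this]; exact hy₂
      · have : bg s + y₁ - bg s = y₁ := by ring
        rw [this]; exact hy₁
    have hbgM : |bg s| ≤ M + e := le_trans (abs_add_le _ _) (add_le_add (hM s) (hue s))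
    have hcmem : c ∈ Set.Icc (-ρ) ρ := by
      refine hmem _ ?_
      calc |c| = |bg s + (c - bg s)| := by ring_nf
        _ ≤ |bg s| + |c - bg s| := abs_add_le _ _
        _ ≤ (M + e) + r₁ := add_le_add hbgM hcd
        _ ≤ ρ := by linarith [hr₁ρ]
    have hGeq : G s y₁ - G s y₂ = (gx s c - q s) * (y₁ - y₂) := by
      simp only [hGdef, hqdef]
      rw [sub_mul, ← h5]
      ring
    rw [hGeq, abs_mul]
    refine mul_le_mul_of_nonneg_right ?_ (abs_nonneg _)
    have h1 : |gx s c - hx s c| ≤ δ := by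
      rw [abs_sub_comm]; exact hgap2 s c hcmem
    have h2 : |hx s c - hx s (bg s)| ≤ θ := by
      refine hmod s c (bg s) hcmem (hbgmem s) ?_
      calc |c - bg s| ≤ r₁ := hcd
        _ ≤ d/2 := hr₁d
        _ < d := by linarith
    have h3 : |hx s (bg s) - gx s (bg s)| ≤ δ := hgap2 s _ (hbgmem s)
    calc |gx s c - q s| = |(gx s c - hx s c) + (hx s c - hx s (bg s)) +
          (hx s (bg s) - gx s (bg s))| := by
          simp only [hqdef]; ring_nf
      _ ≤ |(gx s c - hx s c) + (hx s c - hx s (bg s))| + |hx s (bg s) - gx s (bg s)| :=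
          abs_add_le _ _
      _ ≤ (|gx s c - hx s c| + |hx s c - hx s (bg s)|) + |hx s (bg s) - gx s (bg s)| :=
          add_le_add_left (abs_add_le _ _) _
      _ ≤ (δ + θ) + δ := add_le_add (add_le_add h1 h2) h3
      _ = ℓ := by rw [hℓdef]; ring
  have hcontr2 : k₀ * ℓ / γ' ≤ 1/2 := by
    rw [div_le_iff₀ hγ'0]
    have h1 : k₀ * δ ≤ k₀ * θ := mul_le_mul_of_nonneg_left hδθ hk₀0.le
    have h2 : k₀ * ℓ ≤ 3 * (k₀ * θ) := by rw [hℓdef]; nlinarith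
    nlinarith [hk₀θ2, hγ'half]
  have hkℓγ : k₀ * ℓ ≤ γ' - γ := by
    have h1 : k₀ * δ ≤ k₀ * θ := mul_le_mul_of_nonneg_left hδθ hk₀0.le
    have h2 : k₀ * ℓ ≤ 3 * (k₀ * θ) := by rw [hℓdef]; nlinarith
    rw [hγ'def]
    nlinarith [hk₀θ1]
  have hη₀c : k₀ * |x₀ - bg t₀| ≤ r₁ / 2 := by
    rw [abs_sub_comm]
    have : r₁ / 2 = k₀ * ρε := by rw [hr₁def]; ring
    rw [this]
    exact mul_le_mul_of_nonneg_left hx₀ hk₀0.le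
  obtain ⟨η, hη0, hηd, hηest⟩ := fixedpoint_halfline q hqc Q hQd k₀ γ' hk₀ hγ'0 t₀ dichQ
    G hGc hG0 r₁ ℓ hr₁0 hℓ0 hGlip hcontr2 (x₀ - bg t₀) hη₀c
  refine ⟨fun t => bg t + η t, by show bg t₀ + η t₀ = x₀; rw [hη0]; ring, ?_, ?_⟩
  · intro t ht
    have hD := (hbgd t).add (hηd t ht)
    have heq : g t (bg t) + (q t * η t + G t (η t)) = g t (bg t + η t) := by
      show g t (bg t) + (gx t (bg t) * η t +
        (g t (bg t + η t) - g t (bg t) - gx t (bg t) * η t)) = g t (bg t + η t)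
      ring
    rw [heq] at hD
    exact hD
  · intro t ht
    have h1 : bg t - (bg t + η t) = -(η t) := by ring
    rw [h1, abs_neg]
    refine (hηest t ht).trans ?_
    have h2 : |x₀ - bg t₀| = |bg t₀ - x₀| := abs_sub_comm _ _
    rw [h2]
    have h3 : Real.exp (-(γ' - k₀ * ℓ) * (t - t₀)) ≤ Real.exp (-γ * (t - t₀)) := by
      refine Real.exp_le_exp.2 (mul_le_mul_of_nonneg_right ?_ (sub_nonneg.mpr ht))
      linarith [hkℓγ]
    calc k₀ * |bg t₀ - x₀| * Real.exp (-(γ' - k₀ * ℓ) * (t - t₀))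
        ≤ k₀ * |bg t₀ - x₀| * Real.exp (-γ * (t - t₀)) := by
          refine mul_le_mul_of_nonneg_left h3 (by positivity)
      _ = k₀ * Real.exp (-γ * (t - t₀)) * |bg t₀ - x₀| := by ring


end Stmt5Aux

open Stmt5Aux in
/-- Persistence of hyperbolic solutions: if `b` is a hyperbolic attractive (resp. repulsive)
solution of `x' = h(t,x)` with dichotomy constant pair `(k₀,γ₀)` and `ρ > sup_t |b(t)|`, then
for every `γ ∈ (0,γ₀)` and `ε > 0` there are `δ > 0` and `ρε > 0` such that every
`C¹`-admissible `g` with `‖h-g‖_{1,ρ} < δ` has a hyperbolic attractive (resp. repulsive)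
solution `bg` with pair `(k₀,γ)`, `‖b-bg‖_∞ < ε`, and whose domain of exponential attraction
(resp. repulsion) contains a `ρε`-neighbourhood. -/
theorem stmt5 (h hx : ℝ → ℝ → ℝ) (hadm : C1Admissible h hx)
    (b : ℝ → ℝ) (hsol : ∀ t : ℝ, HasDerivAt b (h t (b t)) t)
    (k₀ γ₀ ρ : ℝ) (hbd : ∃ M : ℝ, (∀ t : ℝ, |b t| ≤ M) ∧ M < ρ) :
    (IsHypAttrPair hx b k₀ γ₀ →
      ∀ γ : ℝ, 0 < γ → γ < γ₀ → ∀ ε > 0, ∃ δ > 0, ∃ ρε > 0,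
        ∀ g gx : ℝ → ℝ → ℝ, C1Admissible g gx →
          norm1 (fun t x => h t x - g t x) (fun t x => hx t x - gx t x) ρ < δ →
          ∃ bg : ℝ → ℝ, IsBoundedSol g bg ∧ IsHypAttrPair gx bg k₀ γ ∧
            (∃ ε' < ε, ∀ t : ℝ, |b t - bg t| ≤ ε') ∧
            ∀ t₀ x₀ : ℝ, |bg t₀ - x₀| ≤ ρε →
              ∃ ξ : ℝ → ℝ, ξ t₀ = x₀ ∧ IsSolOn g ξ (Set.Ici t₀) ∧
                ∀ t ≥ t₀, |bg t - ξ t| ≤ k₀ * Real.exp (-γ * (t - t₀)) * |bg t₀ - x₀|) ∧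
    (IsHypRepPair hx b k₀ γ₀ →
      ∀ γ : ℝ, 0 < γ → γ < γ₀ → ∀ ε > 0, ∃ δ > 0, ∃ ρε > 0,
        ∀ g gx : ℝ → ℝ → ℝ, C1Admissible g gx →
          norm1 (fun t x => h t x - g t x) (fun t x => hx t x - gx t x) ρ < δ →
          ∃ bg : ℝ → ℝ, IsBoundedSol g bg ∧ IsHypRepPair gx bg k₀ γ ∧
            (∃ ε' < ε, ∀ t : ℝ, |b t - bg t| ≤ ε') ∧
            ∀ t₀ x₀ : ℝ, |bg t₀ - x₀| ≤ ρε →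
              ∃ ξ : ℝ → ℝ, ξ t₀ = x₀ ∧ IsSolOn g ξ (Set.Iic t₀) ∧
                ∀ t ≤ t₀, |bg t - ξ t| ≤ k₀ * Real.exp (γ * (t - t₀)) * |bg t₀ - x₀|) := by
  obtain ⟨M, hM, hMρ⟩ := hbd
  constructor
  · intro hyp γ hγ0 hγγ₀ ε hε
    exact core h hx hadm b hsol k₀ γ₀ ρ M hM hMρ hyp γ hγ0 hγγ₀ ε hε
  · intro hyp γ hγ0 hγγ₀ ε hε
    have hrevadm := c1admissible_rev hadm
    have hrevsol := hasDerivAt_rev hsol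
    have hrevpair := rep_to_attr hyp
    have hrevbd : ∀ t, |(fun t => b (-t)) t| ≤ M := fun t => hM (-t)
    obtain ⟨δ, hδ0, ρε, hρε0, hcore⟩ := core (Rev h) (Rev hx) hrevadm (fun t => b (-t))
      hrevsol k₀ γ₀ ρ M hrevbd hMρ hrevpair γ hγ0 hγγ₀ ε hε
    refine ⟨δ, hδ0, ρε, hρε0, ?_⟩
    intro g gx hg hng
    have hng' : norm1 (fun t x => Rev h t x - Rev g t x)
        (fun t x => Rev hx t x - Rev gx t x) ρ < δ := by
      rw [norm1_rev]; exact hng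
    obtain ⟨bg, hbgbd, hbgpair, ⟨ε', hε', hbgcl⟩, hpart2⟩ := hcore (Rev g) (Rev gx)
      (c1admissible_rev hg) hng'
    refine ⟨fun t => bg (-t), ?_, attr_to_rep hbgpair, ⟨ε', hε', fun t => ?_⟩, ?_⟩
    · obtain ⟨hbgd, C, hC⟩ := hbgbd
      refine ⟨?_, C, fun t => hC (-t)⟩
      intro t
      have hD := hasDerivAt_rev (h := Rev g) hbgd t
      have heq : Rev (Rev g) t (bg (-t)) = g t (bg (-t)) := by simp [Rev]
      rw [heq] at hD
      exact hD
    · have := hbgcl (-t)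
      simpa using this
    · intro t₀ x₀ hx₀
      have hx₀' : |bg (-t₀) - x₀| ≤ ρε := hx₀
      obtain ⟨ξ, hξ0, hξsol, hξest⟩ := hpart2 (-t₀) x₀ hx₀'
      refine ⟨fun t => ξ (-t), by show ξ (-t₀) = x₀; exact hξ0, ?_, ?_⟩
      · intro t ht
        have h1 : -t ∈ Set.Ici (-t₀) := by
          rw [Set.mem_Ici]
          exact neg_le_neg ht
        have h2 := hξsol (-t) h1
        have hneg : HasDerivAt (fun s : ℝ => -s) (-1) t := (hasDerivAt_id t).neg
        have h3 := h2.comp t hneg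
        have heq : Rev g (-t) (ξ (-t)) * (-1) = g t (ξ (-t)) := by
          simp [Rev]
        rw [heq] at h3
        exact h3
      · intro t ht
        show |bg (-t) - ξ (-t)| ≤ k₀ * Real.exp (γ * (t - t₀)) * |bg (-t₀) - x₀|
        have h1 : (-t₀) ≤ -t := neg_le_neg ht
        have h2 := hξest (-t) h1
        have heq : -γ * (-t - -t₀) = γ * (t - t₀) := by ring
        rw [heq] at h2
        exact h2
end Stmt5Aux
end

section
/- Let h be C¹-admissible and let b̃ be a hyperbolic attractive (resp. hyperbolic repulsive) solution of x'=h(t,x). Then for every t₀∈ℝ and every solution x̄ of x'=h(t,x) defined on (−∞,t₀] (resp. on [t₀,∞)) with x̄(t₀)≠b̃(t₀), one has inf_{t≤t₀}|b̃(t)−x̄(t)|>0 (resp. inf_{t≥t₀}|b̃(t)−x̄(t)|>0). -/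
open Set Filter Topology MeasureTheory

lemma gronwall_aux {V V' c : ℝ → ℝ} {s T : ℝ} (hsT : s ≤ T)
    (hc : Continuous c)
    (hV : ∀ t ∈ Set.Icc s T, HasDerivAt V (V' t) t)
    (hle : ∀ t ∈ Set.Icc s T, V' t ≤ c t * V t) :
    ∀ t ∈ Set.Icc s T, V t ≤ V s * Real.exp (∫ r in s..t, c r) := by
  have hId : ∀ t : ℝ, HasDerivAt (fun u => ∫ r in s..u, c r) (c t) t := by
    intro t
    exact intervalIntegral.integral_hasDerivAt_right (hc.intervalIntegrable s t)
      ⟨Set.univ, Filter.univ_mem, hc.aestronglyMeasurable.restrict⟩ hc.continuousAt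
  have hWd : ∀ t ∈ Set.Icc s T, HasDerivAt
      (fun u => V u * Real.exp (-(∫ r in s..u, c r)))
      (V' t * Real.exp (-(∫ r in s..t, c r)) +
        V t * (Real.exp (-(∫ r in s..t, c r)) * (-(c t)))) t := by
    intro t ht
    exact (hV t ht).mul ((hId t).neg.exp)
  have hanti : AntitoneOn (fun u => V u * Real.exp (-(∫ r in s..u, c r))) (Set.Icc s T) := by
    apply antitoneOn_of_deriv_nonpos (convex_Icc s T)
    · intro t ht; exact (hWd t ht).continuousAt.continuousWithinAt
    · intro t ht
      rw [interior_Icc] at ht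
      exact (hWd t (Set.Ioo_subset_Icc_self ht)).differentiableAt.differentiableWithinAt
    · intro t ht
      rw [interior_Icc] at ht
      rw [(hWd t (Set.Ioo_subset_Icc_self ht)).deriv]
      have h2 := hle t (Set.Ioo_subset_Icc_self ht)
      have h3 := Real.exp_pos (-(∫ r in s..t, c r))
      nlinarith
  intro t ht
  have h4 := hanti (Set.left_mem_Icc.mpr hsT) ht ht.1
  simp only [intervalIntegral.integral_same, neg_zero, Real.exp_zero, mul_one] at h4
  have h6 : (0:ℝ) < Real.exp (∫ r in s..t, c r) := Real.exp_pos _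
  have h7 : V t * Real.exp (-(∫ r in s..t, c r)) * Real.exp (∫ r in s..t, c r) = V t := by
    rw [mul_assoc, ← Real.exp_add]; simp
  calc V t = V t * Real.exp (-(∫ r in s..t, c r)) * Real.exp (∫ r in s..t, c r) := h7.symm
    _ ≤ V s * Real.exp (∫ r in s..t, c r) := mul_le_mul_of_nonneg_right h4 h6.le

lemma attr_aux (h hx : ℝ → ℝ → ℝ)
    (hderiv : ∀ t x : ℝ, HasDerivAt (fun y => h t y) (hx t x) x)
    (hxcont : Continuous fun p : ℝ × ℝ => hx p.1 p.2)
    (hxUC : ∀ J : Set ℝ, IsCompact J →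
      UniformContinuousOn (fun p : ℝ × ℝ => hx p.1 p.2) (Set.univ ×ˢ J))
    (b : ℝ → ℝ) (hbsol : ∀ t : ℝ, HasDerivAt b (h t (b t)) t)
    (C : ℝ) (hC : ∀ t : ℝ, |b t| ≤ C)
    (k γ : ℝ) (hk : 1 ≤ k) (hγ : 0 < γ)
    (hyp : ∀ s t : ℝ, s ≤ t →
      Real.exp (∫ r in s..t, hx r (b r)) ≤ k * Real.exp (-γ * (t - s)))
    (t₀ : ℝ) (ξ : ℝ → ℝ) (hξ : ∀ t ∈ Set.Iic t₀, HasDerivAt ξ (h t (ξ t)) t)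
    (hne : ξ t₀ ≠ b t₀) :
    ∃ d > 0, ∀ t ≤ t₀, d ≤ |b t - ξ t| := by
  have hkpos : (0:ℝ) < k := lt_of_lt_of_le one_pos hk
  obtain ⟨δ, δpos, hδ⟩ := Metric.uniformContinuousOn_iff.mp
    (hxUC (Set.Icc (-(C+1)) (C+1)) isCompact_Icc) (γ/2) (by positivity)
  set η := min δ 1 with hηdef
  have ηpos : 0 < η := lt_min δpos one_pos
  have ηle1 : η ≤ 1 := min_le_right _ _
  have ηleδ : η ≤ δ := min_le_left _ _
  set z : ℝ → ℝ := fun t => b t - ξ t with hzdef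
  have hz : ∀ t ∈ Set.Iic t₀, HasDerivAt z (h t (b t) - h t (ξ t)) t :=
    fun t ht => (hbsol t).sub (hξ t ht)
  have hzc : ContinuousOn z (Set.Iic t₀) :=
    fun t ht => (hz t ht).continuousAt.continuousWithinAt
  have hbc : Continuous b := continuous_iff_continuousAt.mpr fun t => (hbsol t).continuousAt
  have hf : Continuous fun r : ℝ => hx r (b r) := hxcont.comp (continuous_id.prodMk hbc)
  -- key estimate
  have key : ∀ s T : ℝ, s ≤ T → T ≤ t₀ → (∀ r ∈ Set.Icc s T, |z r| ≤ η) →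
      |z T| ≤ k * |z s| := by
    intro s T hsT hTt₀ hsm
    have hsub : Set.Icc s T ⊆ Set.Iic t₀ := fun r hr => le_trans hr.2 hTt₀
    have hptw : ∀ r ∈ Set.Icc s T,
        (h r (b r) - h r (ξ r)) * z r + z r * (h r (b r) - h r (ξ r))
          ≤ (2 * hx r (b r) + γ) * (z r * z r) := by
      intro r hr
      rcases eq_or_ne (z r) 0 with h0 | h0
      · have hw : ξ r = b r := by
          have : b r - ξ r = 0 := h0
          linarith
        simp [h0, hw]
      · have hzr : ξ r ≠ b r := fun e => h0 (by simp [hzdef, e])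
        obtain ⟨c₀, hc₀mem, hc₀⟩ : ∃ c₀, |c₀ - b r| < |z r| ∧
            hx r c₀ * z r = h r (b r) - h r (ξ r) := by
          rcases lt_or_gt_of_ne hzr with hlt | hgt
          · obtain ⟨c₀, hmem, hs⟩ := exists_hasDerivAt_eq_slope (fun y => h r y)
              (fun y => hx r y) hlt
              (fun y _ => (hderiv r y).continuousAt.continuousWithinAt)
              (fun y hy => hderiv r y)
            have hzpos : (0:ℝ) < z r := sub_pos.mpr hlt
            refine ⟨c₀, ?_, ?_⟩
            · rw [abs_of_pos hzpos, abs_sub_comm, abs_of_pos (sub_pos.mpr hmem.2)]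
              show b r - c₀ < z r
              have h1 := hmem.1
              show b r - c₀ < b r - ξ r
              linarith
            · rw [hs]
              have hd : b r - ξ r ≠ 0 := sub_ne_zero.mpr (Ne.symm hzr)
              show (h r (b r) - h r (ξ r)) / (b r - ξ r) * (b r - ξ r) = _
              field_simp
          · obtain ⟨c₀, hmem, hs⟩ := exists_hasDerivAt_eq_slope (fun y => h r y)
              (fun y => hx r y) hgt
              (fun y _ => (hderiv r y).continuousAt.continuousWithinAt)
              (fun y hy => hderiv r y)
            have hzneg : z r < 0 := sub_neg.mpr hgt
            refine ⟨c₀, ?_, ?_⟩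
            · rw [abs_of_neg hzneg, abs_of_pos (sub_pos.mpr hmem.1)]
              show c₀ - b r < -(b r - ξ r)
              have h2 := hmem.2
              linarith
            · rw [hs]
              have hd : ξ r - b r ≠ 0 := sub_ne_zero.mpr hzr
              show (h r (ξ r) - h r (b r)) / (ξ r - b r) * (b r - ξ r) = _
              field_simp
              ring
        have hzη := hsm r hr
        have hbr := abs_le.mp (hC r)
        have hcb := abs_lt.mp hc₀mem
        have habsz := abs_le.mp hzη
        have hc₀J : c₀ ∈ Set.Icc (-(C+1)) (C+1) := by
          constructor <;> nlinarith [abs_nonneg (z r)]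
        have hbJ : b r ∈ Set.Icc (-(C+1)) (C+1) := by
          constructor <;> linarith
        have hUC := hδ (r, c₀) ⟨Set.mem_univ _, hc₀J⟩ (r, b r) ⟨Set.mem_univ _, hbJ⟩
          (by
            simp only [Prod.dist_eq, Real.dist_eq, sub_self, abs_zero]
            rw [max_eq_right (abs_nonneg _)]
            exact lt_of_lt_of_le hc₀mem (le_trans hzη ηleδ))
        rw [Real.dist_eq] at hUC
        have hle2 : hx r c₀ ≤ hx r (b r) + γ/2 := by
          have := (abs_lt.mp hUC).2
          linarith
        rw [← hc₀]
        nlinarith [mul_self_nonneg (z r)]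
    have hgr := gronwall_aux (V := fun t => z t * z t)
      (V' := fun t => (h t (b t) - h t (ξ t)) * z t + z t * (h t (b t) - h t (ξ t)))
      (c := fun t => 2 * hx t (b t) + γ) hsT
      ((continuous_const.mul hf).add continuous_const)
      (fun t ht => (hz t (hsub ht)).mul (hz t (hsub ht)))
      hptw T ⟨hsT, le_rfl⟩
    have hint : (∫ r in s..T, (2 * hx r (b r) + γ)) =
        2 * (∫ r in s..T, hx r (b r)) + γ * (T - s) := by
      rw [intervalIntegral.integral_add (f := fun r => 2 * hx r (b r)) (g := fun _ => γ) ((continuous_const.mul hf).intervalIntegrable s T)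
        intervalIntegrable_const, intervalIntegral.integral_const_mul,
        intervalIntegral.integral_const, smul_eq_mul]
      ring
    have hE := hyp s T hsT
    have hexp : Real.exp (∫ r in s..T, (2 * hx r (b r) + γ)) ≤ k * k := by
      rw [hint]
      have e1 : Real.exp (2 * (∫ r in s..T, hx r (b r)) + γ * (T - s)) =
          Real.exp (∫ r in s..T, hx r (b r)) * Real.exp (∫ r in s..T, hx r (b r)) *
            Real.exp (γ * (T - s)) := by
        rw [← Real.exp_add, ← Real.exp_add]
        ring_nf
      rw [e1]
      have e3 : (k * Real.exp (-γ*(T-s))) * (k * Real.exp (-γ*(T-s))) * Real.exp (γ*(T-s)) =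
          k * k * Real.exp (-γ*(T-s)) := by
        rw [show (k * Real.exp (-γ*(T-s))) * (k * Real.exp (-γ*(T-s))) * Real.exp (γ*(T-s)) =
          k * k * (Real.exp (-γ*(T-s)) * (Real.exp (-γ*(T-s)) * Real.exp (γ*(T-s)))) from by ring,
          ← Real.exp_add, ← Real.exp_add]
        norm_num
      have e4 : Real.exp (-γ*(T-s)) ≤ 1 := by
        rw [show (1:ℝ) = Real.exp 0 from (Real.exp_zero).symm]
        apply Real.exp_le_exp.mpr
        nlinarith
      have e2 : Real.exp (∫ r in s..T, hx r (b r)) * Real.exp (∫ r in s..T, hx r (b r)) *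
          Real.exp (γ * (T - s)) ≤
          (k * Real.exp (-γ*(T-s))) * (k * Real.exp (-γ*(T-s))) * Real.exp (γ*(T-s)) := by
        have hp := Real.exp_pos (∫ r in s..T, hx r (b r))
        have hq := Real.exp_pos (γ*(T-s))
        exact mul_le_mul_of_nonneg_right (mul_le_mul hE hE hp.le (by positivity)) hq.le
      nlinarith [Real.exp_pos (-γ*(T-s))]
    have hfin : z T * z T ≤ (z s * z s) * (k*k) :=
      le_trans hgr (mul_le_mul_of_nonneg_left hexp (mul_self_nonneg (z s)))
    have hf0 : 0 ≤ k * |z s| := mul_nonneg hkpos.le (abs_nonneg _)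
    have habs1 : |z T| * |z T| = z T * z T := abs_mul_abs_self (z T)
    have habs2 : |z s| * |z s| = z s * z s := abs_mul_abs_self (z s)
    nlinarith [abs_nonneg (z T)]
  -- main argument
  have hzt₀ : 0 < |z t₀| := abs_pos.mpr (sub_ne_zero.mpr fun e => hne e.symm)
  have hdpos : 0 < min η |z t₀| / (2*k) := by positivity
  refine ⟨min η |z t₀| / (2*k), hdpos, ?_⟩
  by_contra hcon
  push_neg at hcon
  obtain ⟨s, hst₀, hs⟩ := hcon
  have hkd : k * |z s| < min η |z t₀| / 2 := by
    have h1 : k * |z s| < k * (min η |z t₀| / (2*k)) :=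
      mul_lt_mul_of_pos_left hs hkpos
    have h2 : k * (min η |z t₀| / (2*k)) = min η |z t₀| / 2 := by
      field_simp
    linarith
  have hminη : min η |z t₀| ≤ η := min_le_left _ _
  have hminz : min η |z t₀| ≤ |z t₀| := min_le_right _ _
  have hsmall : ∀ r ∈ Set.Icc s t₀, |z r| ≤ η := by
    by_contra hcon2
    push_neg at hcon2
    obtain ⟨τ₀, hτ₀mem, hτ₀⟩ := hcon2
    have hKcl : IsClosed (Set.Icc s t₀ ∩ (fun t => |z t|) ⁻¹' Set.Ici η) := by
      apply ContinuousOn.preimage_isClosed_of_isClosed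
        ((hzc.mono Set.Icc_subset_Iic_self).abs) isClosed_Icc isClosed_Ici
    have hKcp : IsCompact (Set.Icc s t₀ ∩ (fun t => |z t|) ⁻¹' Set.Ici η) :=
      isCompact_Icc.of_isClosed_subset hKcl Set.inter_subset_left
    have hKne : (Set.Icc s t₀ ∩ (fun t => |z t|) ⁻¹' Set.Ici η).Nonempty :=
      ⟨τ₀, hτ₀mem, le_of_lt hτ₀⟩
    obtain ⟨τ, hτK, hτle⟩ := hKcp.exists_isLeast hKne
    have hτmem : τ ∈ Set.Icc s t₀ := hτK.1
    have hητ : η ≤ |z τ| := hτK.2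
    have hsτ : s < τ := by
      rcases lt_or_eq_of_le hτmem.1 with h' | h'
      · exact h'
      · exfalso
        rw [← h'] at hητ
        have hd2 : min η |z t₀| / (2*k) ≤ η / 2 := by
          rw [div_le_div_iff₀ (by positivity) (by norm_num : (0:ℝ) < 2)]
          have e5 : min η |z t₀| * 2 ≤ η * 2 :=
            mul_le_mul_of_nonneg_right (min_le_left _ _) (by norm_num)
          have e6 : η * 2 ≤ η * (2 * k) :=
            mul_le_mul_of_nonneg_left (by linarith) ηpos.le
          linarith
        linarith
    have hIco : ∀ r ∈ Set.Ico s τ, |z r| ≤ η := by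
      intro r hr
      by_contra hcon3
      push_neg at hcon3
      have hrK : r ∈ Set.Icc s t₀ ∩ (fun t => |z t|) ⁻¹' Set.Ici η :=
        ⟨⟨hr.1, le_trans (le_of_lt hr.2) hτmem.2⟩, le_of_lt hcon3⟩
      exact absurd (hτle hrK) (not_le.mpr hr.2)
    have hbd : ∀ r ∈ Set.Ico s τ, |z r| ≤ k * |z s| := fun r hr =>
      key s r hr.1 (le_trans (le_of_lt hr.2) hτmem.2)
        (fun u hu => hIco u ⟨hu.1, lt_of_le_of_lt hu.2 hr.2⟩)
    haveI : (𝓝[Set.Ico s τ] τ).NeBot := by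
      apply mem_closure_iff_nhdsWithin_neBot.mp
      rw [closure_Ico (ne_of_lt hsτ)]
      exact Set.right_mem_Icc.mpr (le_of_lt hsτ)
    have hlim : Filter.Tendsto (fun r => |z r|) (𝓝[Set.Ico s τ] τ) (𝓝 |z τ|) :=
      ((hzc τ hτmem.2).mono
        (fun u hu => le_trans (le_of_lt hu.2) hτmem.2 : Set.Ico s τ ⊆ Set.Iic t₀)).abs
    have hτbd : |z τ| ≤ k * |z s| :=
      le_of_tendsto hlim (eventually_nhdsWithin_of_forall hbd)
    linarith
  have hend := key s t₀ hst₀ le_rfl hsmall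
  linarith

/-- Solutions defined on a half-line staying away from a hyperbolic solution:
if `b` is a hyperbolic attractive (resp. repulsive) solution of `x' = h(t,x)`, then any
solution `ξ` defined on `(-∞,t₀]` (resp. `[t₀,∞)`) with `ξ(t₀) ≠ b(t₀)` satisfies
`inf_{t ≤ t₀} |b(t) - ξ(t)| > 0` (resp. `inf_{t ≥ t₀} |b(t) - ξ(t)| > 0`). -/
theorem stmt6 (h hx : ℝ → ℝ → ℝ) (hadm : C1Admissible h hx) (b : ℝ → ℝ) :
    (IsHypAttr h hx b →
      ∀ t₀ : ℝ, ∀ ξ : ℝ → ℝ, IsSolOn h ξ (Set.Iic t₀) → ξ t₀ ≠ b t₀ →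
        ∃ d > 0, ∀ t ≤ t₀, d ≤ |b t - ξ t|) ∧
    (IsHypRep h hx b →
      ∀ t₀ : ℝ, ∀ ξ : ℝ → ℝ, IsSolOn h ξ (Set.Ici t₀) → ξ t₀ ≠ b t₀ →
        ∃ d > 0, ∀ t ≥ t₀, d ≤ |b t - ξ t|) := by
  obtain ⟨hadm_h, hderiv, hxcont, hxJ⟩ := hadm
  have hxUC : ∀ J : Set ℝ, IsCompact J →
      UniformContinuousOn (fun p : ℝ × ℝ => hx p.1 p.2) (Set.univ ×ˢ J) :=
    fun J hJ => (hxJ J hJ).2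
  constructor
  · rintro ⟨⟨hbsol, C, hC⟩, k, γ, hk, hγ, hyp⟩ t₀ ξ hξ hne
    exact attr_aux h hx hderiv hxcont hxUC b hbsol C hC k γ hk hγ hyp t₀ ξ hξ hne
  · rintro ⟨⟨hbsol, C, hC⟩, k, γ, hk, hγ, hyp⟩ t₀ ξ hξ hne
    -- time reversal
    have hderiv' : ∀ t x : ℝ, HasDerivAt (fun y => -h (-t) y) (-hx (-t) x) x :=
      fun t x => (hderiv (-t) x).neg
    have hxcont' : Continuous fun p : ℝ × ℝ => -hx (-p.1) p.2 :=
      (hxcont.comp ((continuous_fst.neg).prodMk continuous_snd)).neg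
    have hxUC' : ∀ J : Set ℝ, IsCompact J →
        UniformContinuousOn (fun p : ℝ × ℝ => -hx (-p.1) p.2) (Set.univ ×ˢ J) := by
      intro J hJ
      rw [Metric.uniformContinuousOn_iff]
      intro ε hε
      obtain ⟨δ, hδpos, hδ⟩ := Metric.uniformContinuousOn_iff.mp (hxUC J hJ) ε hε
      refine ⟨δ, hδpos, ?_⟩
      rintro ⟨t1, x1⟩ ⟨-, hx1⟩ ⟨t2, x2⟩ ⟨-, hx2⟩ hdist
      have h2 := hδ (-t1, x1) ⟨Set.mem_univ _, hx1⟩ (-t2, x2) ⟨Set.mem_univ _, hx2⟩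
        (by simpa [Prod.dist_eq, dist_neg_neg] using hdist)
      simpa [dist_neg_neg] using h2
    have hbsol' : ∀ t : ℝ, HasDerivAt (fun u => b (-u)) (-h (-t) (b (-t))) t := by
      intro t
      have h1 := (hbsol (-t)).comp t (hasDerivAt_neg t)
      simpa [Function.comp_def] using h1
    have hyp' : ∀ s t : ℝ, s ≤ t →
        Real.exp (∫ r in s..t, -hx (-r) (b (-r))) ≤ k * Real.exp (-γ * (t - s)) := by
      intro s t hst
      have hi : (∫ r in s..t, -hx (-r) (b (-r))) = ∫ u in (-s)..(-t), hx u (b u) := by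
        rw [show (fun r => -hx (-r) (b (-r))) = fun r => (fun u => -hx u (b u)) (-r) from rfl,
          intervalIntegral.integral_comp_neg (fun u => -hx u (b u)),
          intervalIntegral.integral_neg, intervalIntegral.integral_symm]
        simp
      rw [hi]
      have h3 := hyp (-s) (-t) (by linarith)
      calc Real.exp (∫ u in (-s)..(-t), hx u (b u)) ≤ k * Real.exp (γ * (-t - -s)) := h3
        _ = k * Real.exp (-γ * (t - s)) := by ring_nf
    have hξ' : ∀ t ∈ Set.Iic (-t₀), HasDerivAt (fun u => ξ (-u)) (-h (-t) (ξ (-t))) t := by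
      intro t ht
      have hmem : -t ∈ Set.Ici t₀ := by
        simp only [Set.mem_Iic] at ht
        simp only [Set.mem_Ici]
        linarith
      have h1 := (hξ (-t) hmem).comp t (hasDerivAt_neg t)
      simpa [Function.comp_def] using h1
    have hne' : (fun u => ξ (-u)) (-t₀) ≠ (fun u => b (-u)) (-t₀) := by
      simpa using hne
    obtain ⟨d, hd, hdle⟩ := attr_aux (fun t x => -h (-t) x) (fun t x => -hx (-t) x)
      hderiv' hxcont' hxUC' (fun u => b (-u)) hbsol' C (fun t => hC (-t))
      k γ hk hγ hyp' (-t₀) (fun u => ξ (-u)) hξ' hne'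
    refine ⟨d, hd, fun t ht => ?_⟩
    have h4 := hdle (-t) (by simpa using neg_le_neg ht)
    simpa using h4
end
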